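/- arXiv:2312.06895 — 7 statements merged into one kernel-verified Lean document; each statement's English description precedes it below -/
import Mathlib

section
/- For every integer t ≥ 2, the minimum number of edges in a graph that is K_t-Ramsey equals binomial(r(K_t), 2), where r(K_t) is the Ramsey number of K_t. Equivalently, r_{K_2}(K_t) = binomial(r(K_t), 2). -/
/-- A graph `G` is `K_t`-Ramsey: every 2-coloring of the edges (formalized as a coloring of
all pairs) contains a monochromatic copy of `K_t`, i.e. a set `S` of `t` vertices, pairwise
adjacent, all of whose edges receive the same color. -/
def IsRamsey {V : Type*} (t : ℕ) (G : SimpleGraph V) : Prop :=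
  ∀ c : Sym2 V → Bool, ∃ (S : Finset V) (b : Bool), S.card = t ∧
    ∀ u ∈ S, ∀ v ∈ S, u ≠ v → G.Adj u v ∧ c s(u, v) = b

/-- The Ramsey number `r(K_t)`: the least `n` such that the complete graph on `n` vertices
is `K_t`-Ramsey. -/
noncomputable def ramseyNumber (t : ℕ) : ℕ :=
  sInf {n : ℕ | IsRamsey t (⊤ : SimpleGraph (Fin n))}

/-- The number of edges of a graph. -/
noncomputable def edgeCount {V : Type*} (G : SimpleGraph V) : ℕ :=
  Nat.card G.edgeSet


lemma ramsey_nat : ∀ s t : ℕ, ∃ n : ℕ, ∀ (c : Sym2 ℕ → Bool) (A : Finset ℕ), n ≤ A.card →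
    ∃ S ⊆ A, (S.card = s ∧ ∀ u ∈ S, ∀ v ∈ S, u ≠ v → c s(u, v) = false) ∨
      (S.card = t ∧ ∀ u ∈ S, ∀ v ∈ S, u ≠ v → c s(u, v) = true) := by
  intro s
  induction s with
  | zero =>
    intro t
    exact ⟨0, fun c A _ => ⟨∅, Finset.empty_subset A, Or.inl ⟨rfl, by simp⟩⟩⟩
  | succ s ihs =>
    intro t
    induction t with
    | zero =>
      exact ⟨0, fun c A _ => ⟨∅, Finset.empty_subset A, Or.inr ⟨rfl, by simp⟩⟩⟩
    | succ t iht =>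
      obtain ⟨n1, h1⟩ := ihs (t + 1)
      obtain ⟨n2, h2⟩ := iht
      refine ⟨n1 + n2 + 1, fun c A hA => ?_⟩
      obtain ⟨v, hv⟩ := Finset.card_pos.mp (show 0 < A.card by omega)
      classical
      set B := A.erase v with hB
      have hBcard : n1 + n2 ≤ B.card := by
        rw [hB, Finset.card_erase_of_mem hv]; omega
      set B0 := B.filter (fun u => c s(u, v) = false) with hB0
      set B1 := B.filter (fun u => ¬ c s(u, v) = false) with hB1
      have hsum : B0.card + B1.card = B.card := Finset.card_filter_add_card_filter_not _
      by_cases hc0 : n1 ≤ B0.card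
      · obtain ⟨S, hSB0, hS⟩ := h1 c B0 hc0
        have hSB : S ⊆ B := hSB0.trans (Finset.filter_subset _ _)
        have hSA : S ⊆ A := hSB.trans (Finset.erase_subset _ _)
        have key : ∀ x ∈ S, c s(v, x) = false := fun x hx => by
          have := (Finset.mem_filter.mp (hSB0 hx)).2
          rwa [Sym2.eq_swap] at this
        rcases hS with ⟨hcard, hmono⟩ | ⟨hcard, hmono⟩
        · have hvS : v ∉ S := fun h => Finset.notMem_erase v A (hSB h)
          refine ⟨insert v S, Finset.insert_subset hv hSA, Or.inl ⟨?_, ?_⟩⟩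
          · rw [Finset.card_insert_of_notMem hvS, hcard]
          · intro u hu w hw huw
            rw [Finset.mem_insert] at hu hw
            cases hu with
            | inl h => cases hw with
              | inl h' => exact absurd (h.trans h'.symm) huw
              | inr h' => rw [h]; exact key w h'
            | inr h => cases hw with
              | inl h' => rw [h', Sym2.eq_swap]; exact key u h
              | inr h' => exact hmono u h w h' huw
        · exact ⟨S, hSA, Or.inr ⟨hcard, hmono⟩⟩
      · have hc1 : n2 ≤ B1.card := by omega
        obtain ⟨S, hSB1, hS⟩ := h2 c B1 hc1
        have hSB : S ⊆ B := hSB1.trans (Finset.filter_subset _ _)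
        have hSA : S ⊆ A := hSB.trans (Finset.erase_subset _ _)
        have key : ∀ x ∈ S, c s(v, x) = true := fun x hx => by
          have := (Finset.mem_filter.mp (hSB1 hx)).2
          simp only [Bool.not_eq_false] at this
          rwa [Sym2.eq_swap] at this
        rcases hS with ⟨hcard, hmono⟩ | ⟨hcard, hmono⟩
        · exact ⟨S, hSA, Or.inl ⟨hcard, hmono⟩⟩
        · have hvS : v ∉ S := fun h => Finset.notMem_erase v A (hSB h)
          refine ⟨insert v S, Finset.insert_subset hv hSA, Or.inr ⟨?_, ?_⟩⟩
          · rw [Finset.card_insert_of_notMem hvS, hcard]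
          · intro u hu w hw huw
            rw [Finset.mem_insert] at hu hw
            cases hu with
            | inl h => cases hw with
              | inl h' => exact absurd (h.trans h'.symm) huw
              | inr h' => rw [h]; exact key w h'
            | inr h => cases hw with
              | inl h' => rw [h', Sym2.eq_swap]; exact key u h
              | inr h' => exact hmono u h w h' huw

lemma ramsey_fin (t : ℕ) : ∃ n : ℕ, IsRamsey t (⊤ : SimpleGraph (Fin n)) := by
  obtain ⟨n0, h0⟩ := ramsey_nat t t
  refine ⟨max n0 1, ?_⟩
  set n := max n0 1 with hn
  have hnpos : 0 < n := Nat.lt_of_lt_of_le Nat.zero_lt_one (le_max_right _ _)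
  set f : ℕ → Fin n := fun m => ⟨m % n, Nat.mod_lt _ hnpos⟩ with hf
  intro c
  obtain ⟨S, hSA, hS⟩ := h0 (fun e => c (Sym2.map f e)) (Finset.range n)
    (by rw [Finset.card_range]; exact le_max_left _ _)
  have hinj : Set.InjOn f ↑S := by
    intro a ha b hb hab
    have ha' : a < n := Finset.mem_range.mp (hSA ha)
    have hb' : b < n := Finset.mem_range.mp (hSA hb)
    have : a % n = b % n := congrArg Fin.val hab
    rwa [Nat.mod_eq_of_lt ha', Nat.mod_eq_of_lt hb'] at this
  have himage : ∀ (b : Bool), (∀ u ∈ S, ∀ v ∈ S, u ≠ v → c (Sym2.map f s(u, v)) = b) →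
      ∃ (T : Finset (Fin n)) (b' : Bool), T.card = S.card ∧
        ∀ u ∈ T, ∀ v ∈ T, u ≠ v → (⊤ : SimpleGraph (Fin n)).Adj u v ∧ c s(u, v) = b' := by
    intro b hmono
    refine ⟨S.image f, b, Finset.card_image_of_injOn hinj, ?_⟩
    intro u hu v hv huv
    obtain ⟨a, ha, rfl⟩ := Finset.mem_image.mp hu
    obtain ⟨a', ha', rfl⟩ := Finset.mem_image.mp hv
    have hne : a ≠ a' := fun h => huv (by rw [h])
    refine ⟨by simpa using huv, ?_⟩
    have := hmono a ha a' ha' hne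
    rwa [Sym2.map_pair_eq] at this
  rcases hS with ⟨hcard, hmono⟩ | ⟨hcard, hmono⟩
  · obtain ⟨T, b', h1, h2⟩ := himage false hmono
    exact ⟨T, b', by rw [h1, hcard], h2⟩
  · obtain ⟨T, b', h1, h2⟩ := himage true hmono
    exact ⟨T, b', by rw [h1, hcard], h2⟩

-- lower bound piece
lemma lower_bound (t n : ℕ) (G : SimpleGraph (Fin n)) (hG : IsRamsey t G) :
    (ramseyNumber t).choose 2 ≤ edgeCount G := by
  classical
  set R := ramseyNumber t with hRdef
  set K := {k : ℕ | ∃ C : Fin n → Fin k, ∀ u v, G.Adj u v → C u ≠ C v} with hKdef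
  have hnK : n ∈ K := ⟨id, fun u v h => h.ne⟩
  set k := sInf K with hkdef
  obtain ⟨C, hC⟩ : k ∈ K := Nat.sInf_mem ⟨n, hnK⟩
  -- chromatic number at least R
  have hRk : R ≤ k := by
    by_contra h
    push_neg at h
    have hnot : ¬ IsRamsey t (⊤ : SimpleGraph (Fin k)) := Nat.notMem_of_lt_sInf h
    apply hnot
    intro c₀
    obtain ⟨S, b, hcard, hmono⟩ := hG (fun e => c₀ (Sym2.map C e))
    have hinj : Set.InjOn C ↑S := by
      intro a ha a' ha' hCa
      by_contra hne
      exact hC a a' (hmono a ha a' ha' hne).1 hCa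
    refine ⟨S.image C, b, by rw [Finset.card_image_of_injOn hinj, hcard], ?_⟩
    intro u hu v hv huv
    obtain ⟨a, ha, rfl⟩ := Finset.mem_image.mp hu
    obtain ⟨a', ha', rfl⟩ := Finset.mem_image.mp hv
    have hne : a ≠ a' := fun hh => huv (by rw [hh])
    obtain ⟨hadj, hcc⟩ := hmono a ha a' ha' hne
    rw [Sym2.map_pair_eq] at hcc
    exact ⟨by simpa using huv, hcc⟩
  -- every pair of colors is joined by an edge
  have hpair : ∀ i j : Fin k, i ≠ j → ∃ u v, G.Adj u v ∧ C u = i ∧ C v = j := by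
    intro i j hij
    by_contra h
    push_neg at h
    have hk1 : 0 < k := i.pos
    have hcardsub : Fintype.card {x : Fin k // x ≠ j} = k - 1 := by
      have h1 := Fintype.card_subtype_compl (fun x : Fin k => x = j)
      simp only [Fintype.card_subtype_eq, Fintype.card_fin] at h1
      convert h1 using 2
    let e := Fintype.equivFinOfCardEq hcardsub
    have hval : ∀ v : Fin n, (if C v = j then i else C v) ≠ j := by
      intro v; split_ifs with h'
      exacts [hij, h']
    have hmem : (k - 1) ∈ K := by
      refine ⟨fun v => e ⟨if C v = j then i else C v, hval v⟩, ?_⟩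
      intro u v hadj heq
      have hvals : (if C u = j then i else C u) = (if C v = j then i else C v) :=
        congrArg Subtype.val (e.injective heq)
      by_cases h1 : C u = j <;> by_cases h2 : C v = j
      · exact hC u v hadj (h1.trans h2.symm)
      · rw [if_pos h1, if_neg h2] at hvals
        exact h v u hadj.symm hvals.symm h1
      · rw [if_neg h1, if_pos h2] at hvals
        exact h u v hadj hvals h2
      · rw [if_neg h1, if_neg h2] at hvals
        exact hC u v hadj hvals
    have := Nat.sInf_le hmem
    omega
  -- counting
  have hEC : edgeCount G = G.edgeFinset.card := by
    rw [edgeCount, Nat.card_eq_fintype_card, SimpleGraph.edgeFinset_card]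
  have hsurj : Set.SurjOn (fun p : Fin n × Fin n => (C p.1, C p.2))
      ↑(Finset.univ.filter fun p : Fin n × Fin n => G.Adj p.1 p.2)
      ↑(Finset.univ.offDiag : Finset (Fin k × Fin k)) := by
    intro q hq
    have hne : q.1 ≠ q.2 := by
      simp only [Finset.coe_offDiag, Set.mem_setOf_eq] at hq
      exact hq.2.2
    obtain ⟨u, v, hadj, hu, hv⟩ := hpair q.1 q.2 hne
    refine ⟨(u, v), by simp [hadj], ?_⟩
    simp [hu, hv]
  have hcard := Finset.card_le_card_of_surjOn _ hsurj
  rw [Finset.offDiag_card, Finset.card_univ, Fintype.card_fin] at hcard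
  have h2m : 2 * G.edgeFinset.card
      = (Finset.univ.filter fun p : Fin n × Fin n => G.Adj p.1 p.2).card := by
    rw [SimpleGraph.two_mul_card_edgeFinset]
  rw [← h2m] at hcard
  have hkk : k * (k - 1) ≤ 2 * edgeCount G := by
    rw [hEC, mul_comm k (k - 1), Nat.sub_one_mul]
    convert hcard using 2
  have hfin : k.choose 2 ≤ edgeCount G := by
    rw [Nat.choose_two_right]
    calc k * (k - 1) / 2 ≤ 2 * edgeCount G / 2 := Nat.div_le_div_right hkk
    _ = edgeCount G := Nat.mul_div_cancel_left _ (by norm_num)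
  exact le_trans (Nat.choose_le_choose 2 hRk) hfin


/-- Chvátal: the minimum number of edges of a `K_t`-Ramsey graph is `(r(K_t)).choose 2`,
i.e. `r_{K_2}(K_t) = binomial(r(K_t), 2)`. -/
theorem sizeRamsey_clique (t : ℕ) (ht : 2 ≤ t) :
    sInf {m : ℕ | ∃ (n : ℕ) (G : SimpleGraph (Fin n)), IsRamsey t G ∧ edgeCount G = m}
      = (ramseyNumber t).choose 2 := by
  classical
  have hne : {n : ℕ | IsRamsey t (⊤ : SimpleGraph (Fin n))}.Nonempty := ramsey_fin t
  have hRtop : IsRamsey t (⊤ : SimpleGraph (Fin (ramseyNumber t))) := Nat.sInf_mem hne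
  have htopcount : edgeCount (⊤ : SimpleGraph (Fin (ramseyNumber t)))
      = (ramseyNumber t).choose 2 := by
    rw [edgeCount, Nat.card_eq_fintype_card, ← SimpleGraph.edgeFinset_card,
      SimpleGraph.card_edgeFinset_top_eq_card_choose_two, Fintype.card_fin]
  have hmem : (ramseyNumber t).choose 2
      ∈ {m : ℕ | ∃ (n : ℕ) (G : SimpleGraph (Fin n)), IsRamsey t G ∧ edgeCount G = m} :=
    ⟨_, ⊤, hRtop, htopcount⟩
  apply le_antisymm (Nat.sInf_le hmem)
  rcases Nat.sInf_mem (⟨_, hmem⟩ : Set.Nonempty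
      {m : ℕ | ∃ (n : ℕ) (G : SimpleGraph (Fin n)), IsRamsey t G ∧ edgeCount G = m}) with
    ⟨n, G, hG, hE⟩
  rw [← hE]
  exact lower_bound t n G hG
end

section
/- Let t ≥ 3 and let G be a K_t-Ramsey critical graph. Then every edge f of G is the intersection of two copies of K_t in G: there exist two t-vertex cliques Q_1 and Q_2 of G, both containing the two endpoints of f, such that the vertex sets of Q_1 and Q_2 intersect exactly in the two endpoints of f. -/
/-- `G` is `K_t`-Ramsey critical: `G` is `K_t`-Ramsey but no proper subgraph of `G` is. -/
def IsRamseyCritical {V : Type*} (t : ℕ) (G : SimpleGraph V) : Prop :=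
  IsRamsey t G ∧ ∀ G' : SimpleGraph V, G' < G → ¬ IsRamsey t G'

/-- If `G` is `K_t`-Ramsey critical (`t ≥ 3`), then every edge `{u,v}` of `G` is the
intersection of two copies of `K_t` in `G`: there are `t`-cliques `Q₁, Q₂`, both containing
`u` and `v`, with `Q₁ ∩ Q₂ = {u, v}`. -/
theorem edge_is_intersection_of_two_cliques {V : Type*} [DecidableEq V] (t : ℕ) (ht : 3 ≤ t)
    (G : SimpleGraph V) (hG : IsRamseyCritical t G) (u v : V) (huv : G.Adj u v) :
    ∃ Q₁ Q₂ : Finset V, G.IsNClique t Q₁ ∧ G.IsNClique t Q₂ ∧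
      u ∈ Q₁ ∧ v ∈ Q₁ ∧ u ∈ Q₂ ∧ v ∈ Q₂ ∧ Q₁ ∩ Q₂ = {u, v} := by
  classical
  set G' : SimpleGraph V := G.deleteEdges {s(u, v)} with hG'def
  have hlt : G' < G := by
    refine lt_of_le_of_ne (SimpleGraph.deleteEdges_le _) ?_
    intro h
    have : G'.Adj u v := h ▸ huv
    rw [SimpleGraph.deleteEdges_adj] at this
    exact this.2 (Set.mem_singleton _)
  obtain ⟨c, hc⟩ := not_forall.mp (hG.2 G' hlt)
  push_neg at hc
  -- key: a monochromatic clique under a coloring agreeing with c off s(u,v) must contain u and v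
  have key : ∀ (c' : Sym2 V → Bool), (∀ e, e ≠ s(u, v) → c' e = c e) →
      ∀ (S : Finset V) (b : Bool), S.card = t →
      (∀ x ∈ S, ∀ y ∈ S, x ≠ y → G.Adj x y ∧ c' s(x, y) = b) →
      u ∈ S ∧ v ∈ S := by
    intro c' hc' S b hcard hS
    by_contra h
    obtain ⟨x, hx, y, hy, hxy, hbad⟩ := hc S b hcard
    have hne : s(x, y) ≠ s(u, v) := by
      intro he
      rw [Sym2.eq_iff] at he
      rcases he with ⟨rfl, rfl⟩ | ⟨rfl, rfl⟩
      · exact h ⟨hx, hy⟩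
      · exact h ⟨hy, hx⟩
    obtain ⟨hadj, hcol⟩ := hS x hx y hy hxy
    apply hbad
    · rw [hG'def, SimpleGraph.deleteEdges_adj]
      exact ⟨hadj, by simpa using hne⟩
    · rw [← hc' _ hne]; exact hcol
  -- coloring with uv true
  set c₁ : Sym2 V → Bool := fun e => if e = s(u, v) then true else c e with hc₁def
  set c₂ : Sym2 V → Bool := fun e => if e = s(u, v) then false else c e with hc₂def
  obtain ⟨S₁, b₁, hcard₁, hS₁⟩ := hG.1 c₁
  obtain ⟨S₂, b₂, hcard₂, hS₂⟩ := hG.1 c₂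
  have hc₁' : ∀ e, e ≠ s(u, v) → c₁ e = c e := fun e he => by simp [hc₁def, he]
  have hc₂' : ∀ e, e ≠ s(u, v) → c₂ e = c e := fun e he => by simp [hc₂def, he]
  obtain ⟨hu₁, hv₁⟩ := key c₁ hc₁' S₁ b₁ hcard₁ hS₁
  obtain ⟨hu₂, hv₂⟩ := key c₂ hc₂' S₂ b₂ hcard₂ hS₂
  have hne : u ≠ v := G.ne_of_adj huv
  have hb₁ : b₁ = true := by
    have := (hS₁ u hu₁ v hv₁ hne).2
    simpa [hc₁def] using this.symm
  have hb₂ : b₂ = false := by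
    have := (hS₂ u hu₂ v hv₂ hne).2
    simpa [hc₂def] using this.symm
  refine ⟨S₁, S₂, ?_, ?_, hu₁, hv₁, hu₂, hv₂, ?_⟩
  · exact ⟨fun x hx y hy hxy => (hS₁ x hx y hy hxy).1, hcard₁⟩
  · exact ⟨fun x hx y hy hxy => (hS₂ x hx y hy hxy).1, hcard₂⟩
  · apply Finset.Subset.antisymm
    · intro w hw
      rw [Finset.mem_inter] at hw
      rw [Finset.mem_insert, Finset.mem_singleton]
      by_contra h
      push_neg at h
      obtain ⟨hwu, hwv⟩ := h
      have hne1 : s(u, w) ≠ s(u, v) := by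
        intro he
        rw [Sym2.eq_iff] at he
        rcases he with ⟨_, h'⟩ | ⟨h', h''⟩
        · exact hwv h'
        · exact hne h'
      have h1 : c₁ s(u, w) = b₁ := (hS₁ u hu₁ w hw.1 (Ne.symm hwu)).2
      have h2 : c₂ s(u, w) = b₂ := (hS₂ u hu₂ w hw.2 (Ne.symm hwu)).2
      rw [hc₁' _ hne1, hb₁] at h1
      rw [hc₂' _ hne1, hb₂] at h2
      rw [h1] at h2
      simp at h2
    · intro w hw
      rw [Finset.mem_insert, Finset.mem_singleton] at hw
      rcases hw with rfl | rfl
      · exact Finset.mem_inter.mpr ⟨hu₁, hu₂⟩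
      · exact Finset.mem_inter.mpr ⟨hv₁, hv₂⟩
end

section
/- Every r-critical graph on at most 2r - 2 vertices can be written as the join of two smaller critical graphs: there exist integers a, b ≥ 1 with a + b = r, an a-critical graph A and a b-critical graph B, such that G is isomorphic to the join of A and B (the graph obtained from the disjoint union of A and B by adding all edges between V(A) and V(B)). -/
/-- `G` is `r`-critical: `G` has chromatic number at least `r`, but no proper induced
subgraph of `G` has chromatic number at least `r`. -/
def IsCritical {V : Type*} (r : ℕ) (G : SimpleGraph V) : Prop :=
  (r : ℕ∞) ≤ G.chromaticNumber ∧
    ∀ S : Set V, S ≠ Set.univ → (G.induce S).chromaticNumber < (r : ℕ∞)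

/-- The join of two graphs: their disjoint union together with all edges between the two
vertex sets. -/
def graphJoin {α β : Type*} (A : SimpleGraph α) (B : SimpleGraph β) :
    SimpleGraph (α ⊕ β) where
  Adj x y := match x, y with
    | Sum.inl a, Sum.inl a' => A.Adj a a'
    | Sum.inr b, Sum.inr b' => B.Adj b b'
    | Sum.inl _, Sum.inr _ => True
    | Sum.inr _, Sum.inl _ => True
  symm := by
    constructor
    rintro (a | b) (a' | b') h
    · exact h.symm
    · trivial
    · trivial
    · exact h.symm
  loopless := by
    constructor
    rintro (a | b) h
    · exact A.irrefl h
    · exact B.irrefl h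


open SimpleGraph Set

noncomputable section
open Classical

variable {V : Type} [Fintype V] (G : SimpleGraph V)

/-- ℕ-valued chromatic number of the subgraph induced on `S`. -/
def cnn (S : Set V) : ℕ := (G.induce S).chromaticNumber.toNat

variable {G}

lemma cnn_colorable (S : Set V) : (G.induce S).Colorable (cnn G S) :=
  colorable_chromaticNumber_of_fintype (G.induce S)

lemma cnn_le_of_colorable {S : Set V} {m : ℕ} (h : (G.induce S).Colorable m) : cnn G S ≤ m :=
  ENat.toNat_le_of_le_coe h.chromaticNumber_le

lemma cnn_cast (S : Set V) : ((cnn G S : ℕ∞)) = (G.induce S).chromaticNumber := by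
  have h := (cnn_colorable (G := G) S).chromaticNumber_le
  have hfin : (G.induce S).chromaticNumber ≠ ⊤ := fun hc => by simp [hc] at h
  simp [cnn, ENat.coe_toNat hfin]

lemma colorable_of_cnn_le {S : Set V} {m : ℕ} (h : cnn G S ≤ m) : (G.induce S).Colorable m :=
  (cnn_colorable S).mono h

/-- Monotonicity of `cnn` under inclusion. -/
lemma cnn_mono {S T : Set V} (h : S ⊆ T) : cnn G S ≤ cnn G T := by
  refine cnn_le_of_colorable (Colorable.of_hom (RelEmbedding.toRelHom ?_) (cnn_colorable T))
  exact ⟨⟨fun x => ⟨x.1, h x.2⟩, fun a b hab => Subtype.ext (by simpa using hab)⟩,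
    by intro a b; exact Iff.rfl⟩

lemma cnn_le_ncard (S : Set V) : cnn G S ≤ S.ncard := by
  refine cnn_le_of_colorable ?_
  have : (G.induce S).Colorable (Fintype.card S) := colorable_of_fintype _
  rwa [Set.ncard_eq_toFinset_card', Set.toFinset_card]

lemma cnn_empty : cnn G (∅ : Set V) = 0 := by
  refine Nat.le_zero.1 (cnn_le_of_colorable ?_)
  exact Colorable.of_isEmpty (G := G.induce (∅ : Set V)) 0

lemma one_le_cnn {S : Set V} (h : S.Nonempty) : 1 ≤ cnn G S := by
  have : Nonempty S := h.to_subtype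
  have hpos := chromaticNumber_pos (G := G.induce S) (n := Fintype.card S) (colorable_of_fintype _)
  by_contra hc
  push_neg at hc
  interval_cases h : cnn G S
  · rw [← cnn_cast S] at hpos; simp [h] at hpos

set_option linter.unusedSectionVars false

section Crit
variable {V : Type} [Fintype V] {G : SimpleGraph V}

/-- Extending a coloring of `T \ I` by one new color on an independent set `I`. -/
lemma cnn_le_diff_add_one {T I : Set V} (hind : ∀ x ∈ I, ∀ y ∈ I, ¬ G.Adj x y) :
    cnn G T ≤ cnn G (T \ I) + 1 := by
  set m := cnn G (T \ I) with hm
  obtain ⟨φ⟩ := colorable_of_cnn_le (le_refl m)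
  refine cnn_le_of_colorable ?_
  have hcol : (G.induce T).Coloring (Option (Fin m)) := by
    refine Coloring.mk (fun v => if hv : v.1 ∈ I then none else some (φ ⟨v.1, ⟨v.2, hv⟩⟩)) ?_
    · rintro ⟨x, hx⟩ ⟨y, hy⟩ hadj
      have hxy : G.Adj x y := hadj
      by_cases hxI : x ∈ I <;> by_cases hyI : y ∈ I
      · exact absurd hxy (hind x hxI y hyI)
      · simp [hxI, hyI]
      · simp [hxI, hyI]
      · simp only [hxI, hyI, dif_neg, not_false_iff]
        exact fun hc => φ.valid (show (G.induce (T \ I)).Adj ⟨x, ⟨hx, hxI⟩⟩ ⟨y, ⟨hy, hyI⟩⟩ from hxy) (Option.some_injective _ hc)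
  have := hcol.colorable
  simpa using this

/-- `W` is a `c`-critical set of vertices for the ambient graph `G`. -/
def CritOn (G : SimpleGraph V) (W : Set V) (c : ℕ) : Prop :=
  c ≤ cnn G W ∧ ∀ S : Set V, S ⊆ W → S ≠ W → cnn G S < c

lemma CritOn.nonempty {W : Set V} {c : ℕ} (h : CritOn G W c) (hc : 1 ≤ c) : W.Nonempty := by
  rcases Set.eq_empty_or_nonempty W with rfl | hne
  · have := h.1
    rw [cnn_empty] at this
    omega
  · exact hne

lemma CritOn.cnn_eq {W : Set V} {c : ℕ} (h : CritOn G W c) (hc : 1 ≤ c) : cnn G W = c := by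
  obtain ⟨x, hx⟩ := h.nonempty hc
  have h1 : cnn G W ≤ cnn G (W \ {x}) + 1 := by
    refine cnn_le_diff_add_one ?_
    rintro a ha b hb
    rw [Set.mem_singleton_iff] at ha hb
    subst ha; subst hb; simp
  have h2 : cnn G (W \ {x}) < c := by
    refine h.2 _ Set.diff_subset ?_
    intro hEq
    have : x ∈ W \ {x} := by rw [hEq]; exact hx
    simp at this
  have := h.1
  omega

/-- Every induced subgraph with chromatic number at least `m` contains an `m`-critical set. -/
lemma exists_critOn : ∀ (n : ℕ) (T : Set V), T.ncard ≤ n → ∀ m : ℕ, m ≤ cnn G T →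
    ∃ W, W ⊆ T ∧ CritOn G W m := by
  intro n
  induction n with
  | zero =>
    intro T hT m hm
    refine ⟨T, le_refl _, hm, ?_⟩
    intro S hS hne
    exfalso
    have : T = ∅ := by
      have : T.ncard = 0 := by omega
      exact (Set.ncard_eq_zero (Set.toFinite T)).1 this
    subst this
    exact hne (Set.subset_empty_iff.1 hS)
  | succ n ih =>
    intro T hT m hm
    by_cases hEx : ∃ S : Set V, S ⊆ T ∧ S ≠ T ∧ m ≤ cnn G S
    · obtain ⟨S, hS, hne, hmS⟩ := hEx
      have hlt : S.ncard < T.ncard := by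
        refine Set.ncard_lt_ncard ?_ (Set.toFinite T)
        exact hS.ssubset_of_ne hne
      obtain ⟨W, hW, hcrit⟩ := ih S (by omega) m hmS
      exact ⟨W, hW.trans hS, hcrit⟩
    · push_neg at hEx
      refine ⟨T, le_refl _, hm, ?_⟩
      intro S hS hne
      have := hEx S hS hne
      omega

end Crit

section Join
variable {V : Type} [Fintype V] {G : SimpleGraph V}

/-- The set of colors used on `S ⊆ T` by a coloring of the graph induced on `T`. -/
def pal {T : Set V} (S : Set V) (hST : S ⊆ T) {m : ℕ} (φ : (G.induce T).Coloring (Fin m)) :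
    Finset (Fin m) :=
  Set.Finite.toFinset (Set.toFinite {c | ∃ x, ∃ hx : x ∈ S, φ ⟨x, hST hx⟩ = c})

lemma mem_pal {T S : Set V} (hST : S ⊆ T) {m : ℕ} {φ : (G.induce T).Coloring (Fin m)}
    {c : Fin m} : c ∈ pal S hST φ ↔ ∃ x, ∃ hx : x ∈ S, φ ⟨x, hST hx⟩ = c := by
  simp [pal]

lemma cnn_le_pal_card {T S : Set V} (hST : S ⊆ T) {m : ℕ}
    (φ : (G.induce T).Coloring (Fin m)) : cnn G S ≤ (pal S hST φ).card := by
  refine cnn_le_of_colorable ?_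
  have hcol : (G.induce S).Coloring (↥(pal S hST φ)) := by
    refine Coloring.mk
      (fun v => ⟨φ ⟨v.1, hST v.2⟩, (mem_pal hST).2 ⟨v.1, v.2, rfl⟩⟩) ?_
    rintro ⟨x, hx⟩ ⟨y, hy⟩ hadj hc
    have hxy : G.Adj x y := hadj
    exact φ.valid (show (G.induce T).Adj ⟨x, hST hx⟩ ⟨y, hST hy⟩ from hxy)
      (by simpa using hc)
  simpa [Fintype.card_coe] using hcol.colorable

lemma pal_disjoint {T S1 S2 : Set V} (h1 : S1 ⊆ T) (h2 : S2 ⊆ T) {m : ℕ}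
    (φ : (G.induce T).Coloring (Fin m))
    (hJ : ∀ x ∈ S1, ∀ y ∈ S2, G.Adj x y) : Disjoint (pal S1 h1 φ) (pal S2 h2 φ) := by
  rw [Finset.disjoint_left]
  intro c hc1 hc2
  obtain ⟨x, hx, hcx⟩ := (mem_pal h1).1 hc1
  obtain ⟨y, hy, hcy⟩ := (mem_pal h2).1 hc2
  exact φ.valid (show (G.induce T).Adj ⟨x, h1 hx⟩ ⟨y, h2 hy⟩ from hJ x hx y hy)
    (by rw [hcx, hcy])

/-- Coloring a union with separate palettes. -/
lemma cnn_union_le (S T : Set V) : cnn G (S ∪ T) ≤ cnn G S + cnn G T := by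
  obtain ⟨φS⟩ := colorable_of_cnn_le (le_refl (cnn G S))
  obtain ⟨φT⟩ := colorable_of_cnn_le (le_refl (cnn G T))
  refine cnn_le_of_colorable ?_
  have hcol : (G.induce (S ∪ T)).Coloring (Fin (cnn G S) ⊕ Fin (cnn G T)) := by
    refine Coloring.mk (fun v => if hv : v.1 ∈ S then Sum.inl (φS ⟨v.1, hv⟩)
      else Sum.inr (φT ⟨v.1, v.2.resolve_left hv⟩)) ?_
    rintro ⟨x, hx⟩ ⟨y, hy⟩ hadj
    have hxy : G.Adj x y := hadj
    by_cases hxS : x ∈ S <;> by_cases hyS : y ∈ S <;> simp only [hxS, hyS, dif_pos, dif_neg,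
      not_false_iff, Sum.inl.injEq, Sum.inr.injEq, ne_eq, reduceCtorEq]
    · exact fun hc => φS.valid (show (G.induce S).Adj ⟨x, hxS⟩ ⟨y, hyS⟩ from hxy) hc
    · exact fun hc => φT.valid
        (show (G.induce T).Adj ⟨x, hx.resolve_left hxS⟩ ⟨y, hy.resolve_left hyS⟩ from hxy) hc
  simpa using hcol.colorable

/-- Superadditivity of the chromatic number over a join. -/
lemma add_cnn_le_of_join {S T : Set V} (hJ : ∀ x ∈ S, ∀ y ∈ T, G.Adj x y) :
    cnn G S + cnn G T ≤ cnn G (S ∪ T) := by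
  obtain ⟨φ⟩ := colorable_of_cnn_le (le_refl (cnn G (S ∪ T)))
  have h1 : S ⊆ S ∪ T := Set.subset_union_left
  have h2 : T ⊆ S ∪ T := Set.subset_union_right
  have hd := pal_disjoint h1 h2 φ hJ
  have hS := cnn_le_pal_card h1 φ
  have hT := cnn_le_pal_card h2 φ
  have hcard : (pal S h1 φ).card + (pal T h2 φ).card ≤ cnn G (S ∪ T) := by
    rw [← Finset.card_union_of_disjoint hd]
    simpa using Finset.card_le_univ (pal S h1 φ ∪ pal T h2 φ)
  omega

/-- Criticality transfers to the parts of a join decomposition. -/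
lemma CritOn.split {W W1 W2 : Set V} {c : ℕ} (h : CritOn G W c) (hc : 1 ≤ c)
    (hU : W1 ∪ W2 = W) (hdisj : Disjoint W1 W2) (h1 : W1.Nonempty) (h2 : W2.Nonempty)
    (hJ : ∀ x ∈ W1, ∀ y ∈ W2, G.Adj x y) :
    CritOn G W1 (cnn G W1) ∧ CritOn G W2 (cnn G W2) ∧ cnn G W1 + cnn G W2 = c ∧
      1 ≤ cnn G W1 ∧ 1 ≤ cnn G W2 := by
  have hsum : cnn G W1 + cnn G W2 = c := by
    have hge := add_cnn_le_of_join hJ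
    have hle := cnn_union_le (G := G) W1 W2
    rw [hU] at hge hle
    have := h.cnn_eq hc
    omega
  have ha1 : 1 ≤ cnn G W1 := one_le_cnn h1
  have hb1 : 1 ≤ cnn G W2 := one_le_cnn h2
  refine ⟨⟨le_refl _, ?_⟩, ⟨le_refl _, ?_⟩, hsum, ha1, hb1⟩
  · intro S hS hne
    obtain ⟨x, hxW1, hxS⟩ : ∃ x, x ∈ W1 ∧ x ∉ S := by
      by_contra hcon
      push_neg at hcon
      exact hne (Set.Subset.antisymm hS hcon)
    have hsub : S ∪ W2 ⊆ W := by
      rw [← hU]; exact Set.union_subset_union_left _ hS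
    have hneW : S ∪ W2 ≠ W := by
      intro hEq
      have hxW : x ∈ W := by rw [← hU]; exact Or.inl hxW1
      rw [← hEq] at hxW
      rcases hxW with h' | h'
      · exact hxS h'
      · exact (Set.disjoint_left.1 hdisj hxW1) h'
    have hlt := h.2 _ hsub hneW
    have hge : cnn G S + cnn G W2 ≤ cnn G (S ∪ W2) :=
      add_cnn_le_of_join (fun x hx y hy => hJ x (hS hx) y hy)
    omega
  · intro S hS hne
    obtain ⟨x, hxW2, hxS⟩ : ∃ x, x ∈ W2 ∧ x ∉ S := by
      by_contra hcon
      push_neg at hcon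
      exact hne (Set.Subset.antisymm hS hcon)
    have hsub : W1 ∪ S ⊆ W := by
      rw [← hU]; exact Set.union_subset_union_right _ hS
    have hneW : W1 ∪ S ≠ W := by
      intro hEq
      have hxW : x ∈ W := by rw [← hU]; exact Or.inr hxW2
      rw [← hEq] at hxW
      rcases hxW with h' | h'
      · exact (Set.disjoint_right.1 hdisj hxW2) h'
      · exact hxS h'
    have hlt := h.2 _ hsub hneW
    have hge : cnn G W1 + cnn G S ≤ cnn G (W1 ∪ S) :=
      add_cnn_le_of_join (fun x hx y hy => hJ x hx y (hS hy))
    omega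

end Join


section IsoLayer
variable {V : Type} [Fintype V] {G : SimpleGraph V}

lemma chromaticNumber_eq_of_iso {V' W' : Type*} {G' : SimpleGraph V'} {H : SimpleGraph W'}
    (e : G' ≃g H) : G'.chromaticNumber = H.chromaticNumber := by
  apply le_antisymm
  · exact chromaticNumber_mono_of_hom e.toHom
  · exact chromaticNumber_mono_of_hom e.symm.toHom

/-- Induced subgraph of an induced subgraph. -/
def inducedIso (W : Set V) (S' : Set ↥W) :
    (G.induce W).induce S' ≃g G.induce (Subtype.val '' S') where
  toEquiv := Equiv.Set.image _ S' Subtype.val_injective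
  map_rel_iff' := by
    rintro ⟨⟨a, haW⟩, ha⟩ ⟨⟨b, hbW⟩, hb⟩
    simp [Equiv.Set.image, Equiv.Set.imageOfInjOn, comap_adj]

lemma cnn_induce (W : Set V) (S' : Set ↥W) :
    ((G.induce W).induce S').chromaticNumber = ((cnn G (Subtype.val '' S') : ℕ∞)) := by
  rw [chromaticNumber_eq_of_iso (inducedIso W S'), cnn_cast]

lemma cnn_lt_iff {S : Set V} {c : ℕ} :
    (G.induce S).chromaticNumber < (c : ℕ∞) ↔ cnn G S < c := by
  rw [← cnn_cast]
  exact_mod_cast Iff.rfl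

lemma cnn_le_iff' {S : Set V} {c : ℕ} :
    (c : ℕ∞) ≤ (G.induce S).chromaticNumber ↔ c ≤ cnn G S := by
  rw [← cnn_cast]
  exact_mod_cast Iff.rfl

lemma isCritical_induce_iff {W : Set V} {c : ℕ} :
    IsCritical c (G.induce W) ↔ CritOn G W c := by
  constructor
  · rintro ⟨h1, h2⟩
    constructor
    · have : ((G.induce W).induce Set.univ).chromaticNumber = (G.induce W).chromaticNumber :=
        chromaticNumber_eq_of_iso (induceUnivIso _)
      rw [← this, cnn_induce] at h1
      have h1' : (c : ℕ∞) ≤ (cnn G (Subtype.val '' (Set.univ : Set ↥W)) : ℕ∞) := h1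
      rw [Subtype.coe_image_univ] at h1'
      exact_mod_cast h1'
    · intro S hS hne
      set S' : Set ↥W := {x : ↥W | x.1 ∈ S} with hS'
      have himg : Subtype.val '' S' = S := by
        ext x
        constructor
        · rintro ⟨⟨y, hyW⟩, hy, rfl⟩; exact hy
        · intro hx; exact ⟨⟨x, hS hx⟩, hx, rfl⟩
      have hne' : S' ≠ Set.univ := by
        intro hEq
        apply hne
        rw [← himg, hEq, Subtype.coe_image_univ]
      have := h2 S' hne'
      rw [cnn_induce, himg] at this
      exact_mod_cast this
  · rintro ⟨h1, h2⟩
    constructor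
    · have : ((G.induce W).induce Set.univ).chromaticNumber = (G.induce W).chromaticNumber :=
        chromaticNumber_eq_of_iso (induceUnivIso _)
      rw [← this, cnn_induce, Subtype.coe_image_univ]
      exact_mod_cast h1
    · intro S' hne'
      rw [cnn_induce]
      have hsub : Subtype.val '' S' ⊆ W := by
        rintro x ⟨⟨y, hyW⟩, _, rfl⟩; exact hyW
      have hne : Subtype.val '' S' ≠ W := by
        intro hEq
        apply hne'
        ext ⟨x, hxW⟩
        simp only [Set.mem_univ, iff_true]
        have : x ∈ Subtype.val '' S' := by rw [hEq]; exact hxW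
        obtain ⟨⟨y, hyW⟩, hy, rfl⟩ := this
        exact hy
      have := h2 _ hsub hne
      exact_mod_cast this

lemma isCritical_iff_critOn_univ {r : ℕ} :
    IsCritical r G ↔ CritOn G Set.univ r := by
  constructor
  · rintro ⟨h1, h2⟩
    constructor
    · rw [cnn_le_iff'.symm]
      rw [chromaticNumber_eq_of_iso (induceUnivIso G)]
      exact h1
    · intro S _ hne
      exact cnn_lt_iff.1 (h2 S hne)
  · rintro ⟨h1, h2⟩
    constructor
    · have := cnn_le_iff'.2 h1
      rwa [chromaticNumber_eq_of_iso (induceUnivIso G)] at this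
    · intro S hne
      exact cnn_lt_iff.2 (h2 S (Set.subset_univ S) hne)

end IsoLayer

section Decomp
variable {V : Type} [Fintype V] {G : SimpleGraph V}

/-- A complete decomposition of `W` into pairwise completely-joined critical parts,
each of size at least twice its level minus one (in aggregate form). -/
def GoodDecomp (G : SimpleGraph V) (W : Set V) (c : ℕ) : Prop :=
  ∃ (P : Finset (Set V)) (lv : Set V → ℕ),
    (∀ X ∈ P, X.Nonempty) ∧
    (∀ X ∈ P, ∀ Y ∈ P, X ≠ Y → ∀ x ∈ X, ∀ y ∈ Y, G.Adj x y) ∧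
    (⋃₀ ↑P = W) ∧
    (∀ X ∈ P, CritOn G X (lv X)) ∧
    (∑ X ∈ P, lv X = c) ∧
    (∀ X ∈ P, 1 ≤ lv X) ∧
    2 * c ≤ W.ncard + P.card

/-- Any critical set decomposes completely, assuming the splitting theorem for
all smaller graphs. -/
lemma gooddecomp_of_critOn {N : ℕ}
    (IH : ∀ (V' : Type) [Fintype V'] (G' : SimpleGraph V') (r' : ℕ),
      Fintype.card V' < N → 2 ≤ r' → IsCritical r' G' → Fintype.card V' ≤ 2 * r' - 2 →
      ∃ T' : Set V', T'.Nonempty ∧ T'ᶜ.Nonempty ∧ ∀ x ∈ T', ∀ y ∈ T'ᶜ, G'.Adj x y) :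
    ∀ (m : ℕ) (W : Set V) (c : ℕ), W.ncard ≤ m → W.ncard < N → 1 ≤ c → CritOn G W c →
      GoodDecomp G W c := by
  intro m
  induction m with
  | zero =>
    intro W c hWm hWN hc hcrit
    exfalso
    obtain ⟨x, hx⟩ := hcrit.nonempty hc
    have : W.ncard ≠ 0 := by
      intro h0
      rw [Set.ncard_eq_zero (Set.toFinite W)] at h0
      subst h0; exact hx
    omega
  | succ m ih =>
    intro W c hWm hWN hc hcrit
    by_cases hbig : 2 * c ≤ W.ncard + 1
    · -- single part
      refine ⟨{W}, fun _ => c, ?_, ?_, ?_, ?_, ?_, ?_, ?_⟩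
      · intro X hX
        rw [Finset.mem_singleton] at hX
        subst hX; exact hcrit.nonempty hc
      · intro X hX Y hY hne
        rw [Finset.mem_singleton] at hX hY
        exact absurd (hX.trans hY.symm) hne
      · simp
      · intro X hX
        rw [Finset.mem_singleton] at hX
        subst hX; exact hcrit
      · simp
      · intro X hX; exact hc
      · simpa using hbig
    · -- W is small: split it using the induction hypothesis
      push_neg at hbig
      have hcW : cnn G W = c := hcrit.cnn_eq hc
      have hcle : c ≤ W.ncard := by rw [← hcW]; exact cnn_le_ncard W
      have hc2 : 2 ≤ c := by omega
      haveI : Fintype ↥W := (Set.toFinite W).fintype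
      have hcardW : Fintype.card ↥W = W.ncard := by
        rw [← Nat.card_eq_fintype_card, Nat.card_coe_set_eq]
      obtain ⟨T', hT'ne, hT'cne, hT'J⟩ := IH ↥W (G.induce W) c
        (by omega) hc2 (isCritical_induce_iff.2 hcrit) (by omega)
      set W1 : Set V := Subtype.val '' T' with hW1
      set W2 : Set V := Subtype.val '' T'ᶜ with hW2
      have hW1sub : W1 ⊆ W := by rintro x ⟨⟨y, hyW⟩, _, rfl⟩; exact hyW
      have hW2sub : W2 ⊆ W := by rintro x ⟨⟨y, hyW⟩, _, rfl⟩; exact hyW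
      have hUnion : W1 ∪ W2 = W := by
        apply Set.Subset.antisymm (Set.union_subset hW1sub hW2sub)
        intro x hx
        by_cases hxT : (⟨x, hx⟩ : ↥W) ∈ T'
        · exact Or.inl ⟨⟨x, hx⟩, hxT, rfl⟩
        · exact Or.inr ⟨⟨x, hx⟩, hxT, rfl⟩
      have hDisj : Disjoint W1 W2 := by
        rw [Set.disjoint_left]
        rintro x ⟨⟨y, hyW⟩, hy, rfl⟩ ⟨⟨y', hy'W⟩, hy', hyy⟩
        have : (⟨y', hy'W⟩ : ↥W) = ⟨y, hyW⟩ := Subtype.ext hyy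
        rw [this] at hy'
        exact hy' hy
      have hW1ne : W1.Nonempty := hT'ne.image _
      have hW2ne : W2.Nonempty := hT'cne.image _
      have hJoin : ∀ x ∈ W1, ∀ y ∈ W2, G.Adj x y := by
        rintro x ⟨⟨x', hx'⟩, hxT, rfl⟩ y ⟨⟨y', hy'⟩, hyT, rfl⟩
        exact hT'J _ hxT _ hyT
      obtain ⟨hcrit1, hcrit2, hsum, ha1, hb1⟩ := hcrit.split hc hUnion hDisj hW1ne hW2ne hJoin
      have hlt1 : W1.ncard < W.ncard := by
        refine Set.ncard_lt_ncard ?_ (Set.toFinite W)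
        refine hW1sub.ssubset_of_ne ?_
        intro hEq
        obtain ⟨y, hy⟩ := hW2ne
        have hyW1 : y ∈ W1 := by rw [hEq]; exact hW2sub hy
        exact Set.disjoint_left.1 hDisj hyW1 hy
      have hlt2 : W2.ncard < W.ncard := by
        refine Set.ncard_lt_ncard ?_ (Set.toFinite W)
        refine hW2sub.ssubset_of_ne ?_
        intro hEq
        obtain ⟨y, hy⟩ := hW1ne
        have hyW2 : y ∈ W2 := by rw [hEq]; exact hW1sub hy
        exact Set.disjoint_left.1 hDisj hy hyW2
      obtain ⟨P1, lv1, hP1ne, hP1J, hP1U, hP1crit, hP1sum, hP1lv, hP1cnt⟩ :=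
        ih W1 (cnn G W1) (by omega) (by omega) ha1 hcrit1
      obtain ⟨P2, lv2, hP2ne, hP2J, hP2U, hP2crit, hP2sum, hP2lv, hP2cnt⟩ :=
        ih W2 (cnn G W2) (by omega) (by omega) hb1 hcrit2
      -- parts of P1 are subsets of W1, of P2 subsets of W2, so P1 and P2 are disjoint
      have hsub1 : ∀ X ∈ P1, X ⊆ W1 := by
        intro X hX
        rw [← hP1U]; exact Set.subset_sUnion_of_mem hX
      have hsub2 : ∀ X ∈ P2, X ⊆ W2 := by
        intro X hX
        rw [← hP2U]; exact Set.subset_sUnion_of_mem hX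
      have hPdisj : Disjoint P1 P2 := by
        rw [Finset.disjoint_left]
        intro X hX1 hX2
        obtain ⟨x, hx⟩ := hP1ne X hX1
        exact Set.disjoint_left.1 hDisj (hsub1 X hX1 hx) (hsub2 X hX2 hx)
      refine ⟨P1 ∪ P2, fun X => if X ∈ P1 then lv1 X else lv2 X, ?_, ?_, ?_, ?_, ?_, ?_, ?_⟩
      · intro X hX
        rcases Finset.mem_union.1 hX with h | h
        · exact hP1ne X h
        · exact hP2ne X h
      · intro X hX Y hY hne x hx y hy
        rcases Finset.mem_union.1 hX with h1 | h1 <;> rcases Finset.mem_union.1 hY with h2 | h2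
        · exact hP1J X h1 Y h2 hne x hx y hy
        · exact hJoin x (hsub1 X h1 hx) y (hsub2 Y h2 hy)
        · exact (hJoin y (hsub1 Y h2 hy) x (hsub2 X h1 hx)).symm
        · exact hP2J X h1 Y h2 hne x hx y hy
      · push_cast
        rw [Set.sUnion_union, hP1U, hP2U, hUnion]
      · intro X hX
        rcases Finset.mem_union.1 hX with h | h
        · simp only [if_pos h]; exact hP1crit X h
        · simp only [if_neg (Finset.disjoint_right.1 hPdisj h)]; exact hP2crit X h
      · rw [Finset.sum_union hPdisj]
        rw [Finset.sum_congr rfl (fun X hX => if_pos hX),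
          Finset.sum_congr rfl (fun X (hX : X ∈ P2) =>
            if_neg (Finset.disjoint_right.1 hPdisj hX))]
        rw [hP1sum, hP2sum]
        omega
      · intro X hX
        rcases Finset.mem_union.1 hX with h | h
        · simp only [if_pos h]; exact hP1lv X h
        · simp only [if_neg (Finset.disjoint_right.1 hPdisj h)]; exact hP2lv X h
      · have hcard : W.ncard = W1.ncard + W2.ncard := by
          rw [← hUnion, Set.ncard_union_eq hDisj (Set.toFinite _) (Set.toFinite _)]
        rw [Finset.card_union_of_disjoint hPdisj]
        omega

end Decomp

section Assembly
variable {V : Type} [Fintype V] {G : SimpleGraph V}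

/-- The master construction: given a decomposition of a critical `W0` into joined critical
parts, a coloring of `W0 ∪ Ys` with `m` colors where the "outside" vertices `Ys` only
obstruct parts in `P'`, and a system of distinct representative parts (avoiding `P'`)
with non-neighbors for the remaining outside vertices, the whole graph is `m`-colorable. -/
lemma assembly {W0 : Set V} {m : ℕ} (hm1 : 1 ≤ m)
    (P : Finset (Set V)) (lv : Set V → ℕ)
    (hPJ : ∀ X ∈ P, ∀ Y ∈ P, X ≠ Y → ∀ x ∈ X, ∀ y ∈ Y, G.Adj x y)
    (hPU : ⋃₀ ↑P = W0)
    (hPcrit : ∀ X ∈ P, CritOn G X (lv X))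
    (hPsum : ∑ X ∈ P, lv X = m)
    (hPlv : ∀ X ∈ P, 1 ≤ lv X)
    (Ys : Set V) (hYZ : Ys ⊆ W0ᶜ)
    (P' : Finset (Set V))
    (hYP' : ∀ y ∈ Ys, ∀ X ∈ P, (∃ x ∈ X, ¬ G.Adj y x) → X ∈ P')
    (φ : (G.induce (W0 ∪ Ys)).Coloring (Fin m))
    (g : V → Set V) (xw : V → V)
    (hginj : ∀ z1 ∈ W0ᶜ \ Ys, ∀ z2 ∈ W0ᶜ \ Ys, g z1 = g z2 → z1 = z2)
    (hgmem : ∀ z ∈ W0ᶜ \ Ys, g z ∈ P ∧ g z ∉ P' ∧ xw z ∈ g z ∧ ¬ G.Adj z (xw z)) :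
    G.Colorable m := by
  classical
  set gs : Set V := W0ᶜ \ Ys with hgs
  -- part subsets
  have hXsub : ∀ X ∈ P, X ⊆ W0 := by
    intro X hX
    rw [← hPU]; exact Set.subset_sUnion_of_mem hX
  -- flattened coloring
  set φ' : V → Fin m := fun v => if h : v ∈ W0 ∪ Ys then φ ⟨v, h⟩ else ⟨0, hm1⟩ with hφ'def
  have hφ' : ∀ v ∈ W0 ∪ Ys, ∀ w ∈ W0 ∪ Ys, G.Adj v w → φ' v ≠ φ' w := by
    intro v hv w hw hadj
    simp only [hφ'def, dif_pos hv, dif_pos hw]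
    exact φ.valid (show (G.induce (W0 ∪ Ys)).Adj ⟨v, hv⟩ ⟨w, hw⟩ from hadj)
  -- palettes
  set C : Set V → Finset (Fin m) := fun X => Finset.univ.filter (fun c => ∃ x ∈ X, φ' x = c)
    with hCdef
  have hmemC : ∀ X v, v ∈ X → φ' v ∈ C X := by
    intro X v hv
    simp only [hCdef, Finset.mem_filter, Finset.mem_univ, true_and]
    exact ⟨v, hv, rfl⟩
  have hCelim : ∀ X c, c ∈ C X → ∃ x ∈ X, φ' x = c := by
    intro X c hc
    simpa only [hCdef, Finset.mem_filter, Finset.mem_univ, true_and] using hc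
  have hCge : ∀ X ∈ P, lv X ≤ (C X).card := by
    intro X hX
    have hc := (hPcrit X hX).cnn_eq (hPlv X hX)
    rw [← hc]
    have hcol : (G.induce X).Coloring ↥(C X) := by
      refine Coloring.mk (fun v => (⟨φ' v.1, hmemC X v.1 v.2⟩ : ↥(C X))) ?_
      rintro ⟨x, hx⟩ ⟨y, hy⟩ hadj hc'
      have hxy : G.Adj x y := hadj
      exact hφ' x (Or.inl (hXsub X hX hx)) y (Or.inl (hXsub X hX hy)) hxy
        (by simpa using hc')
    have hle := cnn_le_of_colorable hcol.colorable
    rwa [Fintype.card_coe] at hle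
  have hCdisj : ∀ X ∈ P, ∀ X' ∈ P, X ≠ X' → Disjoint (C X) (C X') := by
    intro X hX X' hX' hne
    rw [Finset.disjoint_left]
    intro c hc hc'
    obtain ⟨x, hx, hcx⟩ := hCelim X c hc
    obtain ⟨x', hx', hcx'⟩ := hCelim X' c hc'
    exact hφ' x (Or.inl (hXsub X hX hx)) x' (Or.inl (hXsub X' hX' hx'))
      (hPJ X hX X' hX' hne x hx x' hx') (by rw [hcx, hcx'])
  have hsumcard : ∑ X ∈ P, (C X).card ≤ m := by
    rw [← Finset.card_biUnion hCdisj]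
    simpa using Finset.card_le_univ (P.biUnion C)
  have hCeq : ∀ X ∈ P, (C X).card = lv X := by
    by_contra hcon
    push_neg at hcon
    obtain ⟨X0, hX0, hne0⟩ := hcon
    have hlt : ∑ X ∈ P, lv X < ∑ X ∈ P, (C X).card := by
      refine Finset.sum_lt_sum (fun X hX => hCge X hX) ⟨X0, hX0, ?_⟩
      exact lt_of_le_of_ne (hCge X0 hX0) (Ne.symm hne0)
    omega
  have hCuniv : P.biUnion C = Finset.univ := by
    refine Finset.eq_univ_of_card _ ?_
    rw [Finset.card_biUnion hCdisj, Finset.sum_congr rfl hCeq, hPsum, Fintype.card_fin]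
  -- parts are pairwise disjoint sets of vertices
  have hXdisj : ∀ X ∈ P, ∀ X' ∈ P, X ≠ X' → ∀ v, v ∈ X → v ∈ X' → False := by
    intro X hX X' hX' hne v hv hv'
    exact G.irrefl (hPJ X hX X' hX' hne v hv v hv')
  -- the part containing a vertex of W0
  have hpt0 : ∀ v ∈ W0, ∃ X, X ∈ P ∧ v ∈ X := by
    intro v hv
    rw [← hPU] at hv
    obtain ⟨X, hX, hvX⟩ := hv
    exact ⟨X, hX, hvX⟩
  set pt : V → Set V := fun v => if h : ∃ X, X ∈ P ∧ v ∈ X then h.choose else ∅ with hptdef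
  have hptP : ∀ v ∈ W0, pt v ∈ P ∧ v ∈ pt v := by
    intro v hv
    have h := hpt0 v hv
    simp only [hptdef, dif_pos h]
    exact h.choose_spec
  have hptEq : ∀ v X, X ∈ P → v ∈ X → pt v = X := by
    intro v X hX hvX
    have hv : v ∈ W0 := hXsub X hX hvX
    obtain ⟨hP1, hP2⟩ := hptP v hv
    by_contra hne
    exact hXdisj _ hP1 X hX hne v hP2 hvX
  -- V is nonempty
  have hPnonempty : P.Nonempty := by
    by_contra hP
    rw [Finset.not_nonempty_iff_eq_empty] at hP
    rw [hP] at hPsum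
    simp at hPsum
    omega
  have hVne : Nonempty V := by
    obtain ⟨X, hX⟩ := hPnonempty
    have := hPlv X hX
    obtain ⟨v, hv⟩ := (hPcrit X hX).nonempty this
    exact ⟨v⟩
  -- inverse of g on guests
  set gz : Set V → V := fun X => if h : ∃ z, z ∈ gs ∧ g z = X then h.choose
    else Classical.arbitrary V with hgzdef
  have hgz : ∀ X, (∃ z, z ∈ gs ∧ g z = X) → gz X ∈ gs ∧ g (gz X) = X := by
    intro X h
    simp only [hgzdef, dif_pos h]
    exact h.choose_spec
  have hgzv : ∀ z ∈ gs, gz (g z) = z := by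
    intro z hz
    obtain ⟨h1, h2⟩ := hgz (g z) ⟨z, hz, rfl⟩
    exact hginj _ h1 _ hz h2
  -- the recolorings of the hosting parts
  have hrho0 : ∀ z ∈ gs, ∃ rz : V → ℕ,
      (∀ v ∈ g z \ {xw z}, rz v + 1 < lv (g z)) ∧
      (∀ v ∈ g z \ {xw z}, ∀ w ∈ g z \ {xw z}, G.Adj v w → rz v ≠ rz w) := by
    intro z hz
    obtain ⟨hgP, _, hxwg, _⟩ := hgmem z hz
    have hlv1 := hPlv _ hgP
    have hcnnlt : cnn G (g z \ {xw z}) < lv (g z) := by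
      refine (hPcrit _ hgP).2 _ Set.diff_subset ?_
      intro hEq
      have : xw z ∈ g z \ {xw z} := by rw [hEq]; exact hxwg
      simp at this
    obtain ⟨κ⟩ := colorable_of_cnn_le (show cnn G (g z \ {xw z}) ≤ lv (g z) - 1 by omega)
    refine ⟨fun v => if h : v ∈ g z \ {xw z} then (κ ⟨v, h⟩).val else 0, ?_, ?_⟩
    · intro v hv
      simp only [dif_pos hv]
      have := (κ ⟨v, hv⟩).isLt
      omega
    · intro v hv w hw hadj
      simp only [dif_pos hv, dif_pos hw]
      intro hEq
      exact κ.valid (show (G.induce (g z \ {xw z})).Adj ⟨v, hv⟩ ⟨w, hw⟩ from hadj)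
        (Fin.ext hEq)
  choose rho hrho1 hrho2 using hrho0
  set rho' : V → V → ℕ := fun z => if h : z ∈ gs then rho z h else fun _ => 0 with hrhodef
  have hrho1' : ∀ z ∈ gs, ∀ v ∈ g z \ {xw z}, rho' z v + 1 < lv (g z) := by
    intro z hz v hv
    simp only [hrhodef, dif_pos hz]
    exact hrho1 z hz v hv
  have hrho2' : ∀ z ∈ gs, ∀ v ∈ g z \ {xw z}, ∀ w ∈ g z \ {xw z},
      G.Adj v w → rho' z v ≠ rho' z w := by
    intro z hz
    simp only [hrhodef, dif_pos hz]
    exact hrho2 z hz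
  -- enumeration of palettes
  set E : Set V → ℕ → Fin m := fun X t => if h : t < (C X).card
    then ((C X).equivFin.symm ⟨t, h⟩).1 else ⟨0, hm1⟩ with hEdef
  have hEmem : ∀ X t, t < (C X).card → E X t ∈ C X := by
    intro X t h
    simp only [hEdef, dif_pos h]
    exact ((C X).equivFin.symm ⟨t, h⟩).2
  have hEinj : ∀ X t s, t < (C X).card → s < (C X).card → E X t = E X s → t = s := by
    intro X t s ht hs
    simp only [hEdef, dif_pos ht, dif_pos hs]
    intro hEq
    have := (C X).equivFin.symm.injective (Subtype.ext hEq)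
    simpa using this
  -- the final coloring
  set col : V → Fin m := fun v =>
    if hW : v ∈ W0 then
      (if hosted : ∃ z, z ∈ gs ∧ g z = pt v then
        (if v = xw (gz (pt v)) then E (pt v) 0 else E (pt v) (rho' (gz (pt v)) v + 1))
       else φ' v)
    else if v ∈ Ys then φ' v
    else E (g v) 0 with hcoldef
  -- formulas
  have hcolW0h : ∀ v (hv : v ∈ W0), (∃ z, z ∈ gs ∧ g z = pt v) →
      col v = (if v = xw (gz (pt v)) then E (pt v) 0 else E (pt v) (rho' (gz (pt v)) v + 1)) := by
    intro v hv hh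
    simp only [hcoldef, dif_pos hv, dif_pos hh]
  have hcolW0k : ∀ v (hv : v ∈ W0), (¬ ∃ z, z ∈ gs ∧ g z = pt v) → col v = φ' v := by
    intro v hv hh
    simp only [hcoldef, dif_pos hv, dif_neg hh]
  have hcolYs : ∀ v ∈ Ys, col v = φ' v := by
    intro v hv
    have hvW : v ∉ W0 := hYZ hv
    simp only [hcoldef, dif_neg hvW, if_pos hv]
  have hcolgs : ∀ v ∈ gs, col v = E (g v) 0 := by
    intro v hv
    obtain ⟨hv1, hv2⟩ := hv
    simp only [hcoldef, dif_neg (Set.notMem_of_mem_compl hv1), if_neg hv2]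
  -- memberships
  have hcolW0mem : ∀ v ∈ W0, col v ∈ C (pt v) := by
    intro v hv
    obtain ⟨hvP, hvpt⟩ := hptP v hv
    have hcard : (C (pt v)).card = lv (pt v) := hCeq _ hvP
    by_cases hh : ∃ z, z ∈ gs ∧ g z = pt v
    · rw [hcolW0h v hv hh]
      obtain ⟨hz1, hz2⟩ := hgz (pt v) hh
      by_cases hvx : v = xw (gz (pt v))
      · rw [if_pos hvx]
        refine hEmem _ _ ?_
        rw [hcard]
        exact hPlv _ hvP
      · rw [if_neg hvx]
        refine hEmem _ _ ?_
        rw [hcard]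
        have := hrho1' _ hz1 v (by rw [hz2]; exact ⟨hvpt, hvx⟩)
        rw [hz2] at this
        exact this
    · rw [hcolW0k v hv hh]
      exact hmemC _ v hvpt
  have hcolYsmem : ∀ v ∈ Ys, ∃ X, X ∈ P ∧ X ∈ P' ∧ (¬ ∃ z, z ∈ gs ∧ g z = X) ∧
      col v ∈ C X := by
    intro v hv
    have : φ' v ∈ P.biUnion C := by rw [hCuniv]; exact Finset.mem_univ _
    obtain ⟨X, hXP, hXc⟩ := Finset.mem_biUnion.1 this
    obtain ⟨x, hx, hφx⟩ := hCelim X _ hXc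
    have hnadj : ¬ G.Adj v x := by
      intro hadj
      exact hφ' v (Or.inr hv) x (Or.inl (hXsub X hXP hx)) hadj (by rw [hφx])
    refine ⟨X, hXP, hYP' v hv X hXP ⟨x, hx, hnadj⟩, ?_, by rw [hcolYs v hv]; exact hXc⟩
    rintro ⟨z, hz, hgz'⟩
    obtain ⟨_, hzP', _, _⟩ := hgmem z hz
    rw [hgz'] at hzP'
    exact hzP' (hYP' v hv X hXP ⟨x, hx, hnadj⟩)
  have hcolgsmem : ∀ v ∈ gs, col v ∈ C (g v) := by
    intro v hv
    rw [hcolgs v hv]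
    refine hEmem _ _ ?_
    rw [hCeq _ (hgmem v hv).1]
    exact hPlv _ (hgmem v hv).1
  -- classification
  have hclass : ∀ v : V, v ∈ W0 ∨ v ∈ Ys ∨ v ∈ gs := by
    intro v
    by_cases h1 : v ∈ W0
    · exact Or.inl h1
    by_cases h2 : v ∈ Ys
    · exact Or.inr (Or.inl h2)
    · exact Or.inr (Or.inr ⟨h1, h2⟩)
  -- main validity steps
  have step1 : ∀ a b, G.Adj a b → col a = col b → a ∈ W0 → False := by
    intro a b hadj hEq haW
    have hmema := hcolW0mem a haW
    rcases hclass b with hbW | hbY | hbg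
    · -- both in W0
      have hmemb := hcolW0mem b hbW
      have hpteq : pt a = pt b := by
        by_contra hne
        exact Finset.disjoint_left.1
          (hCdisj _ (hptP a haW).1 _ (hptP b hbW).1 hne) hmema (hEq ▸ hmemb)
      by_cases hh : ∃ z, z ∈ gs ∧ g z = pt a
      · obtain ⟨hz1, hz2⟩ := hgz (pt a) hh
        have hcarda : (C (pt a)).card = lv (pt a) := hCeq _ (hptP a haW).1
        have hain : a ∈ pt a := (hptP a haW).2
        have hbin : b ∈ pt a := by rw [hpteq]; exact (hptP b hbW).2
        rw [hcolW0h a haW hh] at hEq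
        rw [hcolW0h b hbW (hpteq ▸ hh), ← hpteq] at hEq
        have hlva := hPlv _ (hptP a haW).1
        by_cases hax : a = xw (gz (pt a)) <;> by_cases hbx : b = xw (gz (pt a))
        · exact hadj.ne (hax.trans hbx.symm)
        · rw [if_pos hax, if_neg hbx] at hEq
          have hbnd := hrho1' _ hz1 b (by rw [hz2]; exact ⟨hbin, hbx⟩)
          rw [hz2] at hbnd
          have := hEinj (pt a) _ _ (by omega) (by omega) hEq
          omega
        · rw [if_neg hax, if_pos hbx] at hEq
          have hbnd := hrho1' _ hz1 a (by rw [hz2]; exact ⟨hain, hax⟩)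
          rw [hz2] at hbnd
          have := hEinj (pt a) _ _ (by omega) (by omega) hEq
          omega
        · rw [if_neg hax, if_neg hbx] at hEq
          have hbnda := hrho1' _ hz1 a (by rw [hz2]; exact ⟨hain, hax⟩)
          have hbndb := hrho1' _ hz1 b (by rw [hz2]; exact ⟨hbin, hbx⟩)
          rw [hz2] at hbnda hbndb
          have := hEinj (pt a) _ _ (by omega) (by omega) hEq
          exact hrho2' _ hz1 a (by rw [hz2]; exact ⟨hain, hax⟩)
            b (by rw [hz2]; exact ⟨hbin, hbx⟩) hadj (by omega)
      · rw [hcolW0k a haW hh] at hEq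
        rw [hcolW0k b hbW (hpteq ▸ hh)] at hEq
        exact hφ' a (Or.inl haW) b (Or.inl hbW) hadj hEq
    · -- b in Ys
      obtain ⟨X', hX'P, hX'P', hX'nh, hmemb⟩ := hcolYsmem b hbY
      have hpteq : pt a = X' := by
        by_contra hne
        exact Finset.disjoint_left.1
          (hCdisj _ (hptP a haW).1 _ hX'P hne) hmema (hEq ▸ hmemb)
      by_cases hh : ∃ z, z ∈ gs ∧ g z = pt a
      · exact hX'nh (hpteq ▸ hh)
      · rw [hcolW0k a haW hh, hcolYs b hbY] at hEq
        exact hφ' a (Or.inl haW) b (Or.inr hbY) hadj hEq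
    · -- b is a guest
      have hmemb := hcolgsmem b hbg
      obtain ⟨hgbP, hgbP', hxwb, hnadjb⟩ := hgmem b hbg
      have hpteq : pt a = g b := by
        by_contra hne
        exact Finset.disjoint_left.1
          (hCdisj _ (hptP a haW).1 _ hgbP hne) hmema (hEq ▸ hmemb)
      have hh : ∃ z, z ∈ gs ∧ g z = pt a := ⟨b, hbg, hpteq.symm⟩
      have hgzb : gz (pt a) = b := by rw [hpteq]; exact hgzv b hbg
      rw [hcolW0h a haW hh, hcolgs b hbg, ← hpteq] at hEq
      rw [hgzb] at hEq
      by_cases hax : a = xw b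
      · subst hax
        exact hnadjb hadj.symm
      · rw [if_neg hax] at hEq
        have hain : a ∈ pt a := (hptP a haW).2
        have hbnd := hrho1' _ hbg a (by rw [hpteq] at hain; exact ⟨hain, hax⟩)
        have hcarda : (C (pt a)).card = lv (pt a) := hCeq _ (hptP a haW).1
        rw [← hpteq] at hbnd
        have hlva := hPlv _ (hptP a haW).1
        have := hEinj (pt a) _ _ (by omega) (by omega) hEq
        omega
  have step2 : ∀ a b, G.Adj a b → col a = col b → a ∈ Ys → b ∉ W0 → False := by
    intro a b hadj hEq haY hbW
    rcases hclass b with hbW' | hbY | hbg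
    · exact hbW hbW'
    · rw [hcolYs a haY, hcolYs b hbY] at hEq
      exact hφ' a (Or.inr haY) b (Or.inr hbY) hadj hEq
    · obtain ⟨X, hXP, hXP', _, hmema⟩ := hcolYsmem a haY
      have hmemb := hcolgsmem b hbg
      obtain ⟨hgbP, hgbP', _, _⟩ := hgmem b hbg
      have : X ≠ g b := by
        intro hEq'
        rw [hEq'] at hXP'
        exact hgbP' hXP'
      exact Finset.disjoint_left.1 (hCdisj _ hXP _ hgbP this) hmema (hEq ▸ hmemb)
  have step3 : ∀ a b, G.Adj a b → col a = col b → a ∈ gs → b ∈ gs → False := by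
    intro a b hadj hEq hag hbg
    have hne : g a ≠ g b := by
      intro hEq'
      exact hadj.ne (hginj a hag b hbg hEq')
    exact Finset.disjoint_left.1 (hCdisj _ (hgmem a hag).1 _ (hgmem b hbg).1 hne)
      (hcolgsmem a hag) (hEq ▸ hcolgsmem b hbg)
  have hvalid : ∀ a b, G.Adj a b → col a ≠ col b := by
    intro a b hadj hEq
    rcases hclass a with haW | haY | hag
    · exact step1 a b hadj hEq haW
    · rcases hclass b with hbW | hbY | hbg
      · exact step1 b a hadj.symm hEq.symm hbW
      · exact step2 a b hadj hEq haY (hYZ hbY)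
      · exact step2 a b hadj hEq haY hbg.1
    · rcases hclass b with hbW | hbY | hbg
      · exact step1 b a hadj.symm hEq.symm hbW
      · exact step2 b a hadj.symm hEq.symm hbY hag.1
      · exact step3 a b hadj hEq hag hbg
  have : G.Coloring (Fin m) := Coloring.mk col (fun {v w} h => hvalid v w h)
  simpa using this.colorable

end Assembly

section Main

/-- The core splitting theorem (Gallai): a critical graph on at most `2r-2` vertices
splits as a join. -/
theorem split_theorem : ∀ (N : ℕ) (V : Type) [Fintype V] (G : SimpleGraph V) (r : ℕ),
    Fintype.card V ≤ N → 2 ≤ r → IsCritical r G → Fintype.card V ≤ 2 * r - 2 →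
    ∃ T : Set V, T.Nonempty ∧ Tᶜ.Nonempty ∧ ∀ x ∈ T, ∀ y ∈ Tᶜ, G.Adj x y := by
  intro N
  induction N using Nat.strong_induction_on with
  | _ N IH =>
  intro V _ G r hVN hr2 hcritI hcard
  classical
  have hcrit : CritOn G Set.univ r := isCritical_iff_critOn_univ.1 hcritI
  have hr1 : 1 ≤ r := by omega
  have huniv : (Set.univ : Set V).ncard = Fintype.card V := by
    rw [Set.ncard_univ, Nat.card_eq_fintype_card]
  have hcnnuniv : cnn G Set.univ = r := hcrit.cnn_eq hr1
  have hrn : r ≤ Fintype.card V := by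
    have := cnn_le_ncard (G := G) (Set.univ : Set V)
    rw [hcnnuniv, huniv] at this
    exact this
  have hn2 : 2 ≤ Fintype.card V := by omega
  by_cases hcomp : ∀ x y : V, x ≠ y → G.Adj x y
  · -- complete graph: split off one vertex
    haveI : Nonempty V := Fintype.card_pos_iff.1 (by omega)
    obtain ⟨v0⟩ := ‹Nonempty V›
    refine ⟨{v0}, ⟨v0, rfl⟩, ?_, ?_⟩
    · obtain ⟨w, hw⟩ := Fintype.exists_ne_of_one_lt_card (by omega) v0
      exact ⟨w, hw⟩
    · rintro x (rfl : x = v0) y hy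
      exact hcomp x y (fun h => hy (h ▸ rfl))
  · push_neg at hcomp
    obtain ⟨u, w, huw, hnadj⟩ := hcomp
    set I : Set V := {u, w} with hI
    have hind : ∀ x ∈ I, ∀ y ∈ I, ¬ G.Adj x y := by
      rintro x (rfl | rfl) y (rfl | rfl)
      · simp
      · exact hnadj
      · exact fun h => hnadj h.symm
      · simp
    have hstep : cnn G Set.univ ≤ cnn G (Set.univ \ I) + 1 := cnn_le_diff_add_one hind
    rw [← Set.compl_eq_univ_diff] at hstep
    have hr1' : r - 1 ≤ cnn G Iᶜ := by omega
    obtain ⟨W0, hW0sub, hW0crit⟩ := exists_critOn (Fintype.card V) Iᶜ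
      (by rw [← huniv]; exact Set.ncard_le_ncard (Set.subset_univ _) (Set.toFinite _))
      (r - 1) hr1'
    have hc1 : 1 ≤ r - 1 := by omega
    have huI : u ∈ I := by simp [hI]
    have hwI : w ∈ I := by simp [hI]
    have huW0 : u ∉ W0 := fun h => (hW0sub h) huI
    have hwW0 : w ∉ W0 := fun h => (hW0sub h) hwI
    have hW0ne_univ : W0 ≠ Set.univ := by
      intro h
      exact huW0 (h ▸ Set.mem_univ u)
    set Z : Set V := W0ᶜ with hZ
    have huZ : u ∈ Z := huW0
    have hwZ : w ∈ Z := hwW0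
    -- decompose W0
    have hW0lt : W0.ncard < Fintype.card V := by
      rw [← huniv]
      exact Set.ncard_lt_ncard ((Set.subset_univ _).ssubset_of_ne hW0ne_univ)
        (Set.toFinite _)
    obtain ⟨P, lv, hPne, hPJ, hPU, hPcrit, hPsum, hPlv, hPcnt⟩ :=
      gooddecomp_of_critOn (N := N) (G := G)
        (fun V' _ G' r' hlt hr' hcr hcd => IH (Fintype.card V') (by omega) V' G' r'
          le_rfl hr' hcr hcd)
        (Fintype.card V) W0 (r - 1)
        (by rw [← huniv]; exact Set.ncard_le_ncard (Set.subset_univ _) (Set.toFinite _))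
        (by omega) hc1 hW0crit
    have hXsub : ∀ X ∈ P, X ⊆ W0 := by
      intro X hX
      rw [← hPU]; exact Set.subset_sUnion_of_mem hX
    -- counting
    have hZcard : W0.ncard + Z.ncard = Fintype.card V := by
      rw [hZ, Set.ncard_add_ncard_compl, Nat.card_eq_fintype_card]
    have hZP : Z.ncard ≤ P.card := by omega
    have hZ2 : 2 ≤ Z.ncard := by
      have hsub : ({u, w} : Set V) ⊆ Z := by
        rintro x (rfl | rfl)
        · exact huZ
        · exact hwZ
      have := Set.ncard_le_ncard hsub (Set.toFinite Z)
      rw [Set.ncard_pair huw] at this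
      exact this
    -- Hall machinery
    set Zf : Finset V := (Set.toFinite Z).toFinset with hZf
    have hZfcard : Zf.card = Z.ncard := by
      rw [hZf, Set.ncard_eq_toFinset_card Z (Set.toFinite Z)]
    have hmemZf : ∀ {z : V}, z ∈ Zf ↔ z ∈ Z := fun {z} => Set.Finite.mem_toFinset _
    set t : V → Finset (Set V) := fun z => P.filter (fun X => ∃ x ∈ X, ¬ G.Adj z x) with ht
    have htP : ∀ z, t z ⊆ P := fun z => Finset.filter_subset _ _
    -- maximize the deficiency
    obtain ⟨Y, hYmem, hYmax⟩ := Finset.exists_max_image Zf.powerset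
      (fun Y => ((Y.card : ℤ) - ((Y.biUnion t).card : ℤ))) ⟨∅, Finset.empty_mem_powerset _⟩
    -- Choose the final set `Y1`
    obtain ⟨Y1, hY1mem, hY1max, hY1pos⟩ :
        ∃ Y1 ∈ Zf.powerset, (∀ Y' ∈ Zf.powerset,
            ((Y'.card : ℤ) - ((Y'.biUnion t).card : ℤ)) ≤
              ((Y1.card : ℤ) - ((Y1.biUnion t).card : ℤ))) ∧
          (W0 ∪ ↑Y1 = Set.univ → (Y1.biUnion t).card < Y1.card) := by
      by_cases h0 : Y.card ≤ (Y.biUnion t).card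
      · refine ⟨∅, Finset.empty_mem_powerset _, ?_, ?_⟩
        · intro Y' hY'
          have := hYmax Y' hY'
          simp only [Finset.biUnion_empty, Finset.card_empty]
          omega
        · intro hU
          exfalso
          apply hW0ne_univ
          simpa using hU
      · exact ⟨Y, hYmem, hYmax, fun _ => by omega⟩
    clear hYmax hYmem
    set P' : Finset (Set V) := Y1.biUnion t with hP'
    have hY1sub : ↑Y1 ⊆ Z := by
      intro y hy
      exact hmemZf.1 (Finset.mem_powerset.1 hY1mem hy)
    have hP'subP : P' ⊆ P := by
      intro X hX
      obtain ⟨z, _, hz⟩ := Finset.mem_biUnion.1 hX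
      exact htP z hz
    -- SDR for the guests
    set Gf : Finset V := Zf \ Y1 with hGf
    have hallcond : ∀ s : Finset {z // z ∈ Gf},
        s.card ≤ (s.biUnion (fun z => t z.1 \ P')).card := by
      intro s
      set s' : Finset V := s.image Subtype.val with hs'
      have hs'card : s'.card = s.card := Finset.card_image_of_injective _ Subtype.val_injective
      have hs'sub : s' ⊆ Gf := by
        intro x hx
        obtain ⟨⟨z, hz⟩, _, rfl⟩ := Finset.mem_image.1 hx
        exact hz
      have hdisjY : Disjoint Y1 s' :=
        (Finset.disjoint_of_subset_right hs'sub Finset.sdiff_disjoint.symm)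
      have hYs' : Y1 ∪ s' ∈ Zf.powerset := by
        rw [Finset.mem_powerset]
        refine Finset.union_subset (Finset.mem_powerset.1 hY1mem) ?_
        exact hs'sub.trans (Finset.sdiff_subset)
      have hUB : (Y1 ∪ s').biUnion t ⊆ P' ∪ s'.biUnion (fun z => t z \ P') := by
        intro X hX
        obtain ⟨z, hz, hzX⟩ := Finset.mem_biUnion.1 hX
        rcases Finset.mem_union.1 hz with hz | hz
        · exact Finset.mem_union_left _ (Finset.mem_biUnion.2 ⟨z, hz, hzX⟩)
        · by_cases hXP' : X ∈ P'
          · exact Finset.mem_union_left _ hXP'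
          · exact Finset.mem_union_right _
              (Finset.mem_biUnion.2 ⟨z, hz, Finset.mem_sdiff.2 ⟨hzX, hXP'⟩⟩)
      have hcardUB : ((Y1 ∪ s').biUnion t).card ≤
          P'.card + (s'.biUnion fun z => t z \ P').card :=
        (Finset.card_le_card hUB).trans (Finset.card_union_le _ _)
      have hmaxappl := hY1max _ hYs'
      have hcardU : (Y1 ∪ s').card = Y1.card + s'.card := Finset.card_union_of_disjoint hdisjY
      have himg : s'.biUnion (fun z => t z \ P') = s.biUnion (fun z => t z.1 \ P') := by
        rw [hs']
        exact Finset.image_biUnion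
      rw [himg] at hcardUB
      omega
    obtain ⟨fSDR, hfinj, hfmem⟩ :=
      (Finset.all_card_le_biUnion_card_iff_exists_injective
        (fun z : {z // z ∈ Gf} => t z.1 \ P')).1 hallcond
    by_cases hYuniv : W0 ∪ ↑Y1 = Set.univ
    · -- the split
      have hdefpos := hY1pos hYuniv
      have hY1Z : Y1.card ≤ Z.ncard := by
        rw [← hZfcard]
        exact Finset.card_le_card (Finset.mem_powerset.1 hY1mem)
      have hPP' : P'.card < P.card := by omega
      obtain ⟨X0, hX0⟩ : ∃ X0, X0 ∈ P \ P' := by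
        have : 0 < (P \ P').card := by
          have := Finset.le_card_sdiff P' P
          omega
        exact Finset.card_pos.1 this
      refine ⟨⋃₀ ↑(P \ P'), ?_, ?_, ?_⟩
      · obtain ⟨x, hx⟩ := hPne X0 (Finset.mem_sdiff.1 hX0).1
        exact ⟨x, Set.subset_sUnion_of_mem (by exact_mod_cast hX0) hx⟩
      · obtain ⟨y, hy⟩ : Y1.Nonempty := Finset.card_pos.1 (by omega)
        refine ⟨y, ?_⟩
        intro hyT
        obtain ⟨X, hXmem, hyX⟩ := hyT
        have hXP : X ∈ P \ P' := by exact_mod_cast hXmem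
        have : y ∈ W0 := hXsub X (Finset.mem_sdiff.1 hXP).1 hyX
        exact (hY1sub hy) this
      · intro x hx y hy
        obtain ⟨X, hXmem, hxX⟩ := hx
        have hXP : X ∈ P \ P' := by exact_mod_cast hXmem
        obtain ⟨hXinP, hXnotP'⟩ := Finset.mem_sdiff.1 hXP
        have hyuniv : y ∈ W0 ∪ ↑Y1 := by rw [hYuniv]; exact Set.mem_univ y
        rcases hyuniv with hyW0 | hyY1
        · -- y is in some part X' which must be in P'
          have : y ∈ ⋃₀ ↑P := by rw [hPU]; exact hyW0
          obtain ⟨X', hX'mem, hyX'⟩ := this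
          have hX'P : X' ∈ P := by exact_mod_cast hX'mem
          have hX'ne : X ≠ X' := by
            intro h
            exact hy ⟨X, hXmem, h ▸ hyX'⟩
          exact hPJ X hXinP X' hX'P hX'ne x hxX y hyX'
        · -- y ∈ Y1 and X ∉ P' so y has no non-neighbor in X
          have hXnott : X ∉ t y := by
            intro hmem
            exact hXnotP' (Finset.mem_biUnion.2 ⟨y, hyY1, hmem⟩)
          rw [ht] at hXnott
          simp only [Finset.mem_filter, not_and, not_exists] at hXnott
          have := hXnott hXinP
          push_neg at this
          exact (this x hxX).symm
    · -- the contradiction construction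
      exfalso
      have hcnnlt : cnn G (W0 ∪ ↑Y1) < r := hcrit.2 _ (Set.subset_univ _) hYuniv
      obtain ⟨φ⟩ := colorable_of_cnn_le (show cnn G (W0 ∪ ↑Y1) ≤ r - 1 by omega)
      -- flatten the SDR
      set g : V → Set V := fun v => if h : v ∈ Gf then fSDR ⟨v, h⟩ else ∅ with hg
      have hgmem0 : ∀ v (h : v ∈ Gf), g v = fSDR ⟨v, h⟩ := by
        intro v h
        simp only [hg, dif_pos h]
      have hGfiff : ∀ {v}, v ∈ Gf ↔ v ∈ W0ᶜ \ ↑Y1 := by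
        intro v
        rw [hGf, Finset.mem_sdiff]
        constructor
        · rintro ⟨h1, h2⟩
          exact ⟨hmemZf.1 h1, fun hc => h2 (by exact_mod_cast hc)⟩
        · rintro ⟨h1, h2⟩
          exact ⟨hmemZf.2 h1, fun hc => h2 (by exact_mod_cast hc)⟩
      have hgprop : ∀ v ∈ (W0ᶜ \ ↑Y1 : Set V), g v ∈ P ∧ g v ∉ P' ∧
          ∃ x ∈ g v, ¬ G.Adj v x := by
        intro v hv
        have hvGf : v ∈ Gf := hGfiff.2 hv
        have := hfmem ⟨v, hvGf⟩
        rw [Finset.mem_sdiff] at this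
        obtain ⟨h1, h2⟩ := this
        rw [ht] at h1
        rw [Finset.mem_filter] at h1
        rw [hgmem0 v hvGf]
        exact ⟨h1.1, h2, h1.2⟩
      set xw : V → V := fun v => if h : ∃ x ∈ g v, ¬ G.Adj v x then h.choose else v with hxw
      have hxwprop : ∀ v ∈ (W0ᶜ \ ↑Y1 : Set V), xw v ∈ g v ∧ ¬ G.Adj v (xw v) := by
        intro v hv
        have h := (hgprop v hv).2.2
        simp only [hxw, dif_pos h]
        exact h.choose_spec
      have hcolorable : G.Colorable (r - 1) := by
        refine assembly (by omega) P lv hPJ hPU hPcrit hPsum hPlv (↑Y1) ?_ P' ?_ φ g xw ?_ ?_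
        · intro y hy
          exact hY1sub hy
        · intro y hy X hXP hex
          refine Finset.mem_biUnion.2 ⟨y, by exact_mod_cast hy, ?_⟩
          rw [ht]
          exact Finset.mem_filter.2 ⟨hXP, hex⟩
        · intro z1 hz1 z2 hz2 hEq
          have h1 : z1 ∈ Gf := hGfiff.2 hz1
          have h2 : z2 ∈ Gf := hGfiff.2 hz2
          rw [hgmem0 z1 h1, hgmem0 z2 h2] at hEq
          have := hfinj hEq
          exact congrArg Subtype.val this
        · intro z hz
          exact ⟨(hgprop z hz).1, (hgprop z hz).2.1, (hxwprop z hz).1, (hxwprop z hz).2⟩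
      have : cnn G Set.univ ≤ r - 1 := by
        refine cnn_le_of_colorable ?_
        exact (Colorable.of_hom (induceUnivIso G).toHom hcolorable)
      omega

end Main


/-- Gallai: every `r`-critical graph on at most `2r - 2` vertices is the join of two smaller
critical graphs. -/
theorem gallai_small_critical (r : ℕ) (hr : 1 ≤ r) (V : Type) [Fintype V]
    (G : SimpleGraph V) (hG : IsCritical r G) (hcard : Fintype.card V ≤ 2 * r - 2) :
    ∃ (a b : ℕ), 1 ≤ a ∧ 1 ≤ b ∧ a + b = r ∧
      ∃ (α β : Type) (A : SimpleGraph α) (B : SimpleGraph β),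
        IsCritical a A ∧ IsCritical b B ∧ Nonempty (G ≃g graphJoin A B) := by
  classical
  -- r = 1 is impossible
  have hr2 : 2 ≤ r := by
    rcases Nat.lt_or_ge r 2 with h | h
    · exfalso
      have hr1 : r = 1 := by omega
      have hcard0 : Fintype.card V = 0 := by omega
      haveI : IsEmpty V := Fintype.card_eq_zero_iff.1 hcard0
      have h0 := hG.1
      rw [SimpleGraph.chromaticNumber_eq_zero_of_isEmpty (G := G), hr1] at h0
      exact absurd h0 (by norm_num)
    · exact h
  obtain ⟨T, hTne, hTcne, hTJ⟩ := split_theorem (Fintype.card V) V G r le_rfl hr2 hG hcard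
  have hcrit : CritOn G Set.univ r := isCritical_iff_critOn_univ.1 hG
  have hJ : ∀ x ∈ T, ∀ y ∈ Tᶜ, G.Adj x y := hTJ
  obtain ⟨hcrit1, hcrit2, hsum, ha1, hb1⟩ :=
    hcrit.split (by omega) (Set.union_compl_self T) disjoint_compl_right hTne hTcne hJ
  refine ⟨cnn G T, cnn G Tᶜ, ha1, hb1, hsum, ↥T, ↥Tᶜ, G.induce T, G.induce Tᶜ,
    isCritical_induce_iff.2 hcrit1, isCritical_induce_iff.2 hcrit2, ?_⟩
  -- the isomorphism
  refine ⟨?_⟩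
  refine ⟨(Equiv.Set.sumCompl T).symm, ?_⟩
  intro a b
  by_cases haT : a ∈ T <;> by_cases hbT : b ∈ T
  · rw [Equiv.Set.sumCompl_symm_apply_of_mem haT, Equiv.Set.sumCompl_symm_apply_of_mem hbT]
    exact Iff.rfl
  · rw [Equiv.Set.sumCompl_symm_apply_of_mem haT, Equiv.Set.sumCompl_symm_apply_of_notMem hbT]
    simp only [graphJoin]
    constructor
    · intro _; exact hJ a haT b hbT
    · intro _; trivial
  · rw [Equiv.Set.sumCompl_symm_apply_of_notMem haT, Equiv.Set.sumCompl_symm_apply_of_mem hbT]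
    simp only [graphJoin]
    constructor
    · intro _; exact (hJ b hbT a haT).symm
    · intro _; trivial
  · rw [Equiv.Set.sumCompl_symm_apply_of_notMem haT, Equiv.Set.sumCompl_symm_apply_of_notMem hbT]
    exact Iff.rfl
end
end

section
/- For every forest F and every integer t ≥ 2: every graph G that is K_t-Ramsey contains at least as many (unlabeled) copies of F as the complete graph on r(K_t) vertices does. In other words, the complete graph K_{r(K_t)} minimizes the number of copies of F among all K_t-Ramsey graphs, so r_F(K_t) equals the number of copies of F in K_{r(K_t)}. -/
/-- The number of (unlabeled) copies of `F` in `G`: the number of subgraphs of `G`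
isomorphic to `F`. -/
noncomputable def copyCount {α V : Type*} (F : SimpleGraph α) (G : SimpleGraph V) : ℕ :=
  Nat.card {H : G.Subgraph // Nonempty (H.coe ≃g F)}


open Finset

/-- two-color Ramsey property, asymmetric. -/
def Ram (s t n : ℕ) : Prop :=
  ∀ (V : Type) [Fintype V] [DecidableEq V], n ≤ Fintype.card V →
    ∀ c : Sym2 V → Bool,
      (∃ S : Finset V, S.card = s ∧ ∀ u ∈ S, ∀ v ∈ S, u ≠ v → c s(u, v) = true) ∨
      (∃ S : Finset V, S.card = t ∧ ∀ u ∈ S, ∀ v ∈ S, u ≠ v → c s(u, v) = false)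

lemma clique_image {V : Type} [DecidableEq V] {A : Finset V} {c : Sym2 V → Bool} {b : Bool}
    (S' : Finset {x // x ∈ A})
    (h : ∀ u ∈ S', ∀ w ∈ S', u ≠ w → c (s(u, w).map Subtype.val) = b) :
    ∃ S : Finset V, S.card = S'.card ∧ (∀ x ∈ S, x ∈ A) ∧
      ∀ u ∈ S, ∀ w ∈ S, u ≠ w → c s(u, w) = b := by
  refine ⟨S'.image Subtype.val, Finset.card_image_of_injective _ Subtype.val_injective, ?_, ?_⟩
  · intro x hx
    rcases Finset.mem_image.1 hx with ⟨u, _, rfl⟩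
    exact u.2
  · intro u hu w hw huw
    rcases Finset.mem_image.1 hu with ⟨u', hu', rfl⟩
    rcases Finset.mem_image.1 hw with ⟨w', hw', rfl⟩
    have := h u' hu' w' hw' (fun he => huw (by rw [he]))
    simpa [Sym2.map_pair_eq] using this

lemma ram_exists : ∀ (k s t : ℕ), s + t ≤ k → ∃ n, Ram s t n := by
  intro k
  induction k with
  | zero =>
    intro s t hst
    refine ⟨0, ?_⟩
    intro V _ _ _ c
    left
    exact ⟨∅, by simp; omega, by simp⟩
  | succ k ih =>
    intro s t hst
    match s, t with
    | 0, t =>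
      exact ⟨0, fun V _ _ _ c => Or.inl ⟨∅, by simp, by simp⟩⟩
    | s+1, 0 =>
      exact ⟨0, fun V _ _ _ c => Or.inr ⟨∅, by simp, by simp⟩⟩
    | s+1, t+1 =>
      obtain ⟨n₁, h₁⟩ := ih s (t + 1) (by omega)
      obtain ⟨n₂, h₂⟩ := ih (s + 1) t (by omega)
      refine ⟨n₁ + n₂ + 1, ?_⟩
      intro V _ _ hcard c
      have hne : Nonempty V := by
        rw [← Fintype.card_pos_iff]; omega
      obtain ⟨v⟩ := hne
      set A : Finset V := univ.filter (fun u => u ≠ v ∧ c s(v, u) = true) with hA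
      set B : Finset V := univ.filter (fun u => u ≠ v ∧ c s(v, u) = false) with hB
      have hAB : A.card + B.card + 1 = Fintype.card V := by
        have hdisj : Disjoint A B := by
          rw [Finset.disjoint_left]
          intro x hx hx'
          rw [hA, Finset.mem_filter] at hx
          rw [hB, Finset.mem_filter] at hx'
          rw [hx.2.2] at hx'
          exact absurd hx'.2.2 (by simp)
        have hunion : A ∪ B = univ.erase v := by
          ext x
          simp only [hA, hB, Finset.mem_union, Finset.mem_filter, Finset.mem_univ, true_and,
            Finset.mem_erase]
          rcases Bool.eq_false_or_eq_true (c s(v, x)) with h | h <;> tauto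
        have := Finset.card_union_of_disjoint hdisj
        rw [hunion, Finset.card_erase_of_mem (Finset.mem_univ v), Finset.card_univ] at this
        have : 1 ≤ Fintype.card V := by omega
        omega
      have hcases : n₁ ≤ A.card ∨ n₂ ≤ B.card := by omega
      rcases hcases with hc1 | hc2
      · have := h₁ {x // x ∈ A} (by simpa [Fintype.card_coe] using hc1)
          (fun e => c (e.map Subtype.val))
        rcases this with ⟨S', hS'card, hS'⟩ | ⟨S', hS'card, hS'⟩
        · -- red clique of size s in A, add v
          obtain ⟨S, hcardS, hSA, hmono⟩ := clique_image S' hS'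
          refine Or.inl ⟨insert v S, ?_, ?_⟩
          · rw [Finset.card_insert_of_notMem (fun hvS => ?_), hcardS, hS'card]
            have := hSA v hvS
            rw [hA, Finset.mem_filter] at this
            exact this.2.1 rfl
          · intro u hu w hw huw
            rcases Finset.mem_insert.1 hu with rfl | hu' <;>
              rcases Finset.mem_insert.1 hw with rfl | hw'
            · exact absurd rfl huw
            · have := hSA w hw'
              rw [hA, Finset.mem_filter] at this
              exact this.2.2
            · have := hSA u hu'
              rw [hA, Finset.mem_filter] at this
              rw [Sym2.eq_swap]
              exact this.2.2
            · exact hmono u hu' w hw' huw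
        · obtain ⟨S, hcardS, _, hmono⟩ := clique_image S' hS'
          exact Or.inr ⟨S, by rw [hcardS, hS'card], hmono⟩
      · have := h₂ {x // x ∈ B} (by simpa [Fintype.card_coe] using hc2)
          (fun e => c (e.map Subtype.val))
        rcases this with ⟨S', hS'card, hS'⟩ | ⟨S', hS'card, hS'⟩
        · obtain ⟨S, hcardS, _, hmono⟩ := clique_image S' hS'
          exact Or.inl ⟨S, by rw [hcardS, hS'card], hmono⟩
        · obtain ⟨S, hcardS, hSB, hmono⟩ := clique_image S' hS'
          refine Or.inr ⟨insert v S, ?_, ?_⟩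
          · rw [Finset.card_insert_of_notMem (fun hvS => ?_), hcardS, hS'card]
            have := hSB v hvS
            rw [hB, Finset.mem_filter] at this
            exact this.2.1 rfl
          · intro u hu w hw huw
            rcases Finset.mem_insert.1 hu with rfl | hu' <;>
              rcases Finset.mem_insert.1 hw with rfl | hw'
            · exact absurd rfl huw
            · have := hSB w hw'
              rw [hB, Finset.mem_filter] at this
              exact this.2.2
            · have := hSB u hu'
              rw [hB, Finset.mem_filter] at this
              rw [Sym2.eq_swap]
              exact this.2.2
            · exact hmono u hu' w hw' huw

lemma ramseySet_nonempty (t : ℕ) :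
    {n : ℕ | IsRamsey t (⊤ : SimpleGraph (Fin n))}.Nonempty := by
  obtain ⟨n, hn⟩ := ram_exists (t + t) t t le_rfl
  refine ⟨n, ?_⟩
  intro c
  rcases hn (Fin n) (by simp) c with ⟨S, hc, hm⟩ | ⟨S, hc, hm⟩
  · exact ⟨S, true, hc, fun u hu v hv huv => ⟨huv, hm u hu v hv huv⟩⟩
  · exact ⟨S, false, hc, fun u hu v hv huv => ⟨huv, hm u hu v hv huv⟩⟩

lemma ramsey_top (t : ℕ) : IsRamsey t (⊤ : SimpleGraph (Fin (ramseyNumber t))) :=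
  Nat.sInf_mem (ramseySet_nonempty t)

lemma le_ramseyNumber (t : ℕ) (ht : 2 ≤ t) : t ≤ ramseyNumber t := by
  have h := ramsey_top t
  obtain ⟨S, b, hc, -⟩ := h (fun _ => true)
  calc t = S.card := hc.symm
    _ ≤ Fintype.card (Fin (ramseyNumber t)) := Finset.card_le_univ S
    _ = ramseyNumber t := by simp

/-- a graph with a proper coloring with `m` colors which is `t`-Ramsey forces `K_m` Ramsey -/
lemma ramsey_of_coloring {V : Type} (t m : ℕ) (G : SimpleGraph V) (hG : IsRamsey t G)
    (φ : V → Fin m) (hφ : ∀ u v, G.Adj u v → φ u ≠ φ v) :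
    IsRamsey t (⊤ : SimpleGraph (Fin m)) := by
  intro c
  obtain ⟨S, b, hc, hm⟩ := hG (fun e => c (e.map φ))
  have hinj : Set.InjOn φ S := by
    intro u hu v hv huv
    by_contra hne
    exact hφ u v (hm u hu v hv hne).1 huv
  refine ⟨S.image φ, b, by rw [Finset.card_image_of_injOn hinj, hc], ?_⟩
  intro x hx y hy hxy
  rcases Finset.mem_image.1 hx with ⟨u, hu, rfl⟩
  rcases Finset.mem_image.1 hy with ⟨v, hv, rfl⟩
  have huv : u ≠ v := fun h => hxy (by rw [h])
  refine ⟨hxy, ?_⟩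
  have := (hm u hu v hv huv).2
  simpa [Sym2.map_pair_eq] using this

/-- a Ramsey graph has no proper coloring with fewer than `ramseyNumber t` colors -/
lemma no_small_coloring {V : Type} (t m : ℕ) (G : SimpleGraph V) (hG : IsRamsey t G)
    (hm : m < ramseyNumber t) (φ : V → Fin m) :
    ¬ (∀ u v, G.Adj u v → φ u ≠ φ v) := by
  intro hφ
  have := ramsey_of_coloring t m G hG φ hφ
  have : ramseyNumber t ≤ m := Nat.sInf_le this
  omega


open Finset

lemma dichotomy {V : Type} [Fintype V] [DecidableEq V] (G : SimpleGraph V)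
    [DecidableRel G.Adj] (m : ℕ) (hm : 1 ≤ m) (W : Finset V) :
    (∃ φ : V → Fin m, ∀ u ∈ W, ∀ v ∈ W, G.Adj u v → φ u ≠ φ v) ∨
    (∃ W' : Finset V, W'.Nonempty ∧ ∀ w ∈ W', m ≤ (W'.filter (G.Adj w)).card) := by
  classical
  induction W using Finset.strongInductionOn with
  | _ W ih =>
  by_cases hW : W = ∅
  · subst hW
    exact Or.inl ⟨fun _ => ⟨0, hm⟩, by simp⟩
  by_cases hall : ∀ v ∈ W, m ≤ (W.filter (G.Adj v)).card
  · exact Or.inr ⟨W, Finset.nonempty_of_ne_empty hW, hall⟩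
  push_neg at hall
  obtain ⟨v, hv, hdeg⟩ := hall
  rcases ih (W.erase v) (Finset.erase_ssubset hv) with ⟨φ, hφ⟩ | hright
  · left
    set N : Finset (Fin m) := ((W.erase v).filter (G.Adj v)).image φ with hN
    have hNcard : N.card < m := by
      calc N.card ≤ ((W.erase v).filter (G.Adj v)).card := Finset.card_image_le
        _ ≤ (W.filter (G.Adj v)).card :=
            Finset.card_le_card (Finset.filter_subset_filter _ (Finset.erase_subset _ _))
        _ < m := hdeg
    have hex : ∃ c₀, c₀ ∉ N := by
      by_contra h
      push_neg at h
      have : N = Finset.univ := Finset.eq_univ_iff_forall.2 h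
      rw [this, Finset.card_univ, Fintype.card_fin] at hNcard
      omega
    obtain ⟨c₀, hc₀⟩ := hex
    refine ⟨Function.update φ v c₀, ?_⟩
    intro u hu w hw hadj
    rcases eq_or_ne u v with huv | hune <;> rcases eq_or_ne w v with hwv | hwne
    · rw [huv, hwv] at hadj
      exact absurd hadj (G.loopless.irrefl v)
    · rw [huv, Function.update_self, Function.update_of_ne hwne]
      intro h
      apply hc₀
      rw [hN, h]
      rw [huv] at hadj
      exact Finset.mem_image_of_mem φ
        (Finset.mem_filter.2 ⟨Finset.mem_erase.2 ⟨hwne, hw⟩, hadj⟩)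
    · rw [hwv, Function.update_self, Function.update_of_ne hune]
      intro h
      apply hc₀
      rw [hN, ← h]
      rw [hwv] at hadj
      exact Finset.mem_image_of_mem φ
        (Finset.mem_filter.2 ⟨Finset.mem_erase.2 ⟨hune, hu⟩, hadj.symm⟩)
    · rw [Function.update_of_ne hune, Function.update_of_ne hwne]
      exact hφ u (Finset.mem_erase.2 ⟨hune, hu⟩) w (Finset.mem_erase.2 ⟨hwne, hw⟩) hadj
  · exact Or.inr hright


section lowdeg
open Finset SimpleGraph

lemma exists_low_degree {α : Type} [Fintype α] [DecidableEq α] (F : SimpleGraph α)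
    [DecidableRel F.Adj] (hF : F.IsAcyclic) (s : Finset α) (hs : s.Nonempty) :
    ∃ a ∈ s, (s.filter (F.Adj a)).card ≤ 1 := by
  by_contra hcon
  push_neg at hcon
  have claim : ∀ m : ℕ, ∃ (u v : α) (p : F.Walk u v), p.IsPath ∧ p.length = m ∧
      ∀ x ∈ p.support, x ∈ s := by
    intro m
    induction m with
    | zero =>
      obtain ⟨a, ha⟩ := hs
      exact ⟨a, a, Walk.nil, Walk.IsPath.nil, rfl, by simpa using ha⟩
    | succ m ihm =>
      obtain ⟨u, v, p, hp, hlen, hsub⟩ := ihm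
      have hu : u ∈ s := hsub u p.start_mem_support
      have h2 : 1 < (s.filter (F.Adj u)).card := hcon u hu
      obtain ⟨w₁, hw₁, w₂, hw₂, hww⟩ := Finset.one_lt_card.mp h2
      set x := p.getVert 1 with hx
      set w := if w₁ = x then w₂ else w₁ with hwdef
      have hwfil : w ∈ s.filter (F.Adj u) := by
        rw [hwdef]; split <;> assumption
      have hwx : w ≠ x := by
        rw [hwdef]; split
        · rename_i h; rw [← h]; exact fun hh => hww hh.symm
        · assumption
      have hws : w ∈ s := (Finset.mem_filter.mp hwfil).1
      have hadj : F.Adj u w := (Finset.mem_filter.mp hwfil).2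
      by_cases hsup : w ∈ p.support
      · exfalso
        have hwu : u ≠ w := hadj.ne
        have htp : (p.takeUntil w hsup).IsPath := hp.takeUntil hsup
        have hpe : (Walk.cons hadj Walk.nil : F.Walk u w).IsPath := by
          rw [Walk.cons_isPath_iff]
          exact ⟨Walk.IsPath.nil, by simpa using hwu⟩
        have huniq := isAcyclic_iff_path_unique.mp hF
          ⟨p.takeUntil w hsup, htp⟩ ⟨Walk.cons hadj Walk.nil, hpe⟩
        have heq : p.takeUntil w hsup = Walk.cons hadj Walk.nil := by
          exact congrArg Subtype.val huniq
        have hspec := p.take_spec hsup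
        rw [heq, Walk.cons_append, Walk.nil_append] at hspec
        have : p.getVert 1 = w := by
          rw [← hspec, Walk.getVert_cons_succ, Walk.getVert_zero]
        exact hwx (hx ▸ this.symm)
      · refine ⟨w, v, Walk.cons hadj.symm p, ?_, by simp [hlen], ?_⟩
        · rw [Walk.cons_isPath_iff]
          exact ⟨hp, hsup⟩
        · intro y hy
          rw [Walk.support_cons, List.mem_cons] at hy
          rcases hy with rfl | hy
          · exact hws
          · exact hsub y hy
  obtain ⟨u, v, p, hp, hlen, hsub⟩ := claim s.card
  have hnodup := hp.support_nodup
  have hcard : p.support.toFinset.card = p.support.length := List.toFinset_card_of_nodup hnodup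
  have hsub' : p.support.toFinset ⊆ s := fun y hy => hsub y (List.mem_toFinset.mp hy)
  have := Finset.card_le_card hsub'
  rw [hcard, Walk.length_support, hlen] at this
  omega

end lowdeg

variable {α V : Type} [Fintype α] [Fintype V] [DecidableEq α] [DecidableEq V]

/-- partial embeddings of `F` into `G` defined on `s`, landing in `W`, junk value `v₀`
outside `s`. -/
noncomputable def embSet (F : SimpleGraph α) (G : SimpleGraph V) (W : Finset V) (v₀ : V)
    (s : Finset α) : Finset (α → V) :=
  @Finset.filter _ (fun f => (∀ a ∈ s, f a ∈ W) ∧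
      (∀ a₁ ∈ s, ∀ a₂ ∈ s, f a₁ = f a₂ → a₁ = a₂) ∧
      (∀ a₁ ∈ s, ∀ a₂ ∈ s, F.Adj a₁ a₂ → G.Adj (f a₁) (f a₂)) ∧
      (∀ a ∉ s, f a = v₀)) (Classical.decPred _) Finset.univ

lemma mem_embSet {F : SimpleGraph α} {G : SimpleGraph V} {W : Finset V} {v₀ : V}
    {s : Finset α} {f : α → V} :
    f ∈ embSet F G W v₀ s ↔ (∀ a ∈ s, f a ∈ W) ∧
      (∀ a₁ ∈ s, ∀ a₂ ∈ s, f a₁ = f a₂ → a₁ = a₂) ∧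
      (∀ a₁ ∈ s, ∀ a₂ ∈ s, F.Adj a₁ a₂ → G.Adj (f a₁) (f a₂)) ∧
      (∀ a ∉ s, f a = v₀) := by
  classical
  simp only [embSet, Finset.mem_filter, Finset.mem_univ, true_and]

lemma card_embSet_ge (F : SimpleGraph α) [DecidableRel F.Adj] (hF : F.IsAcyclic)
    (G : SimpleGraph V) [DecidableRel G.Adj]
    (W : Finset V) (v₀ : V) (hv₀ : v₀ ∈ W) (n : ℕ)
    (hdeg : ∀ w ∈ W, n ≤ (W.filter (G.Adj w)).card + 1) :
    ∀ s : Finset α, n.descFactorial s.card ≤ (embSet F G W v₀ s).card := by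
  classical
  have hWcard : n ≤ W.card := by
    have h1 := hdeg v₀ hv₀
    have h2 : (W.filter (G.Adj v₀)).card ≤ (W.erase v₀).card := by
      apply Finset.card_le_card
      intro x hx
      rw [Finset.mem_filter] at hx
      exact Finset.mem_erase.2 ⟨hx.2.ne', hx.1⟩
    have h3 := Finset.card_erase_of_mem hv₀
    have h4 : 1 ≤ W.card := Finset.card_pos.2 ⟨v₀, hv₀⟩
    omega
  intro s
  induction s using Finset.strongInductionOn with
  | _ s ih =>
  rcases Finset.eq_empty_or_nonempty s with rfl | hs
  · simp only [Finset.card_empty, Nat.descFactorial_zero]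
    rw [Nat.one_le_iff_ne_zero, ← Nat.pos_iff_ne_zero, Finset.card_pos]
    refine ⟨fun _ => v₀, mem_embSet.2 ⟨by simp, by simp, by simp, by simp⟩⟩
  -- pick a vertex `a ∈ s` with at most one `F`-neighbour in `s`
  obtain ⟨a, ha, hdeg1⟩ := exists_low_degree F hF s hs
  set s' := s.erase a with hs'
  have hss' : s' ⊂ s := Finset.erase_ssubset ha
  have hcard : s.card = s'.card + 1 := by
    rw [hs', Finset.card_erase_of_mem ha]
    have : 1 ≤ s.card := Finset.card_pos.2 hs
    omega
  have ihs' := ih s' hss'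
  -- the restriction map
  set r : (α → V) → (α → V) := fun f => Function.update f a v₀ with hr
  have hmaps : ∀ f ∈ embSet F G W v₀ s, r f ∈ embSet F G W v₀ s' := by
    intro f hf
    rw [mem_embSet] at hf ⊢
    obtain ⟨h1, h2, h3, h4⟩ := hf
    have hne : ∀ b ∈ s', b ≠ a := fun b hb => (Finset.mem_erase.1 hb).1
    have hmem : ∀ b ∈ s', b ∈ s := fun b hb => (Finset.mem_erase.1 hb).2
    refine ⟨?_, ?_, ?_, ?_⟩
    · intro b hb; rw [hr]; simp only []
      rw [Function.update_of_ne (hne b hb)]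
      exact h1 b (hmem b hb)
    · intro b₁ hb₁ b₂ hb₂ hbe
      rw [hr] at hbe; simp only [] at hbe
      rw [Function.update_of_ne (hne b₁ hb₁), Function.update_of_ne (hne b₂ hb₂)] at hbe
      exact h2 b₁ (hmem b₁ hb₁) b₂ (hmem b₂ hb₂) hbe
    · intro b₁ hb₁ b₂ hb₂ hadj
      rw [hr]; simp only []
      rw [Function.update_of_ne (hne b₁ hb₁), Function.update_of_ne (hne b₂ hb₂)]
      exact h3 b₁ (hmem b₁ hb₁) b₂ (hmem b₂ hb₂) hadj
    · intro b hb
      rcases eq_or_ne b a with rfl | hba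
      · rw [hr]; simp
      · rw [hr]; simp only []
        rw [Function.update_of_ne hba]
        exact h4 b (fun hbs => hb (Finset.mem_erase.2 ⟨hba, hbs⟩))
  -- key: each fiber has at least `n - s'.card` elements
  have key : ∀ g ∈ embSet F G W v₀ s',
      n - s'.card ≤ ((embSet F G W v₀ s).filter (fun f => r f = g)).card := by
    intro g hg
    rw [mem_embSet] at hg
    obtain ⟨hg1, hg2, hg3, hg4⟩ := hg
    have hga : g a = v₀ := hg4 a (Finset.notMem_erase a s)
    -- the candidate set for the image of `a`
    have hsub : ∀ x ∈ W, x ∉ s'.image g → (∀ b ∈ s', F.Adj a b → G.Adj x (g b)) →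
        Function.update g a x ∈ embSet F G W v₀ s ∧ r (Function.update g a x) = g := by
      intro x hxW hxim hxadj
      have hupd : ∀ b ∈ s', Function.update g a x b = g b := fun b hb =>
        Function.update_of_ne (Finset.mem_erase.1 hb).1 _ _
      have hupds : ∀ b ∈ s, b ≠ a → Function.update g a x b = g b := fun b hb hba =>
        Function.update_of_ne hba _ _
      constructor
      · rw [mem_embSet]
        refine ⟨?_, ?_, ?_, ?_⟩
        · intro b hb
          rcases eq_or_ne b a with rfl | hba
          · rw [Function.update_self]; exact hxW
          · rw [hupds b hb hba]
            exact hg1 b (Finset.mem_erase.2 ⟨hba, hb⟩)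
        · intro b₁ hb₁ b₂ hb₂ hbe
          rcases eq_or_ne b₁ a with h1a | h1a <;> rcases eq_or_ne b₂ a with h2a | h2a
          · rw [h1a, h2a]
          · exfalso
            rw [h1a, Function.update_self, hupds b₂ hb₂ h2a] at hbe
            exact hxim (Finset.mem_image.2 ⟨b₂, Finset.mem_erase.2 ⟨h2a, hb₂⟩, hbe.symm⟩)
          · exfalso
            rw [h2a, Function.update_self, hupds b₁ hb₁ h1a] at hbe
            exact hxim (Finset.mem_image.2 ⟨b₁, Finset.mem_erase.2 ⟨h1a, hb₁⟩, hbe⟩)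
          · rw [hupds b₁ hb₁ h1a, hupds b₂ hb₂ h2a] at hbe
            exact hg2 b₁ (Finset.mem_erase.2 ⟨h1a, hb₁⟩) b₂ (Finset.mem_erase.2 ⟨h2a, hb₂⟩) hbe
        · intro b₁ hb₁ b₂ hb₂ hadj
          rcases eq_or_ne b₁ a with h1a | h1a <;> rcases eq_or_ne b₂ a with h2a | h2a
          · exfalso
            rw [h1a, h2a] at hadj
            exact absurd hadj (F.loopless.irrefl a)
          · rw [h1a, Function.update_self, hupds b₂ hb₂ h2a]
            rw [h1a] at hadj
            exact hxadj b₂ (Finset.mem_erase.2 ⟨h2a, hb₂⟩) hadj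
          · rw [h2a, Function.update_self, hupds b₁ hb₁ h1a]
            rw [h2a] at hadj
            exact (hxadj b₁ (Finset.mem_erase.2 ⟨h1a, hb₁⟩) hadj.symm).symm
          · rw [hupds b₁ hb₁ h1a, hupds b₂ hb₂ h2a]
            exact hg3 b₁ (Finset.mem_erase.2 ⟨h1a, hb₁⟩) b₂ (Finset.mem_erase.2 ⟨h2a, hb₂⟩) hadj
        · intro b hb
          have hba : b ≠ a := fun h => hb (h ▸ ha)
          rw [Function.update_of_ne hba]
          exact hg4 b (fun hbs => hb ((Finset.mem_erase.1 hbs).2))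
      · rw [hr]
        funext y
        simp only []
        rcases eq_or_ne y a with rfl | hya
        · rw [Function.update_self, hga]
        · rw [Function.update_of_ne hya, Function.update_of_ne hya]
    -- now the two cases on the `F`-neighbour of `a` in `s'`
    have hfilsub : s'.filter (F.Adj a) ⊆ s.filter (F.Adj a) :=
      Finset.filter_subset_filter _ (Finset.erase_subset _ _)
    have hfil1 : (s'.filter (F.Adj a)).card ≤ 1 :=
      le_trans (Finset.card_le_card hfilsub) hdeg1
    have himcard : (s'.image g).card ≤ s'.card := Finset.card_image_le
    rcases Finset.eq_empty_or_nonempty (s'.filter (F.Adj a)) with hemp | ⟨b, hb⟩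
    · -- no neighbour: candidates are `W \ s'.image g`
      set cand := W \ s'.image g with hcand
      have hcc : n - s'.card ≤ cand.card := by
        have := Finset.le_card_sdiff (s'.image g) W
        rw [hcand]
        omega
      calc n - s'.card ≤ cand.card := hcc
        _ = (cand.image (fun x => Function.update g a x)).card := by
            rw [Finset.card_image_of_injOn]
            intro x₁ _ x₂ _ he
            have := congrFun he a
            simpa using this
        _ ≤ _ := by
            apply Finset.card_le_card
            intro f hf
            rcases Finset.mem_image.1 hf with ⟨x, hx, rfl⟩
            rw [hcand, Finset.mem_sdiff] at hx
            have := hsub x hx.1 hx.2 (fun b hb hadj => by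
              exfalso
              exact Finset.notMem_empty b (hemp ▸ Finset.mem_filter.2 ⟨hb, hadj⟩))
            exact Finset.mem_filter.2 ⟨this.1, this.2⟩
    · -- unique neighbour b
      have hbs' : b ∈ s' := (Finset.mem_filter.1 hb).1
      have hbadj : F.Adj a b := (Finset.mem_filter.1 hb).2
      have huniq : ∀ b' ∈ s'.filter (F.Adj a), b' = b := by
        intro b' hb'
        exact Finset.card_le_one.1 hfil1 b' hb' b hb
      have hgbW : g b ∈ W := hg1 b hbs'
      set X := W.filter (G.Adj (g b)) with hX
      have hXcard : n ≤ X.card + 1 := hdeg (g b) hgbW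
      set cand := X \ s'.image g with hcand
      have hgbX : g b ∉ X := by
        rw [hX, Finset.mem_filter]
        rintro ⟨-, habs⟩
        exact G.loopless.irrefl _ habs
      have hgbim : g b ∈ s'.image g := Finset.mem_image_of_mem g hbs'
      have hsets : cand = X \ (s'.image g).erase (g b) := by
        rw [hcand]
        ext x
        simp only [Finset.mem_sdiff, Finset.mem_erase]
        constructor
        · rintro ⟨hx1, hx2⟩
          exact ⟨hx1, fun hh => hx2 hh.2⟩
        · rintro ⟨hx1, hx2⟩
          refine ⟨hx1, fun hh => hx2 ⟨fun he => ?_, hh⟩⟩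
          rw [he] at hx1
          exact hgbX hx1
      have hcc : n - s'.card ≤ cand.card := by
        have h5 := Finset.le_card_sdiff ((s'.image g).erase (g b)) X
        have h6 := Finset.card_erase_of_mem hgbim
        have h7 : 1 ≤ (s'.image g).card := Finset.card_pos.2 ⟨g b, hgbim⟩
        have h8 : 1 ≤ s'.card := Finset.card_pos.2 ⟨b, hbs'⟩
        rw [hsets]
        omega
      calc n - s'.card ≤ cand.card := hcc
        _ = (cand.image (fun x => Function.update g a x)).card := by
            rw [Finset.card_image_of_injOn]
            intro x₁ _ x₂ _ he
            have := congrFun he a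
            simpa using this
        _ ≤ _ := by
            apply Finset.card_le_card
            intro f hf
            rcases Finset.mem_image.1 hf with ⟨x, hx, rfl⟩
            rw [hcand, Finset.mem_sdiff] at hx
            have hxX := hx.1
            rw [hX, Finset.mem_filter] at hxX
            have := hsub x hxX.1 hx.2 (fun b' hb' hadj => by
              have : b' = b := huniq b' (Finset.mem_filter.2 ⟨hb', hadj⟩)
              rw [this]
              exact hxX.2.symm)
            exact Finset.mem_filter.2 ⟨this.1, this.2⟩
  -- put it together
  have hfib := Finset.card_eq_sum_card_fiberwise hmaps
  have hsum : (embSet F G W v₀ s').card * (n - s'.card) ≤ (embSet F G W v₀ s).card := by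
    rw [hfib]
    calc (embSet F G W v₀ s').card * (n - s'.card)
        = ∑ _g ∈ embSet F G W v₀ s', (n - s'.card) := by
          rw [Finset.sum_const, smul_eq_mul]
      _ ≤ ∑ g ∈ embSet F G W v₀ s',
            ((embSet F G W v₀ s).filter (fun f => r f = g)).card :=
          Finset.sum_le_sum key
  rw [hcard, Nat.descFactorial_succ]
  calc (n - s'.card) * n.descFactorial s'.card
      ≤ (n - s'.card) * (embSet F G W v₀ s').card := Nat.mul_le_mul_left _ ihs'
    _ = (embSet F G W v₀ s').card * (n - s'.card) := Nat.mul_comm _ _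
    _ ≤ _ := hsum


open Finset


section counting

variable {α V : Type} [Fintype α] [Fintype V] (F : SimpleGraph α) (G : SimpleGraph V)

/-- type of (labelled) embeddings of `F` into `G`. -/
def EmbT : Type :=
  {f : α → V // Function.Injective f ∧ ∀ ⦃a b⦄, F.Adj a b → G.Adj (f a) (f b)}

instance : Finite (EmbT F G) := by
  unfold EmbT; infer_instance

instance finiteSubgraph : Finite G.Subgraph :=
  Finite.of_injective (fun H => (H.verts, H.Adj))
    (fun H₁ H₂ h =>
      SimpleGraph.Subgraph.ext (congrArg Prod.fst h) (congrArg Prod.snd h))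

instance : Finite (F ≃g F) :=
  Finite.of_injective (fun σ => (σ : α → α)) DFunLike.coe_injective

instance : Nonempty (F ≃g F) := ⟨SimpleGraph.Iso.refl⟩

variable {F G}

/-- the subgraph of `G` given by an embedding of `F`. -/
def embToSubgraph (f : EmbT F G) : G.Subgraph where
  verts := Set.range f.1
  Adj := fun x y => ∃ a b, F.Adj a b ∧ f.1 a = x ∧ f.1 b = y
  adj_sub := by rintro x y ⟨a, b, hab, rfl, rfl⟩; exact f.2.2 hab
  edge_vert := by rintro x y ⟨a, b, hab, rfl, -⟩; exact Set.mem_range_self a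
  symm := ⟨by rintro x y ⟨a, b, hab, rfl, rfl⟩; exact ⟨b, a, hab.symm, rfl, rfl⟩⟩

lemma embToSubgraph_adj (f : EmbT F G) {a b : α} (h : F.Adj a b) :
    (embToSubgraph f).Adj (f.1 a) (f.1 b) := ⟨a, b, h, rfl, rfl⟩

/-- the canonical iso from the image subgraph to `F`. -/
noncomputable def embIso (f : EmbT F G) : (embToSubgraph f).coe ≃g F := by
  refine ⟨(Equiv.ofInjective f.1 f.2.1).symm, ?_⟩
  intro x y
  have hx : f.1 ((Equiv.ofInjective f.1 f.2.1).symm x) = x.val := by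
    have := (Equiv.ofInjective f.1 f.2.1).apply_symm_apply x
    exact congrArg Subtype.val this
  have hy : f.1 ((Equiv.ofInjective f.1 f.2.1).symm y) = y.val := by
    have := (Equiv.ofInjective f.1 f.2.1).apply_symm_apply y
    exact congrArg Subtype.val this
  constructor
  · intro h
    exact ⟨_, _, h, hx, hy⟩
  · intro h
    rcases h with ⟨a, b, hab, ha, hb⟩
    have ha' : a = (Equiv.ofInjective f.1 f.2.1).symm x := f.2.1 (by rw [ha, hx])
    have hb' : b = (Equiv.ofInjective f.1 f.2.1).symm y := f.2.1 (by rw [hb, hy])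
    rwa [ha', hb'] at hab

noncomputable def embToCopy (f : EmbT F G) : {H : G.Subgraph // Nonempty (H.coe ≃g F)} :=
  ⟨embToSubgraph f, ⟨embIso f⟩⟩

lemma embToCopy_surj : Function.Surjective (embToCopy (F := F) (G := G)) := by
  rintro ⟨H, ⟨e⟩⟩
  have hinj : Function.Injective (fun a => (e.symm a : V)) :=
    Subtype.val_injective.comp e.symm.injective
  have hadj : ∀ ⦃a b⦄, F.Adj a b → G.Adj ((e.symm a : V)) ((e.symm b : V)) := by
    intro a b hab
    have : H.coe.Adj (e.symm a) (e.symm b) := e.symm.map_adj_iff.2 hab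
    exact H.adj_sub this
  refine ⟨⟨fun a => (e.symm a : V), hinj, hadj⟩, ?_⟩
  apply Subtype.ext
  apply SimpleGraph.Subgraph.ext
  · ext x
    simp only [embToCopy, embToSubgraph, Set.mem_range]
    constructor
    · rintro ⟨a, rfl⟩
      exact (e.symm a).2
    · intro hx
      exact ⟨e ⟨x, hx⟩, by simp⟩
  · ext x y
    simp only [embToCopy, embToSubgraph]
    constructor
    · rintro ⟨a, b, hab, rfl, rfl⟩
      have : H.coe.Adj (e.symm a) (e.symm b) := e.symm.map_adj_iff.2 hab
      exact this
    · intro hxy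
      have hx : x ∈ H.verts := H.edge_vert hxy
      have hy : y ∈ H.verts := H.edge_vert hxy.symm
      refine ⟨e ⟨x, hx⟩, e ⟨y, hy⟩, ?_, by simp, by simp⟩
      have : H.coe.Adj ⟨x, hx⟩ ⟨y, hy⟩ := hxy
      exact e.map_adj_iff.2 this

end counting

section counting2

variable {α V : Type} [Fintype α] [Fintype V] {F : SimpleGraph α} {G : SimpleGraph V}

lemma embToCopy_comp (f : EmbT F G) (σ : F ≃g F) :
    embToCopy (⟨f.1 ∘ σ, f.2.1.comp σ.injective,
      fun a b hab => f.2.2 (σ.map_adj_iff.2 hab)⟩ : EmbT F G) = embToCopy f := by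
  apply Subtype.ext
  apply SimpleGraph.Subgraph.ext
  · simp only [embToCopy, embToSubgraph]
    ext x
    simp only [Set.mem_range, Function.comp_apply]
    constructor
    · rintro ⟨a, rfl⟩; exact ⟨σ a, rfl⟩
    · rintro ⟨a, rfl⟩; exact ⟨σ.symm a, by simp⟩
  · simp only [embToCopy, embToSubgraph]
    ext x y
    constructor
    · rintro ⟨a, b, hab, rfl, rfl⟩
      exact ⟨σ a, σ b, σ.map_adj_iff.2 hab, rfl, rfl⟩
    · rintro ⟨a, b, hab, rfl, rfl⟩
      refine ⟨σ.symm a, σ.symm b, ?_, by simp, by simp⟩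
      have := σ.symm.map_adj_iff.2 hab
      exact this

/-- each fiber of `embToCopy` is equivalent to the automorphism group of `F`. -/
noncomputable def fiberEquiv (c : {H : G.Subgraph // Nonempty (H.coe ≃g F)})
    (f₀ : EmbT F G) (hf₀ : embToCopy f₀ = c) :
    (F ≃g F) ≃ {f : EmbT F G // embToCopy f = c} := by
  classical
  refine Equiv.ofBijective (fun σ => ⟨⟨f₀.1 ∘ σ, f₀.2.1.comp σ.injective,
    fun a b hab => f₀.2.2 (σ.map_adj_iff.2 hab)⟩, by rw [embToCopy_comp f₀ σ, hf₀]⟩) ⟨?_, ?_⟩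
  · intro σ₁ σ₂ h
    have h' : f₀.1 ∘ σ₁ = f₀.1 ∘ σ₂ := congrArg (Subtype.val ∘ Subtype.val) h
    apply DFunLike.ext
    intro a
    exact f₀.2.1 (congrFun h' a)
  · rintro ⟨f, hf⟩
    have hsame : embToSubgraph f = embToSubgraph f₀ := by
      have : embToCopy f = embToCopy f₀ := by rw [hf, hf₀]
      exact congrArg Subtype.val this
    have hrange : Set.range f.1 = Set.range f₀.1 := by
      have := congrArg SimpleGraph.Subgraph.verts hsame
      simpa [embToSubgraph] using this
    have hmem : ∀ a, f.1 a ∈ Set.range f₀.1 := by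
      intro a; rw [← hrange]; exact Set.mem_range_self a
    set σ₀ : α → α := fun a => (Equiv.ofInjective f₀.1 f₀.2.1).symm ⟨f.1 a, hmem a⟩ with hσ₀
    have hval : ∀ a, f₀.1 (σ₀ a) = f.1 a := by
      intro a
      have := (Equiv.ofInjective f₀.1 f₀.2.1).apply_symm_apply ⟨f.1 a, hmem a⟩
      exact congrArg Subtype.val this
    have hσinj : Function.Injective σ₀ := by
      intro a b h
      apply f.2.1
      rw [← hval a, ← hval b, h]
    have hσbij : Function.Bijective σ₀ := (Finite.injective_iff_bijective).1 hσinj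
    -- σ₀ preserves adjacency in both directions
    have hfwd : ∀ {a b}, F.Adj a b → F.Adj (σ₀ a) (σ₀ b) := by
      intro a b hab
      have h1 : (embToSubgraph f).Adj (f.1 a) (f.1 b) := ⟨a, b, hab, rfl, rfl⟩
      rw [hsame] at h1
      rcases h1 with ⟨a', b', hab', ha', hb'⟩
      have ha'' : a' = σ₀ a := f₀.2.1 (by rw [ha', hval])
      have hb'' : b' = σ₀ b := f₀.2.1 (by rw [hb', hval])
      rwa [ha'', hb''] at hab'
    have hbwd : ∀ {a b}, F.Adj (σ₀ a) (σ₀ b) → F.Adj a b := by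
      intro a b hab
      have h1 : (embToSubgraph f₀).Adj (f₀.1 (σ₀ a)) (f₀.1 (σ₀ b)) :=
        ⟨σ₀ a, σ₀ b, hab, rfl, rfl⟩
      rw [hval, hval, ← hsame] at h1
      rcases h1 with ⟨a', b', hab', ha', hb'⟩
      have ha'' : a' = a := f.2.1 ha'
      have hb'' : b' = b := f.2.1 hb'
      rwa [ha'', hb''] at hab'
    refine ⟨⟨Equiv.ofBijective σ₀ hσbij, ?_⟩, ?_⟩
    · intro a b
      exact ⟨fun h => hbwd h, fun h => hfwd h⟩
    · apply Subtype.ext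
      apply Subtype.ext
      funext a
      exact hval a

lemma nat_card_embT (F : SimpleGraph α) (G : SimpleGraph V) :
    Nat.card (EmbT F G) = copyCount F G * Nat.card (F ≃g F) := by
  classical
  have h1 : Nat.card (EmbT F G) =
      Nat.card (Σ c : {H : G.Subgraph // Nonempty (H.coe ≃g F)},
        {f : EmbT F G // embToCopy f = c}) :=
    Nat.card_congr (Equiv.sigmaFiberEquiv (embToCopy (F := F) (G := G))).symm
  have h2 : ∀ c : {H : G.Subgraph // Nonempty (H.coe ≃g F)},
      Nonempty ((F ≃g F) ≃ {f : EmbT F G // embToCopy f = c}) := by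
    intro c
    obtain ⟨f₀, hf₀⟩ := embToCopy_surj c
    exact ⟨fiberEquiv c f₀ hf₀⟩
  have h3 : Nat.card (Σ c : {H : G.Subgraph // Nonempty (H.coe ≃g F)},
      {f : EmbT F G // embToCopy f = c}) =
      Nat.card ({H : G.Subgraph // Nonempty (H.coe ≃g F)} × (F ≃g F)) := by
    apply Nat.card_congr
    exact (Equiv.sigmaCongrRight (fun c => (h2 c).some.symm)).trans
      (Equiv.sigmaEquivProd _ _)
  rw [h1, h3, Nat.card_prod, copyCount]

end counting2

section final

variable {α V : Type} [Fintype α] [Fintype V] [DecidableEq α] [DecidableEq V]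

lemma nat_card_embT_top (F : SimpleGraph α) (n : ℕ) :
    Nat.card (EmbT F (⊤ : SimpleGraph (Fin n))) = n.descFactorial (Fintype.card α) := by
  classical
  have e : EmbT F (⊤ : SimpleGraph (Fin n)) ≃ (α ↪ Fin n) :=
    { toFun := fun f => ⟨f.1, f.2.1⟩
      invFun := fun f => ⟨f, f.injective, fun a b hab => by
        simp only [SimpleGraph.top_adj]
        exact fun h => hab.ne (f.injective h)⟩
      left_inv := fun f => Subtype.ext rfl
      right_inv := fun f => rfl }
  rw [Nat.card_congr e, Nat.card_eq_fintype_card, Fintype.card_embedding_eq, Fintype.card_fin]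

lemma aut_pos (F : SimpleGraph α) : 0 < Nat.card (F ≃g F) := Nat.card_pos

lemma embSet_card_le (F : SimpleGraph α) (G : SimpleGraph V) (W : Finset V) (v₀ : V) :
    (embSet F G W v₀ Finset.univ).card ≤ Nat.card (EmbT F G) := by
  classical
  rw [← Nat.card_eq_finsetCard]
  apply Nat.card_le_card_of_injective
    (fun f => (⟨f.1,
      fun a b h => (mem_embSet.1 f.2).2.1 a (Finset.mem_univ a) b (Finset.mem_univ b) h,
      fun a b hab =>
        (mem_embSet.1 f.2).2.2.1 a (Finset.mem_univ a) b (Finset.mem_univ b) hab⟩ : EmbT F G))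
  intro f₁ f₂ h
  have h' : (f₁ : α → V) = (f₂ : α → V) := congrArg (fun g : EmbT F G => g.1) h
  exact Subtype.ext h'
end final


set_option maxHeartbeats 1000000 in
/-- For every forest `F` and every `t ≥ 2`, the complete graph on `r(K_t)` vertices
minimizes the number of copies of `F` among `K_t`-Ramsey graphs: every `K_t`-Ramsey graph
contains at least as many copies of `F` as `K_{r(K_t)}`, and hence `r_F(K_t)` equals the
number of copies of `F` in `K_{r(K_t)}`. -/
theorem forest_ramsey_minimizer (α : Type) [Fintype α] (F : SimpleGraph α)
    (hF : F.IsAcyclic) (t : ℕ) (ht : 2 ≤ t) :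
    (∀ (V : Type) [Fintype V] (G : SimpleGraph V), IsRamsey t G →
      copyCount F (⊤ : SimpleGraph (Fin (ramseyNumber t))) ≤ copyCount F G) ∧
    sInf {m : ℕ | ∃ (n : ℕ) (G : SimpleGraph (Fin n)), IsRamsey t G ∧ copyCount F G = m}
      = copyCount F (⊤ : SimpleGraph (Fin (ramseyNumber t))) := by
  classical
  have main : ∀ (V : Type) [Fintype V] (G : SimpleGraph V), IsRamsey t G →
      copyCount F (⊤ : SimpleGraph (Fin (ramseyNumber t))) ≤ copyCount F G := by
    intro V _ G hG
    classical
    set n := ramseyNumber t with hn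
    have hn_t : t ≤ n := le_ramseyNumber t ht
    have hn2 : 2 ≤ n := le_trans ht hn_t
    rcases dichotomy G (n - 1) (by omega) Finset.univ with ⟨φ, hφ⟩ | ⟨W, hWne, hdeg⟩
    · exfalso
      exact no_small_coloring t (n - 1) G hG (by omega) φ
        (fun u v huv => hφ u (Finset.mem_univ u) v (Finset.mem_univ v) huv)
    · obtain ⟨v₀, hv₀⟩ := hWne
      have hdeg' : ∀ w ∈ W, n ≤ (W.filter (G.Adj w)).card + 1 := by
        intro w hw; have := hdeg w hw; omega
      have h1 := card_embSet_ge F hF G W v₀ hv₀ n hdeg' Finset.univ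
      rw [Finset.card_univ] at h1
      have h2 := embSet_card_le F G W v₀
      have h3 : copyCount F (⊤ : SimpleGraph (Fin n)) * Nat.card (F ≃g F)
          ≤ copyCount F G * Nat.card (F ≃g F) := by
        rw [← nat_card_embT, ← nat_card_embT, nat_card_embT_top]
        exact le_trans h1 h2
      exact Nat.le_of_mul_le_mul_right h3 (aut_pos F)
  refine ⟨main, ?_⟩
  have hmem : copyCount F (⊤ : SimpleGraph (Fin (ramseyNumber t))) ∈
      {m : ℕ | ∃ (n : ℕ) (G : SimpleGraph (Fin n)), IsRamsey t G ∧ copyCount F G = m} :=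
    ⟨ramseyNumber t, ⊤, ramsey_top t, rfl⟩
  apply le_antisymm
  · exact Nat.sInf_le hmem
  · apply le_csInf ⟨_, hmem⟩
    rintro m ⟨n', G', hG', rfl⟩
    exact main (Fin n') G' hG'
end

section
/- Let F be a forest and let d be a positive integer. If a graph G has minimum degree at least d, then the number of (unlabeled) copies of F in G is at least the number of (unlabeled) copies of F in the complete graph K_{d+1}. Equivalently, the number of injective graph homomorphisms from F to G is at least ∏_{i=1}^{|F|} (d - i + 2). -/
set_option linter.unusedSectionVars false

section openSec
open SimpleGraph Function

section auxHelpers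
variable {α β V : Type*}

instance finiteHomAux [Finite α] [Finite V] (F : SimpleGraph α) (G : SimpleGraph V) :
    Finite (F →g G) :=
  Finite.of_injective (fun f => (f : α → V)) DFunLike.coe_injective

instance finiteIsoAux [Finite α] [Finite β] (F : SimpleGraph α) (G : SimpleGraph β) :
    Finite (F ≃g G) :=
  Finite.of_injective (fun f => (f : α → β)) (fun a b h => by
    cases a; cases b
    simp only [RelIso.coe_fn_mk] at h
    congr
    exact Equiv.coe_fn_injective h)

instance finiteSubgraphAux [Finite V] (G : SimpleGraph V) : Finite G.Subgraph :=
  Finite.of_injective (fun K => (K.verts, K.Adj))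
    (fun _ _ h => SimpleGraph.Subgraph.ext (congrArg Prod.fst h) (congrArg Prod.snd h))

lemma acyclic_of_embedding_aux {F' : SimpleGraph α} {F : SimpleGraph β} (f : F' ↪g F)
    (hF : F.IsAcyclic) : F'.IsAcyclic := fun _v c hc =>
  hF (c.map f.toHom) ((Walk.map_isCycle_iff_of_injective f.injective).mpr hc)

lemma eq_getVertOne_of_mem_edges_aux {G : SimpleGraph α} {v u a : α} {p : G.Walk v u}
    (hp : p.IsPath) (h : s(v, a) ∈ p.edges) : a = p.getVert 1 := by
  cases p with
  | nil => simp at h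
  | @cons _ w _ hadj q =>
    rw [SimpleGraph.Walk.edges_cons, List.mem_cons] at h
    rcases h with h | h
    · have hsnd : (SimpleGraph.Walk.cons hadj q).getVert 1 = w := by
        simp [SimpleGraph.Walk.getVert_cons_succ]
      rcases Sym2.eq_iff.mp h with ⟨_, rfl⟩ | ⟨hvw, rfl⟩
      · exact hsnd.symm
      · exact absurd hvw (G.ne_of_adj hadj)
    · exact absurd (q.fst_mem_support_of_mem_edges h)
        ((SimpleGraph.Walk.cons_isPath_iff _ _).mp hp).2

/-- Every finite nonempty acyclic graph has a vertex with at most one neighbor. -/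
lemma exists_pseudo_leaf_aux [Fintype α] [Nonempty α] {F : SimpleGraph α} (hF : F.IsAcyclic) :
    ∃ x w : α, ∀ c, F.Adj x c → c = w := by
  classical
  set P : ℕ → Prop := fun k => ∃ (x y : α) (p : F.Walk x y), p.IsPath ∧ p.length = k with hP
  have hP0 : P 0 := ⟨Classical.arbitrary α, Classical.arbitrary α, Walk.nil, by simp, rfl⟩
  set k := Nat.findGreatest P (Fintype.card α) with hk
  have hPk : P k := Nat.findGreatest_spec (Nat.zero_le _) hP0
  have hmax : ∀ m, k < m → ¬ P m := by
    intro m hm hPm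
    by_cases hmc : m ≤ Fintype.card α
    · exact Nat.findGreatest_is_greatest hm hmc hPm
    · obtain ⟨x, y, p, hp, hl⟩ := hPm
      exact hmc (le_of_lt (hl ▸ hp.length_lt))
  obtain ⟨v, u, p, hp, hlen⟩ := hPk
  refine ⟨v, p.getVert 1, fun c hadj => ?_⟩
  have hsup : c ∈ p.support := by
    by_contra hc
    exact hmax (k + 1) (Nat.lt_succ_self _)
      ⟨c, u, Walk.cons hadj.symm p, hp.cons hc, by simp [hlen]⟩
  by_cases he : s(v, c) ∈ p.edges
  · exact eq_getVertOne_of_mem_edges_aux hp he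
  · exfalso
    have hq : (p.takeUntil c hsup).IsPath := hp.takeUntil hsup
    have hne : s(c, v) ∉ (p.takeUntil c hsup).edges := fun hmem =>
      he (by
        have := Walk.edges_takeUntil_subset p hsup hmem
        rwa [Sym2.eq_swap] at this)
    exact hF _ ((Walk.cons_isCycle_iff _ hadj.symm).mpr ⟨hq, hne⟩)

end auxHelpers

/-- Greedy embedding: a forest on `n` vertices has at least `(d+1)(d)(d-1)⋯(d+2-n)`
injective homomorphisms into any graph of minimum degree at least `d`. -/
lemma key_count_aux (d : ℕ) {V : Type} [Fintype V] (G : SimpleGraph V) [DecidableRel G.Adj]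
    (hdeg : ∀ v, d ≤ G.degree v) (hV : d + 1 ≤ Fintype.card V) (n : ℕ) :
    ∀ (α : Type) [Fintype α] (F : SimpleGraph α), F.IsAcyclic → Fintype.card α = n →
      (d + 1).descFactorial n ≤ Nat.card {f : F →g G // Function.Injective ⇑f} := by
  induction n with
  | zero =>
    intro α _ F _ hcard
    haveI : IsEmpty α := Fintype.card_eq_zero_iff.mp hcard
    haveI : Unique {f : F →g G // Function.Injective ⇑f} :=
      { default := ⟨⟨fun a => isEmptyElim a, fun {a b} _ => isEmptyElim a⟩,
          fun a => isEmptyElim a⟩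
        uniq := fun f => Subtype.ext (DFunLike.ext _ _ (fun a => isEmptyElim a)) }
    simp [Nat.card_unique]
  | succ n IH =>
    intro α instα F hF hcard
    classical
    haveI : Nonempty α := Fintype.card_pos_iff.mp (by omega)
    obtain ⟨x, w, hxw⟩ := exists_pseudo_leaf_aux hF
    set k := d + 1 - n with hk
    let F' : SimpleGraph {y : α // y ≠ x} := F.comap (fun y => (y : α))
    have hF' : F'.IsAcyclic :=
      acyclic_of_embedding_aux (SimpleGraph.Embedding.comap
        (Function.Embedding.subtype (fun y => y ≠ x)) F) hF
    have hcard' : Fintype.card {y : α // y ≠ x} = n := by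
      have h2 := Fintype.card_subtype_compl (fun y : α => y = x)
      rw [Fintype.card_subtype_eq x] at h2
      have : Fintype.card {y : α // y ≠ x} = Fintype.card {y : α // ¬ y = x} :=
        Fintype.card_congr (Equiv.refl _)
      rw [this, h2, hcard]
      omega
    have IH' := IH _ F' hF' hcard'
    -- the image finset of a partial embedding
    let T : {g : F' →g G // Function.Injective ⇑g} → Finset V :=
      fun f' => Finset.univ.image (fun y : {y : α // y ≠ x} => f'.1 y)
    have hT_card : ∀ f', (T f').card ≤ n := fun f' =>
      le_trans Finset.card_image_le (by simp [hcard'])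
    have hT_mem : ∀ f' (y : {y : α // y ≠ x}), f'.1 y ∈ T f' := fun f' y =>
      Finset.mem_image_of_mem _ (Finset.mem_univ y)
    -- generic extension builder
    have build : ∀ (f' : {g : F' →g G // Function.Injective ⇑g}) (s : V), s ∉ T f' →
        (∀ b (hb : b ≠ x), F.Adj x b → G.Adj s (f'.1 ⟨b, hb⟩)) →
        ∃ f : {f : F →g G // Function.Injective ⇑f},
          (∀ y : {y : α // y ≠ x}, f.1 y.1 = f'.1 y) ∧ f.1 x = s := by
      intro f' s hsT hadj
      have hmaprel : ∀ {a b : α}, F.Adj a b →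
          G.Adj (if h : a = x then s else f'.1 ⟨a, h⟩) (if h : b = x then s else f'.1 ⟨b, h⟩) := by
        intro a b hab
        by_cases ha : a = x <;> by_cases hb : b = x
        · subst ha; subst hb; exact absurd hab (F.loopless.irrefl _)
        · subst ha
          rw [dif_pos rfl, dif_neg hb]
          exact hadj b hb hab
        · subst hb
          rw [dif_pos rfl, dif_neg ha]
          exact (hadj a ha hab.symm).symm
        · rw [dif_neg ha, dif_neg hb]
          exact f'.1.map_rel (by exact hab)
      have hinj : Function.Injective
          (fun a : α => if h : a = x then s else f'.1 ⟨a, h⟩) := by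
        intro a b hab
        by_cases ha : a = x <;> by_cases hb : b = x <;>
          simp only [dif_pos, dif_neg, ha, hb] at hab
        · rw [ha, hb]
        · exact absurd (hab ▸ hT_mem f' ⟨b, hb⟩) hsT
        · exact absurd (hab ▸ hT_mem f' ⟨a, ha⟩) hsT
        · have := f'.2 hab
          exact congrArg Subtype.val this
      refine ⟨⟨⟨fun a => if h : a = x then s else f'.1 ⟨a, h⟩, hmaprel⟩, hinj⟩,
        fun y => ?_, dif_pos rfl⟩
      show (if h : (y : α) = x then s else f'.1 ⟨(y : α), h⟩) = f'.1 y
      rw [dif_neg y.2]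
    -- the candidate sets
    have main : ∃ S : {g : F' →g G // Function.Injective ⇑g} → Finset V,
        (∀ f', k ≤ (S f').card) ∧
        (∀ f' s, s ∈ S f' → ∃ f : {f : F →g G // Function.Injective ⇑f},
          (∀ y : {y : α // y ≠ x}, f.1 y.1 = f'.1 y) ∧ f.1 x = s) := by
      by_cases hA : F.Adj x w
      · have hwx : w ≠ x := (F.ne_of_adj hA).symm
        refine ⟨fun f' => G.neighborFinset (f'.1 ⟨w, hwx⟩) \ T f', fun f' => ?_, fun f' s hs => ?_⟩
        · have hN : d ≤ (G.neighborFinset (f'.1 ⟨w, hwx⟩)).card := hdeg _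
          have hmem : f'.1 ⟨w, hwx⟩ ∈ T f' := hT_mem f' ⟨w, hwx⟩
          have hn1 : 1 ≤ n := by
            rw [← hcard']
            exact Fintype.card_pos_iff.mpr ⟨⟨w, hwx⟩⟩
          have hrw : G.neighborFinset (f'.1 ⟨w, hwx⟩) \ T f' =
              G.neighborFinset (f'.1 ⟨w, hwx⟩) \ ((T f').erase (f'.1 ⟨w, hwx⟩)) := by
            ext a
            simp only [Finset.mem_sdiff, Finset.mem_erase]
            constructor
            · rintro ⟨h1, h2⟩; exact ⟨h1, fun h3 => h2 h3.2⟩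
            · rintro ⟨h1, h2⟩
              refine ⟨h1, fun h3 => h2 ⟨fun heq => ?_, h3⟩⟩
              rw [heq] at h1
              exact G.notMem_neighborFinset_self _ h1
          have hle := Finset.le_card_sdiff ((T f').erase (f'.1 ⟨w, hwx⟩))
            (G.neighborFinset (f'.1 ⟨w, hwx⟩))
          have herase : ((T f').erase (f'.1 ⟨w, hwx⟩)).card = (T f').card - 1 :=
            Finset.card_erase_of_mem hmem
          have hTc := hT_card f'
          show k ≤ (G.neighborFinset (f'.1 ⟨w, hwx⟩) \ T f').card
          rw [hrw]
          omega
        · rw [Finset.mem_sdiff] at hs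
          refine build f' s hs.2 (fun b hb hadj => ?_)
          have hbw : b = w := hxw b hadj
          subst hbw
          exact ((G.mem_neighborFinset _ _).mp hs.1).symm
      · refine ⟨fun f' => Finset.univ \ T f', fun f' => ?_, fun f' s hs => ?_⟩
        · have hle := Finset.le_card_sdiff (T f') Finset.univ
          have hTc := hT_card f'
          rw [Finset.card_univ] at hle
          show k ≤ (Finset.univ \ T f').card
          omega
        · rw [Finset.mem_sdiff] at hs
          refine build f' s hs.2 (fun b hb hadj => ?_)
          exact absurd (hxw b hadj ▸ hadj) hA
    obtain ⟨S, hS_card, hext⟩ := main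
    -- choose injections into the candidate sets
    have hE : ∀ f', ∃ e : Fin k → V, Function.Injective e ∧ ∀ j, e j ∈ S f' := by
      intro f'
      have h1 : Fintype.card (Fin k) ≤ Fintype.card {v // v ∈ S f'} := by
        rw [Fintype.card_coe, Fintype.card_fin]; exact hS_card f'
      obtain ⟨e⟩ := Function.Embedding.nonempty_iff_card_le.mpr h1
      exact ⟨fun j => (e j : V), fun a b h => e.injective (Subtype.ext h), fun j => (e j).2⟩
    choose e he_inj he_mem using hE
    have hext2 : ∀ p : {g : F' →g G // Function.Injective ⇑g} × Fin k,
        ∃ f : {f : F →g G // Function.Injective ⇑f},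
          (∀ y : {y : α // y ≠ x}, f.1 y.1 = p.1.1 y) ∧ f.1 x = e p.1 p.2 :=
      fun p => hext p.1 (e p.1 p.2) (he_mem p.1 p.2)
    choose Φ hΦ1 hΦ2 using hext2
    have hΦinj : Function.Injective Φ := by
      intro p q hpq
      have h1 : p.1 = q.1 := by
        apply Subtype.ext; apply DFunLike.ext; intro y
        have hp := hΦ1 p y
        have hq := hΦ1 q y
        rw [hpq] at hp
        rw [show (p.1.1 : {y : α // y ≠ x} → V) y = q.1.1 y from hp ▸ hq ▸ rfl]
      have h2 : p.2 = q.2 := by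
        apply he_inj p.1
        have hp := hΦ2 p
        have hq := hΦ2 q
        rw [hpq] at hp
        rw [← h1] at hq
        rw [← hp, ← hq]
      exact Prod.ext h1 h2
    calc (d + 1).descFactorial (n + 1)
        = (d + 1 - n) * (d + 1).descFactorial n := Nat.descFactorial_succ _ _
      _ ≤ (d + 1 - n) * Nat.card {f' : F' →g G // Function.Injective ⇑f'} :=
          Nat.mul_le_mul_left _ IH'
      _ = Nat.card ({f' : F' →g G // Function.Injective ⇑f'} × Fin k) := by
          rw [Nat.card_prod, Nat.card_eq_fintype_card (α := Fin k), Fintype.card_fin, mul_comm]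
      _ ≤ Nat.card {f : F →g G // Function.Injective ⇑f} :=
          Nat.card_le_card_of_injective Φ hΦinj

section bridge
variable {α W : Type*} [Fintype α] [Fintype W] (F : SimpleGraph α) (H : SimpleGraph W)

/-- A chosen isomorphism for each copy of `F` in `H`. -/
noncomputable def φsel (c : {K : H.Subgraph // Nonempty (K.coe ≃g F)}) : c.1.coe ≃g F :=
  Classical.choice c.2

lemma hverts_char (c : {K : H.Subgraph // Nonempty (K.coe ≃g F)}) (σ : F ≃g F) (a : W) :
    a ∈ c.1.verts ↔ ∃ u, (((φsel F H c).symm (σ u) : c.1.verts) : W) = a := by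
  constructor
  · intro ha
    exact ⟨σ.symm ((φsel F H c) ⟨a, ha⟩), by simp⟩
  · rintro ⟨u, rfl⟩
    exact Subtype.mem _

lemma hadj_char (c : {K : H.Subgraph // Nonempty (K.coe ≃g F)}) (σ : F ≃g F) (a b : W) :
    c.1.Adj a b ↔ ∃ u v, F.Adj u v ∧ (((φsel F H c).symm (σ u) : c.1.verts) : W) = a ∧
      (((φsel F H c).symm (σ v) : c.1.verts) : W) = b := by
  constructor
  · intro h
    refine ⟨σ.symm ((φsel F H c) ⟨a, h.fst_mem⟩), σ.symm ((φsel F H c) ⟨b, h.snd_mem⟩),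
      ?_, by simp, by simp⟩
    have h1 : c.1.coe.Adj ⟨a, h.fst_mem⟩ ⟨b, h.snd_mem⟩ := h
    have h2 : F.Adj ((φsel F H c) ⟨a, h.fst_mem⟩) ((φsel F H c) ⟨b, h.snd_mem⟩) :=
      (φsel F H c).map_rel_iff.mpr h1
    exact σ.symm.map_rel_iff.mpr h2
  · rintro ⟨u, v, huv, rfl, rfl⟩
    have h1 : F.Adj (σ u) (σ v) := σ.map_rel_iff.mpr huv
    have h2 : c.1.coe.Adj ((φsel F H c).symm (σ u)) ((φsel F H c).symm (σ v)) :=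
      (φsel F H c).symm.map_rel_iff.mpr h1
    exact h2

lemma bridge_B :
    _root_.copyCount F H * Nat.card (F ≃g F) ≤ Nat.card {f : F →g H // Function.Injective ⇑f} := by
  classical
  set Ψ : {K : H.Subgraph // Nonempty (K.coe ≃g F)} × (F ≃g F) →
      {f : F →g H // Function.Injective ⇑f} := fun p =>
    ⟨p.1.1.hom.comp (((φsel F H p.1).symm.toHom).comp p.2.toHom),
      Subgraph.hom_injective.comp (((φsel F H p.1).symm.injective).comp p.2.injective)⟩
    with hΨdef
  have hΨinj : Function.Injective Ψ := by
    rintro ⟨c1, σ1⟩ ⟨c2, σ2⟩ h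
    have hfun : ∀ u, (((φsel F H c1).symm (σ1 u) : c1.1.verts) : W) =
        (((φsel F H c2).symm (σ2 u) : c2.1.verts) : W) := by
      intro u
      exact congrArg (fun q : {f : F →g H // Function.Injective ⇑f} => (q.1 : α → W) u) h
    have hc : c1 = c2 := by
      apply Subtype.ext
      apply SimpleGraph.Subgraph.ext
      · ext a
        rw [show (a ∈ c1.1.verts) = (a ∈ (c1 : H.Subgraph).verts) from rfl]
        rw [hverts_char F H c1 σ1 a, hverts_char F H c2 σ2 a]
        simp_rw [hfun]
      · ext a b
        rw [hadj_char F H c1 σ1 a b, hadj_char F H c2 σ2 a b]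
        simp_rw [hfun]
    obtain rfl : c1 = c2 := hc
    have hσ : σ1 = σ2 := by
      apply DFunLike.ext
      intro u
      have h4 : (φsel F H c1).symm (σ1 u) = (φsel F H c1).symm (σ2 u) :=
        Subtype.ext (hfun u)
      have h5 := congrArg (φsel F H c1) h4
      simpa using h5
    rw [hσ]
  calc _root_.copyCount F H * Nat.card (F ≃g F)
      = Nat.card ({K : H.Subgraph // Nonempty (K.coe ≃g F)} × (F ≃g F)) :=
        (Nat.card_prod _ _).symm
    _ ≤ Nat.card {f : F →g H // Function.Injective ⇑f} :=
        Nat.card_le_card_of_injective Ψ hΨinj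

lemma bridge_A :
    Nat.card {f : F →g H // Function.Injective ⇑f} ≤ _root_.copyCount F H * Nat.card (F ≃g F) := by
  classical
  have hiso : ∀ f : {f : F →g H // Function.Injective ⇑f},
      ∃ ι : F ≃g (Subgraph.map f.1 (⊤ : F.Subgraph)).coe, ∀ u, (ι u : W) = f.1 u := by
    intro f
    have hmem : ∀ u : α, f.1 u ∈ (Subgraph.map f.1 (⊤ : F.Subgraph)).verts := fun u =>
      ⟨u, trivial, rfl⟩
    have hbij : Function.Bijective
        (fun u : α => (⟨f.1 u, hmem u⟩ : (Subgraph.map f.1 (⊤ : F.Subgraph)).verts)) := by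
      constructor
      · intro a b hab
        exact f.2 (congrArg Subtype.val hab)
      · rintro ⟨a, ha⟩
        obtain ⟨u, -, rfl⟩ := ha
        exact ⟨u, rfl⟩
    refine ⟨⟨Equiv.ofBijective _ hbij, ?_⟩, fun u => rfl⟩
    intro a b
    show (Subgraph.map f.1 (⊤ : F.Subgraph)).Adj (f.1 a) (f.1 b) ↔ F.Adj a b
    constructor
    · rintro ⟨u, v, huv, hu, hv⟩
      obtain rfl := f.2 hu
      obtain rfl := f.2 hv
      exact huv
    · intro h
      exact ⟨a, b, h, rfl, rfl⟩
  choose ι hι using hiso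
  set Θ : {f : F →g H // Function.Injective ⇑f} →
      {K : H.Subgraph // Nonempty (K.coe ≃g F)} × (F ≃g F) := fun f =>
    (⟨Subgraph.map f.1 (⊤ : F.Subgraph), ⟨(ι f).symm⟩⟩,
      (ι f).trans (φsel F H ⟨Subgraph.map f.1 (⊤ : F.Subgraph), ⟨(ι f).symm⟩⟩)) with hΘdef
  have hval : ∀ (f : {f : F →g H // Function.Injective ⇑f}) (u : α),
      f.1 u = (((φsel F H (Θ f).1).symm ((Θ f).2 u) : (Θ f).1.1.verts) : W) := by
    intro f u
    show f.1 u =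
      (((φsel F H (Θ f).1).symm ((φsel F H (Θ f).1) (ι f u)) : (Θ f).1.1.verts) : W)
    rw [RelIso.symm_apply_apply]
    exact (hι f u).symm
  have hΘinj : Function.Injective Θ := by
    intro f g h
    apply Subtype.ext
    apply DFunLike.ext
    intro u
    rw [hval f u, hval g u, h]
  calc Nat.card {f : F →g H // Function.Injective ⇑f}
      ≤ Nat.card ({K : H.Subgraph // Nonempty (K.coe ≃g F)} × (F ≃g F)) :=
        Nat.card_le_card_of_injective Θ hΘinj
    _ = _root_.copyCount F H * Nat.card (F ≃g F) := Nat.card_prod _ _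

end bridge

end openSec

/-- Let `F` be a forest and `d ≥ 1`. If `G` has minimum degree at least `d`, then the
number of (unlabeled) copies of `F` in `G` is at least the number of copies of `F` in
`K_{d+1}`; equivalently, the number of injective graph homomorphisms from `F` to `G` is at
least `∏_{i=1}^{|F|} (d - i + 2)`. -/
theorem forest_copies_of_min_degree (α : Type) [Fintype α] (F : SimpleGraph α)
    (hF : F.IsAcyclic) (d : ℕ) (hd : 1 ≤ d) (V : Type) [Fintype V] [Nonempty V]
    (G : SimpleGraph V) [DecidableRel G.Adj] (hdeg : ∀ v : V, d ≤ G.degree v) :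
    copyCount F (⊤ : SimpleGraph (Fin (d + 1))) ≤ copyCount F G ∧
    ∏ i ∈ Finset.Icc 1 (Fintype.card α), (d + 2 - i) ≤
      Nat.card {f : F →g G // Function.Injective f} := by
  classical
  have hV : d + 1 ≤ Fintype.card V := by
    obtain ⟨v⟩ := ‹Nonempty V›
    have h1 := G.degree_lt_card_verts v
    have h2 := hdeg v
    omega
  have hprod : ∀ n : ℕ, ∏ i ∈ Finset.Icc 1 n, (d + 2 - i) = (d + 1).descFactorial n := by
    intro n
    induction n with
    | zero => simp
    | succ n ih =>
      rw [Finset.prod_Icc_succ_top (by omega : 1 ≤ n + 1), ih, Nat.descFactorial_succ,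
        mul_comm]
      congr 1
      omega
  have hlabG : (d + 1).descFactorial (Fintype.card α) ≤
      Nat.card {f : F →g G // Function.Injective ⇑f} :=
    key_count_aux d G hdeg hV _ α F hF rfl
  constructor
  · -- copy count comparison
    have hA : 0 < Nat.card (F ≃g F) := Nat.card_pos (α := F ≃g F)
    have h1 := bridge_B F (⊤ : SimpleGraph (Fin (d + 1)))
    have h2 : Nat.card {f : F →g (⊤ : SimpleGraph (Fin (d + 1))) // Function.Injective ⇑f} ≤
        (d + 1).descFactorial (Fintype.card α) := by
      have hinj : Function.Injective
          (fun f : {f : F →g (⊤ : SimpleGraph (Fin (d + 1))) // Function.Injective ⇑f} =>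
            (⟨⇑f.1, f.2⟩ : α ↪ Fin (d + 1))) := by
        intro f g h
        apply Subtype.ext
        apply DFunLike.ext
        intro u
        exact congrFun (congrArg (fun e : α ↪ Fin (d + 1) => (e : α → Fin (d + 1))) h) u
      have := Nat.card_le_card_of_injective _ hinj
      rwa [Nat.card_eq_fintype_card (α := α ↪ Fin (d + 1)), Fintype.card_embedding_eq,
        Fintype.card_fin] at this
    have h3 := bridge_A F G
    have hchain := h1.trans (h2.trans (hlabG.trans h3))
    exact Nat.le_of_mul_le_mul_right hchain hA
  · rw [hprod]
    exact hlabG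
end

section
/- For every integer t ≥ 2, setting b = binomial(t, 2), every graph G that is K_t-Ramsey contains at least m(b) copies of K_t, where m(b) is the minimum number of edges in a b-uniform hypergraph that admits no proper 2-coloring of its vertices (i.e., lacking property B). -/
/-- `m(b)`: the minimum number of edges in a `b`-uniform hypergraph without property B,
i.e. admitting no 2-coloring of its vertices in which no edge is monochromatic. -/
noncomputable def propertyBNumber (b : ℕ) : ℕ :=
  sInf {N : ℕ | ∃ E : Finset (Finset ℕ), (∀ e ∈ E, e.card = b) ∧
    (∀ c : ℕ → Bool, ∃ e ∈ E, ∀ x ∈ e, ∀ y ∈ e, c x = c y) ∧ E.card = N}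

lemma sym2_offdiag_card {α : Type*} [DecidableEq α] (s : Finset α) :
    (s.sym2.filter fun p => ¬ p.IsDiag).card = s.card.choose 2 := by
  have hdiag : s.sym2.filter (fun p => p.IsDiag) = s.image Sym2.diag := by
    ext p
    induction p using Sym2.ind with
    | _ x y =>
      simp only [Finset.mem_filter, Finset.mk_mem_sym2_iff, Sym2.isDiag_iff_proj_eq,
        Finset.mem_image]
      constructor
      · rintro ⟨⟨hx, hy⟩, rfl⟩; exact ⟨x, hx, rfl⟩
      · rintro ⟨a, ha, h⟩
        rw [Sym2.diag, Sym2.eq_iff] at h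
        rcases h with ⟨rfl, rfl⟩ | ⟨rfl, rfl⟩ <;> exact ⟨⟨ha, ha⟩, rfl⟩
  have hdc : (s.sym2.filter (fun p => p.IsDiag)).card = s.card := by
    rw [hdiag, Finset.card_image_of_injective _ Sym2.diag_injective]
  have htot := Finset.card_filter_add_card_filter_not
    (s := s.sym2) (p := fun p => p.IsDiag)
  rw [Finset.card_sym2] at htot
  rw [hdc] at htot
  have : (s.card + 1).choose 2 = s.card.choose 2 + s.card := by
    rw [Nat.choose_succ_succ]
    simp [Nat.add_comm]
  omega

/-- For `t ≥ 2` and `b = binomial(t,2)`, every `K_t`-Ramsey graph contains at least `m(b)`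
copies of `K_t`. -/
theorem ramsey_clique_count_lower (t : ℕ) (ht : 2 ≤ t) (V : Type) [Fintype V]
    (G : SimpleGraph V) (hG : IsRamsey t G) :
    propertyBNumber (t.choose 2) ≤ Nat.card {S : Finset V // G.IsNClique t S} := by
  classical
  obtain ⟨ι⟩ : Nonempty (Sym2 V ↪ ℕ) :=
    ⟨(Fintype.equivFin (Sym2 V)).toEmbedding.trans Fin.valEmbedding⟩
  set F : Finset V → Finset ℕ :=
    fun S => (S.sym2.filter fun p => ¬ p.IsDiag).map ι with hF
  set C : Finset (Finset V) := Finset.univ.filter (fun S => G.IsNClique t S) with hC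
  set E : Finset (Finset ℕ) := C.image F with hE
  have h1 : ∀ e ∈ E, e.card = t.choose 2 := by
    intro e he
    rw [hE, Finset.mem_image] at he
    obtain ⟨S, hS, rfl⟩ := he
    rw [hC, Finset.mem_filter] at hS
    rw [hF]
    simp only [Finset.card_map, sym2_offdiag_card, hS.2.2]
  have h2 : ∀ c : ℕ → Bool, ∃ e ∈ E, ∀ x ∈ e, ∀ y ∈ e, c x = c y := by
    intro c
    obtain ⟨S, b, hcard, hcond⟩ := hG (fun p => c (ι p))
    have hmono : ∀ x ∈ F S, c x = b := by
      intro x hx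
      rw [hF, Finset.mem_map] at hx
      obtain ⟨p, hp, rfl⟩ := hx
      rw [Finset.mem_filter] at hp
      obtain ⟨hp1, hp2⟩ := hp
      induction p using Sym2.ind with
      | _ u v =>
        rw [Finset.mk_mem_sym2_iff] at hp1
        rw [Sym2.isDiag_iff_proj_eq] at hp2
        exact (hcond u hp1.1 v hp1.2 hp2).2
    refine ⟨F S, ?_, fun x hx y hy => by rw [hmono x hx, hmono y hy]⟩
    rw [hE, Finset.mem_image]
    refine ⟨S, ?_, rfl⟩
    rw [hC, Finset.mem_filter]
    exact ⟨Finset.mem_univ _,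
      ⟨fun u hu v hv huv => (hcond u hu v hv huv).1, hcard⟩⟩
  have hle : propertyBNumber (t.choose 2) ≤ E.card :=
    Nat.sInf_le ⟨E, h1, h2, rfl⟩
  refine hle.trans ?_
  calc E.card ≤ C.card := Finset.card_image_le
    _ = Nat.card {S : Finset V // G.IsNClique t S} := by
      rw [Nat.card_eq_fintype_card, Fintype.card_subtype]
end

section
/- For all integers 2 ≤ s ≤ t, setting b = binomial(t, 2), we have r_{K_s}(K_t) ≥ m(b)^{s/t} ≥ 2^{s(t-1)/2 - 1}: every graph G that is K_t-Ramsey contains at least m(b)^{s/t} copies of K_s, where m(b) is the minimum number of edges in a b-uniform hypergraph that admits no proper 2-coloring of its vertices. -/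
section Auxiliary

set_option linter.unusedVariables false


-- (k-r)^r ≤ C(k,r) * (r+1)^r
lemma aux_choose_lb (k : ℕ) : ∀ r : ℕ, (k - r)^r ≤ k.choose r * (r+1)^r := by
  intro r
  induction r with
  | zero => simp
  | succ r ih =>
    rcases le_or_gt k (r+1) with h | h
    · have h0 : k - (r+1) = 0 := by omega
      rw [h0, Nat.zero_pow (by omega)]; exact Nat.zero_le _
    · -- k > r+1
      have key : k.choose (r+1) * (r+1) = k.choose r * (k - r) := Nat.choose_succ_right_eq k r
      have h1 : (k - (r+1))^(r+1) * (r+1)^(r+1) ≤ k.choose (r+1) * (r+2)^(r+1) * (r+1)^(r+1) := by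
        have hseq : k.choose (r+1) * (r+2)^(r+1) * (r+1)^(r+1)
            = (k.choose (r+1) * (r+1)) * ((r+2)^(r+1) * (r+1)^r) := by ring
        rw [hseq, key]
        calc (k - (r+1))^(r+1) * (r+1)^(r+1) = ((k - (r+1)) * (r+1))^(r+1) := by rw [mul_pow]
          _ ≤ ((k - r) * (r+2))^(r+1) := by
              apply Nat.pow_le_pow_left
              have : k - (r+1) ≤ k - r := Nat.sub_le_sub_left (Nat.le_succ r) k
              exact Nat.mul_le_mul this (Nat.le_succ _)
          _ = (k - r) * ((k-r)^r * (r+2)^(r+1)) := by rw [mul_pow]; ring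
          _ ≤ (k - r) * ((k.choose r * (r+1)^r) * (r+2)^(r+1)) := by
              exact Nat.mul_le_mul_left _ (Nat.mul_le_mul_right _ ih)
          _ = k.choose r * (k - r) * ((r+2)^(r+1) * (r+1)^r) := by ring
      exact Nat.le_of_mul_le_mul_right h1 (by positivity)

-- single step: C(k,r+1)^r ≤ C(k,r)^(r+1)
lemma aux_choose_step (k r : ℕ) : k.choose (r+1) ^ r ≤ k.choose r ^ (r+1) := by
  have key : k.choose (r+1) * (r+1) = k.choose r * (k - r) := Nat.choose_succ_right_eq k r
  have h1 : k.choose (r+1)^r * (r+1)^r ≤ k.choose r ^ (r+1) * (r+1)^r := by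
    calc k.choose (r+1)^r * (r+1)^r = (k.choose (r+1) * (r+1))^r := by rw [mul_pow]
      _ = (k.choose r * (k - r))^r := by rw [key]
      _ = k.choose r ^ r * (k-r)^r := by rw [mul_pow]
      _ ≤ k.choose r ^ r * (k.choose r * (r+1)^r) := Nat.mul_le_mul_left _ (aux_choose_lb k r)
      _ = k.choose r ^ (r+1) * (r+1)^r := by ring
  exact Nat.le_of_mul_le_mul_right h1 (by positivity)

-- C(k,t)^s ≤ C(k,s)^t for s ≤ t, s ≥ 1
lemma aux_choose_pow (k s : ℕ) (hs : 1 ≤ s) : ∀ t, s ≤ t → k.choose t ^ s ≤ k.choose s ^ t := by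
  intro t
  induction t with
  | zero => intro h; exact absurd (le_trans hs h) (by omega)
  | succ t ih =>
    intro hst
    rcases Nat.eq_or_lt_of_le hst with h | h
    · rw [← h]
    · have hst' : s ≤ t := Nat.lt_succ_iff.mp h
      have prev := ih hst'
      have step := aux_choose_step k t
      -- C(k,t+1)^(s*t) ≤ C(k,t)^((t+1)*s) ≤ C(k,s)^(t*(t+1))
      have ht : 1 ≤ t := le_trans hs hst'
      have h2 : (k.choose (t+1) ^ s)^t ≤ (k.choose s ^ (t+1))^t := by
        calc (k.choose (t+1) ^ s)^t = (k.choose (t+1) ^ t)^s := by rw [← pow_mul, ← pow_mul, Nat.mul_comm]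
          _ ≤ (k.choose t ^ (t+1))^s := Nat.pow_le_pow_left step s
          _ = (k.choose t ^ s)^(t+1) := by rw [← pow_mul, ← pow_mul, Nat.mul_comm]
          _ ≤ (k.choose s ^ t)^(t+1) := Nat.pow_le_pow_left prev (t+1)
          _ = (k.choose s ^ (t+1))^t := by rw [← pow_mul, ← pow_mul, Nat.mul_comm]
      exact (Nat.pow_le_pow_iff_left (by omega)).mp h2

lemma aux_choose_succ (k t : ℕ) (h : t ≤ k) : (k+1).choose t ≤ (t+1) * k.choose t := by
  rcases Nat.eq_zero_or_pos t with rfl | ht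
  · simp
  · obtain ⟨t', rfl⟩ : ∃ t', t = t' + 1 := ⟨t - 1, by omega⟩
    rw [Nat.choose_succ_succ]
    have key : k.choose (t'+1) * (t'+1) = k.choose t' * (k - t') := Nat.choose_succ_right_eq k t'
    have h1 : k.choose t' ≤ (t'+1) * k.choose (t'+1) := by
      have h2 : k.choose t' * 1 ≤ k.choose t' * (k - t') := by
        apply Nat.mul_le_mul_left; omega
      rw [← key] at h2; nlinarith
    nlinarith [Nat.choose_pos (show t'+1 ≤ k from h)]

-- (s!)^t ≤ (t!)^s for s ≤ t
lemma aux_factorial_pow (s : ℕ) : ∀ t, s ≤ t → (s.factorial)^t ≤ (t.factorial)^s := by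
  intro t
  induction t with
  | zero => intro h; interval_cases s; simp
  | succ t ih =>
    intro hst
    rcases Nat.eq_or_lt_of_le hst with h | h
    · rw [h]
    · have hst' : s ≤ t := Nat.lt_succ_iff.mp h
      calc (s.factorial)^(t+1) = (s.factorial)^t * s.factorial := by ring
        _ ≤ (t.factorial)^s * s.factorial := Nat.mul_le_mul_right _ (ih hst')
        _ ≤ (t.factorial)^s * (t+1)^s := by
            apply Nat.mul_le_mul_left
            calc s.factorial ≤ s^s := Nat.factorial_le_pow s
              _ ≤ (t+1)^s := Nat.pow_le_pow_left (by omega) s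
        _ = ((t+1).factorial)^s := by rw [Nat.factorial_succ, mul_pow, Nat.mul_comm]

-- power trick: if B^p ≤ C * A^p for all p ≥ 1 then B ≤ A
lemma aux_power_trick (A B C : ℕ) (h : ∀ p : ℕ, 1 ≤ p → B^p ≤ C * A^p) : B ≤ A := by
  by_contra hAB
  push_neg at hAB
  rcases Nat.eq_zero_or_pos A with rfl | hA
  · have := h 1 le_rfl; simp at this; omega
  · -- binomial two-term: (A+1)^(p+1) ≥ A^(p+1) + (p+1)*A^p
    have bin : ∀ p : ℕ, A^(p+1) + (p+1) * A^p ≤ (A+1)^(p+1) := by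
      intro p
      induction p with
      | zero => simp
      | succ p ih =>
        have : (A+1)^(p+1+1) = (A+1)^(p+1) * (A+1) := by ring
        rw [this]
        calc A^(p+2) + (p+2) * A^(p+1)
            ≤ (A^(p+1) + (p+1) * A^p) * (A+1) := by ring_nf; nlinarith [pow_pos hA p, pow_pos hA (p+1)]
          _ ≤ (A+1)^(p+1) * (A+1) := Nat.mul_le_mul_right _ ih
    set p := C * A + 1 with hp
    have h1 := h p (by omega)
    have h2 : B ^ p ≥ (A+1)^p := Nat.pow_le_pow_left (by omega) p
    have h3 : (A+1)^p ≥ A^p + p * A^(p-1) := by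
      have := bin (p - 1)
      have hp1 : p - 1 + 1 = p := by omega
      rw [hp1] at this; exact this
    have h4 : p * A^(p-1) > C * A^p := by
      have : A ^ p = A * A^(p-1) := by
        conv_lhs => rw [show p = 1 + (p-1) by omega]
        rw [pow_add, pow_one]
      rw [this]
      calc C * (A * A^(p-1)) = (C * A) * A^(p-1) := by ring
        _ < p * A^(p-1) := by
            exact Nat.mul_lt_mul_of_lt_of_le (by omega) le_rfl (pow_pos hA _)
    omega


open Finset FinsetFamily

variable {V : Type*}

/-- unordered clique count -/
noncomputable def kc (G : SimpleGraph V) (r : ℕ) : ℕ := Nat.card {S : Finset V // G.IsNClique r S}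

/-- ordered clique count -/
noncomputable def ordc (G : SimpleGraph V) (r : ℕ) : ℕ :=
  Nat.card {f : Fin r → V // ∀ i j, i ≠ j → G.Adj (f i) (f j)}

lemma kc_eq_filter [Fintype V] (G : SimpleGraph V) (r : ℕ) [DecidablePred (G.IsNClique r ·)] :
    kc G r = (univ.filter (G.IsNClique r ·)).card := by
  rw [kc, Nat.card_eq_fintype_card, Fintype.card_subtype]

lemma ordc_eq_factorial_mul_kc [Fintype V] (G : SimpleGraph V) (r : ℕ) :
    ordc G r = r.factorial * kc G r := by
  classical
  rw [kc_eq_filter, ordc, Nat.card_eq_fintype_card, Fintype.card_subtype]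
  set P : (Fin r → V) → Prop := fun f => ∀ i j, i ≠ j → G.Adj (f i) (f j) with hP
  have hinj : ∀ f : Fin r → V, P f → Function.Injective f := by
    intro f hf i j hij
    by_contra hne
    exact (G.ne_of_adj (hf i j hne)) hij
  have hmap : ∀ f ∈ univ.filter P, Finset.image f univ ∈ univ.filter (G.IsNClique r ·) := by
    intro f hf
    rw [mem_filter] at hf ⊢
    refine ⟨mem_univ _, ?_, ?_⟩
    · intro u hu v hv huv
      simp only [coe_image, Set.mem_image, mem_coe] at hu hv
      obtain ⟨i, -, rfl⟩ := hu
      obtain ⟨j, -, rfl⟩ := hv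
      exact hf.2 i j (fun h => huv (by rw [h]))
    · rw [card_image_of_injective _ (hinj f hf.2), card_univ, Fintype.card_fin]
  rw [card_eq_sum_card_fiberwise hmap]
  rw [Finset.sum_congr rfl (fun S hS => ?_), Finset.sum_const, smul_eq_mul, Nat.mul_comm]
  -- fiber over S has cardinality r!
  rw [mem_filter] at hS
  have hScard := hS.2.2
  have hclique := hS.2.1
  have : ((univ.filter P).filter fun f => Finset.image f univ = S).card
      = Fintype.card (Fin r ↪ (S : Finset V)) := by
    rw [← Fintype.card_coe S] at hScard
    rw [← card_univ (α := (Fin r ↪ (S : Finset V)))]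
    apply Finset.card_bij' (i := fun (f : Fin r → V) hf =>
        (⟨fun i => (⟨f i, by
          rw [mem_filter] at hf
          rw [← hf.2]
          exact mem_image_of_mem f (mem_univ i)⟩ : (S : Finset V)), fun i j hij => by
          rw [mem_filter, mem_filter] at hf
          exact hinj f hf.1.2 (congrArg Subtype.val hij)⟩ : Fin r ↪ (S : Finset V)))
      (j := fun e he => fun i => (e i : V))
      (hi := fun f hf => mem_univ _)
      (hj := fun e he => by
        rw [mem_filter, mem_filter]
        have hinj' : Function.Injective (fun i => (e i : V)) := by
          intro i j hij
          exact e.injective (Subtype.ext hij)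
        have himsub : Finset.image (fun i => (e i : V)) univ ⊆ S := by
          intro x hx
          simp only [mem_image] at hx
          obtain ⟨i, -, rfl⟩ := hx
          exact (e i).2
        have him : Finset.image (fun i => (e i : V)) univ = S := by
          apply Finset.eq_of_subset_of_card_le himsub
          rw [card_image_of_injective _ hinj', card_univ, Fintype.card_fin, ← hScard,
            Fintype.card_coe]
        refine ⟨⟨mem_univ _, ?_⟩, him⟩
        intro i j hij
        have hmem : ∀ a : Fin r, (e a : V) ∈ (S : Set V) := fun a => mem_coe.mpr (e a).2
        exact hclique (hmem i) (hmem j) (fun h => hij (hinj' h)))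
      (left_inv := fun f hf => rfl)
      (right_inv := fun e he => by ext i; rfl)
  rw [this, Fintype.card_embedding_eq, Fintype.card_fin, Fintype.card_coe, hScard,
    Nat.descFactorial_self]

/-- tensor power of a graph -/
def powG (G : SimpleGraph V) (p : ℕ) : SimpleGraph (Fin p → V) where
  Adj f g := f ≠ g ∧ ∀ i, G.Adj (f i) (g i)
  symm := ⟨fun f g ⟨h1, h2⟩ => ⟨h1.symm, fun i => (h2 i).symm⟩⟩
  loopless := ⟨fun f h => h.1 rfl⟩

lemma ordc_powG (G : SimpleGraph V) (p r : ℕ) (hp : 0 < p) :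
    ordc (powG G p) r = (ordc G r) ^ p := by
  rw [ordc, ordc]
  have e : {F : Fin r → (Fin p → V) // ∀ i j, i ≠ j → (powG G p).Adj (F i) (F j)}
      ≃ (Fin p → {f : Fin r → V // ∀ i j, i ≠ j → G.Adj (f i) (f j)}) := by
    refine ⟨fun F => fun c => ⟨fun j => F.1 j c, fun i j hij => (F.2 i j hij).2 c⟩,
      fun g => ⟨fun j c => (g c).1 j, fun i j hij => ⟨?_, fun c => (g c).2 i j hij⟩⟩, ?_, ?_⟩
    · intro hEq
      exact (G.ne_of_adj ((g ⟨0, hp⟩).2 i j hij)) (congrFun hEq ⟨0, hp⟩)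
    · intro F; rfl
    · intro g; rfl
  rw [Nat.card_congr e, Nat.card_pi, Finset.prod_const, card_univ, Fintype.card_fin]

lemma kc_le_choose [Fintype V] (G : SimpleGraph V) (t : ℕ) :
    kc G t ≤ (Fintype.card V).choose t := by
  classical
  rw [kc_eq_filter]
  have : univ.filter (G.IsNClique t ·) ⊆ univ.powersetCard t := by
    intro S hS
    rw [mem_filter] at hS
    rw [mem_powersetCard_univ]
    exact hS.2.2
  calc (univ.filter (G.IsNClique t ·)).card ≤ (univ.powersetCard t).card := card_le_card this
    _ = (Fintype.card V).choose t := by rw [card_powersetCard, card_univ]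

lemma ikk [Fintype V] (G : SimpleGraph V) (s t : ℕ) (hs : 1 ≤ s) (hst : s ≤ t) :
    (kc G t)^s ≤ (t+1)^s * (kc G s)^t := by
  classical
  rcases Nat.eq_zero_or_pos (kc G t) with h0 | hpos
  · rw [h0, Nat.zero_pow (by omega)]; exact Nat.zero_le _
  set n := Fintype.card V with hn
  set σ : V ≃ Fin n := Fintype.equivFin V with hσ
  set K := kc G t with hK
  -- the clique family transferred to Fin n
  set 𝒜 : Finset (Finset (Fin n)) :=
    (univ.filter (G.IsNClique t ·)).image (fun S => S.image σ) with h𝒜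
  have hAcard : 𝒜.card = K := by
    rw [h𝒜, Finset.card_image_of_injective _ (Finset.image_injective σ.injective),
      hK, kc_eq_filter]
  have hAsized : (𝒜 : Set (Finset (Fin n))).Sized t := by
    intro A hA
    rw [h𝒜, coe_image, Set.mem_image] at hA
    obtain ⟨S, hS, rfl⟩ := hA
    rw [mem_coe, mem_filter] at hS
    rw [Finset.card_image_of_injective _ σ.injective, hS.2.2]
  -- existence of a t-clique gives t ≤ n
  obtain ⟨S₀, hS₀⟩ : ∃ S : Finset V, G.IsNClique t S := by
    rw [hK, kc] at hpos
    rcases Nat.card_pos_iff.mp hpos with ⟨⟨S, hS⟩, -⟩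
    exact ⟨S, hS⟩
  have htn : t ≤ n := by
    rw [← hS₀.2, hn]
    exact le_trans (card_le_card (subset_univ S₀)) (le_of_eq (card_univ))
  -- choose k
  have hFne : ((range (n+1)).filter (fun j => t ≤ j ∧ j.choose t ≤ K)).Nonempty := by
    refine ⟨t, ?_⟩
    rw [mem_filter, mem_range]
    exact ⟨by omega, le_rfl, by rw [Nat.choose_self]; omega⟩
  obtain ⟨k, hkmem, hkmax⟩ : ∃ k ∈ (range (n+1)).filter (fun j => t ≤ j ∧ j.choose t ≤ K),
      ∀ j ∈ (range (n+1)).filter (fun j => t ≤ j ∧ j.choose t ≤ K), j ≤ k :=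
    ⟨_, Finset.max'_mem _ hFne, fun j hj => Finset.le_max' _ j hj⟩
  rw [mem_filter, mem_range] at hkmem
  have hkn : k ≤ n := by omega
  have htk : t ≤ k := hkmem.2.1
  have hckK : k.choose t ≤ K := hkmem.2.2
  have hKck : K ≤ (t+1) * k.choose t := by
    rcases eq_or_lt_of_le hkn with h | h
    · calc K ≤ n.choose t := by rw [hK]; exact kc_le_choose G t
        _ = k.choose t := by rw [h]
        _ ≤ (t+1) * k.choose t := Nat.le_mul_of_pos_left _ (by omega)
    · have : ¬ ((k+1).choose t ≤ K) := by
        intro hc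
        have hmem : k + 1 ∈ (range (n+1)).filter (fun j => t ≤ j ∧ j.choose t ≤ K) := by
          rw [mem_filter, mem_range]; exact ⟨by omega, by omega, hc⟩
        have := hkmax _ hmem
        omega
      have h1 : K < (k+1).choose t := by omega
      calc K ≤ (k+1).choose t := le_of_lt h1
        _ ≤ (t+1) * k.choose t := aux_choose_succ k t htk
  -- Kruskal-Katona
  have hkk : k.choose s ≤ #(∂^[t-s] 𝒜) := by
    have := Finset.kruskal_katona_lovasz_form (i := t - s) (r := t) (k := k) (n := n)
      (by omega) htk hkn hAsized (by rw [hAcard]; exact hckK)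
    rw [show t - (t - s) = s by omega] at this
    convert this using 2
  -- shadow consists of s-cliques (transferred back)
  have hshadow : #(∂^[t-s] 𝒜) ≤ kc G s := by
    rw [kc_eq_filter]
    apply Finset.card_le_card_of_injOn (fun B => B.image σ.symm)
    · intro B hB
      rw [mem_coe, Finset.mem_shadow_iterate_iff_exists_sdiff] at hB
      obtain ⟨A, hA, hBA, hcard⟩ := hB
      rw [h𝒜, mem_image] at hA
      obtain ⟨S, hS, rfl⟩ := hA
      rw [mem_filter] at hS
      have hScard : (S.image σ).card = t := by
        rw [Finset.card_image_of_injective _ σ.injective, hS.2.2]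
      have hBcard : B.card = s := by
        have h1 := Finset.card_sdiff_of_subset hBA
        have h2 := Finset.card_le_card hBA
        omega
      rw [mem_coe, mem_filter]
      refine ⟨mem_univ _, ?_, ?_⟩
      · intro u hu v hv huv
        rw [coe_image, Set.mem_image] at hu hv
        obtain ⟨x, hx, rfl⟩ := hu
        obtain ⟨y, hy, rfl⟩ := hv
        have hxS : σ.symm x ∈ S := by
          have := hBA (mem_coe.mp hx)
          rw [mem_image] at this
          obtain ⟨u', hu', rfl⟩ := this
          rwa [Equiv.symm_apply_apply]
        have hyS : σ.symm y ∈ S := by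
          have := hBA (mem_coe.mp hy)
          rw [mem_image] at this
          obtain ⟨u', hu', rfl⟩ := this
          rwa [Equiv.symm_apply_apply]
        exact hS.2.1 (mem_coe.mpr hxS) (mem_coe.mpr hyS) huv
      · rw [Finset.card_image_of_injective _ σ.symm.injective, hBcard]
    · intro B1 h1 B2 h2 heq
      exact Finset.image_injective σ.symm.injective heq
  -- combine
  calc K^s ≤ ((t+1) * k.choose t)^s := Nat.pow_le_pow_left hKck s
    _ = (t+1)^s * (k.choose t)^s := mul_pow _ _ _
    _ ≤ (t+1)^s * (k.choose s)^t := Nat.mul_le_mul_left _ (aux_choose_pow k s hs t hst)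
    _ ≤ (t+1)^s * (kc G s)^t :=
        Nat.mul_le_mul_left _ (Nat.pow_le_pow_left (le_trans hkk hshadow) t)

section PairSet
variable {V : Type*} [DecidableEq V]

/-- the set of unordered non-diagonal pairs from S -/
noncomputable def pairSet (S : Finset V) : Finset (Sym2 V) :=
  S.sym2.filter (fun z => ¬ z.IsDiag)

lemma card_pairSet (S : Finset V) : (pairSet S).card = S.card.choose 2 := by
  have h1 : (S.sym2.filter (fun z => z.IsDiag)).card + (pairSet S).card = S.sym2.card :=
    Finset.card_filter_add_card_filter_not _
  have h2 : S.sym2.filter (fun z => z.IsDiag) = S.image Sym2.diag := by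
    ext z
    rw [mem_filter, mem_image]
    constructor
    · rintro ⟨hz, hdiag⟩
      induction z with
      | _ u v =>
        rw [Sym2.mk_isDiag_iff] at hdiag
        subst hdiag
        exact ⟨u, (Finset.mk_mem_sym2_iff.mp hz).1, rfl⟩
    · rintro ⟨u, hu, rfl⟩
      exact ⟨Finset.diag_mem_sym2_iff.mpr hu, Sym2.diag_isDiag u⟩
  rw [h2, Finset.card_image_of_injective _ Sym2.diag_injective] at h1
  rw [Finset.card_sym2] at h1
  have h3 : (S.card + 1).choose 2 = S.card.choose 2 + S.card := by
    rw [Nat.choose_succ_succ, Nat.choose_one_right, Nat.add_comm]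
  omega

lemma mem_pairSet {S : Finset V} {u v : V} (hu : u ∈ S) (hv : v ∈ S) (huv : u ≠ v) :
    s(u, v) ∈ pairSet S := by
  rw [pairSet, mem_filter, Finset.mk_mem_sym2_iff, Sym2.mk_isDiag_iff]
  exact ⟨⟨hu, hv⟩, huv⟩

lemma pairSet_forall {S : Finset V} {z : Sym2 V} (hz : z ∈ pairSet S)
    {P : Sym2 V → Prop} (h : ∀ u ∈ S, ∀ v ∈ S, u ≠ v → P s(u, v)) : P z := by
  rw [pairSet, mem_filter] at hz
  induction z with
  | _ u v =>
    obtain ⟨hmem, hdiag⟩ := hz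
    rw [Finset.mk_mem_sym2_iff] at hmem
    rw [Sym2.mk_isDiag_iff] at hdiag
    exact h u hmem.1 v hmem.2 hdiag

end PairSet

/-- Ramsey graphs give hypergraphs without property B -/
lemma pBN_le_kc {V : Type} [Fintype V] (G : SimpleGraph V) (t : ℕ)
    (hR : IsRamsey t G) : propertyBNumber (t.choose 2) ≤ kc G t := by
  classical
  set ι : Sym2 V → ℕ := fun z => ((Fintype.equivFin (Sym2 V)) z : ℕ) with hι
  have hιinj : Function.Injective ι := by
    intro a b hab
    exact (Fintype.equivFin (Sym2 V)).injective (Fin.val_injective hab)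
  set eS : Finset V → Finset ℕ := fun S => (pairSet S).image ι with heS
  set E : Finset (Finset ℕ) := (univ.filter (G.IsNClique t ·)).image eS with hE
  have huni : ∀ e ∈ E, e.card = t.choose 2 := by
    intro e he
    rw [hE, mem_image] at he
    obtain ⟨S, hS, rfl⟩ := he
    rw [mem_filter] at hS
    rw [heS]
    show ((pairSet S).image ι).card = t.choose 2
    rw [Finset.card_image_of_injective _ hιinj, card_pairSet, hS.2.2]
  have hcol : ∀ c : ℕ → Bool, ∃ e ∈ E, ∀ x ∈ e, ∀ y ∈ e, c x = c y := by
    intro c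
    obtain ⟨S, col, hcard, hprop⟩ := hR (fun z => c (ι z))
    have hclique : G.IsNClique t S := by
      constructor
      · intro u hu v hv huv
        exact (hprop u (mem_coe.mp hu) v (mem_coe.mp hv) huv).1
      · exact hcard
    refine ⟨eS S, by rw [hE]; exact mem_image_of_mem _ (mem_filter.mpr ⟨mem_univ _, hclique⟩), ?_⟩
    have hval : ∀ x ∈ eS S, c x = col := by
      intro x hx
      rw [heS] at hx
      obtain ⟨z, hz, rfl⟩ := mem_image.mp hx
      exact pairSet_forall hz (P := fun z => c (ι z) = col)
        (fun u hu v hv huv => (hprop u hu v hv huv).2)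
    intro x hx y hy
    rw [hval x hx, hval y hy]
  have hcardle : E.card ≤ kc G t := by
    calc E.card ≤ (univ.filter (G.IsNClique t ·)).card := card_image_le
      _ = kc G t := by rw [kc, Nat.card_eq_fintype_card, Fintype.card_subtype]
  exact le_trans (Nat.sInf_le ⟨E, huni, hcol, rfl⟩) hcardle

/-- counting lower bound for hypergraphs without property B -/
lemma pB_lower (b : ℕ) (hb : 1 ≤ b) (E : Finset (Finset ℕ))
    (huni : ∀ e ∈ E, e.card = b)
    (hcol : ∀ c : ℕ → Bool, ∃ e ∈ E, ∀ x ∈ e, ∀ y ∈ e, c x = c y) :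
    2^(b-1) ≤ E.card := by
  classical
  have hEne : E.Nonempty := by
    obtain ⟨e, he, -⟩ := hcol (fun _ => true)
    exact ⟨e, he⟩
  set X : Finset ℕ := E.sup id with hX
  have hsub : ∀ e ∈ E, e ⊆ X := fun e he => Finset.le_sup (f := id) he
  set n := X.card with hn
  have hbn : b ≤ n := by
    obtain ⟨e, he⟩ := hEne
    rw [← huni e he]
    exact card_le_card (hsub e he)
  -- each subset S of X yields a monochromatic edge
  have hcover : X.powerset ⊆ E.biUnion
      (fun e => X.powerset.filter (fun S => e ⊆ S ∨ Disjoint e S)) := by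
    intro S hS
    obtain ⟨e, he, hmono⟩ := hcol (fun x => decide (x ∈ S))
    rw [mem_biUnion]
    refine ⟨e, he, mem_filter.mpr ⟨hS, ?_⟩⟩
    have hene : e.Nonempty := by
      rw [← Finset.card_pos, huni e he]; omega
    obtain ⟨x₀, hx₀⟩ := hene
    by_cases hx₀S : x₀ ∈ S
    · left
      intro y hy
      have := hmono y hy x₀ hx₀
      simpa [hx₀S] using this
    · right
      rw [Finset.disjoint_left]
      intro y hy hyS
      have := hmono y hy x₀ hx₀
      simp [hx₀S, hyS] at this
  have hfib : ∀ e ∈ E, (X.powerset.filter (fun S => e ⊆ S ∨ Disjoint e S)).card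
      ≤ 2^(n-b) + 2^(n-b) := by
    intro e he
    have h1 : X.powerset.filter (fun S => e ⊆ S ∨ Disjoint e S)
        ⊆ (X.powerset.filter (fun S => e ⊆ S)) ∪ (X.powerset.filter (fun S => Disjoint e S)) := by
      intro S hS
      rw [mem_filter] at hS
      rw [mem_union, mem_filter, mem_filter]
      tauto
    apply le_trans (card_le_card h1)
    apply le_trans (card_union_le _ _)
    have hsup : (X.powerset.filter (fun S => e ⊆ S)).card = 2^(n-b) := by
      have hbij : (X.powerset.filter (fun S => e ⊆ S)).card = (X \ e).powerset.card := by
        apply Finset.card_bij' (i := fun S _ => S \ e) (j := fun T _ => T ∪ e)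
        · intro S hS
          rw [mem_filter, mem_powerset] at hS
          rw [mem_powerset]
          exact Finset.sdiff_subset_sdiff hS.1 le_rfl
        · intro T hT
          rw [mem_powerset] at hT
          rw [mem_filter, mem_powerset]
          refine ⟨Finset.union_subset (le_trans hT (Finset.sdiff_subset)) (hsub e he),
            Finset.subset_union_right⟩
        · intro S hS
          rw [mem_filter] at hS
          exact Finset.sdiff_union_of_subset hS.2
        · intro T hT
          rw [mem_powerset] at hT
          apply Finset.union_sdiff_cancel_right
          exact Finset.disjoint_left.mpr (fun a ha => (Finset.mem_sdiff.mp (hT ha)).2)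
      rw [hbij, Finset.card_powerset, Finset.card_sdiff_of_subset (hsub e he), huni e he]
    have hdis : (X.powerset.filter (fun S => Disjoint e S)).card = 2^(n-b) := by
      have : X.powerset.filter (fun S => Disjoint e S) = (X \ e).powerset := by
        ext S
        rw [mem_filter, mem_powerset, mem_powerset, Finset.subset_sdiff]
        tauto
      rw [this, Finset.card_powerset, Finset.card_sdiff_of_subset (hsub e he), huni e he]
    omega
  have hcount : 2^n ≤ E.card * 2^(n-b+1) := by
    calc 2^n = X.powerset.card := (Finset.card_powerset X).symm
      _ ≤ (E.biUnion (fun e => X.powerset.filter (fun S => e ⊆ S ∨ Disjoint e S))).card :=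
          card_le_card hcover
      _ ≤ ∑ e ∈ E, (X.powerset.filter (fun S => e ⊆ S ∨ Disjoint e S)).card :=
          Finset.card_biUnion_le
      _ ≤ ∑ e ∈ E, (2^(n-b) + 2^(n-b)) := Finset.sum_le_sum hfib
      _ = E.card * 2^(n-b+1) := by
          rw [Finset.sum_const, smul_eq_mul, pow_succ]
          ring
  by_contra hlt
  push_neg at hlt
  have h2 : E.card * 2^(n-b+1) < 2^(b-1) * 2^(n-b+1) :=
    Nat.mul_lt_mul_of_lt_of_le hlt le_rfl (by positivity)
  rw [← pow_add] at h2
  have : b - 1 + (n - b + 1) = n := by omega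
  rw [this] at h2
  omega

/-- nonemptiness: complete b-uniform hypergraph on 2b-1 vertices has no property B -/
lemma pBN_set_nonempty (b : ℕ) (hb : 1 ≤ b) :
    {N : ℕ | ∃ E : Finset (Finset ℕ), (∀ e ∈ E, e.card = b) ∧
      (∀ c : ℕ → Bool, ∃ e ∈ E, ∀ x ∈ e, ∀ y ∈ e, c x = c y) ∧ E.card = N}.Nonempty := by
  classical
  set E : Finset (Finset ℕ) := (range (2*b-1)).powersetCard b with hE
  refine ⟨E.card, E, ?_, ?_, rfl⟩
  · intro e he
    rw [hE, Finset.mem_powersetCard] at he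
    exact he.2
  · intro c
    have hcard : (range (2*b-1)).card = 2*b-1 := Finset.card_range _
    have : b ≤ ((range (2*b-1)).filter (fun x => c x = true)).card
        ∨ b ≤ ((range (2*b-1)).filter (fun x => ¬ (c x = true))).card := by
      by_contra hcon
      push_neg at hcon
      have := Finset.card_filter_add_card_filter_not
        (s := range (2*b-1)) (p := fun x => c x = true)
      simp only [ne_eq] at this hcon
      omega
    rcases this with h | h
    · obtain ⟨e, hsub, hecard⟩ := Finset.exists_subset_card_eq h
      refine ⟨e, ?_, ?_⟩
      · rw [hE, Finset.mem_powersetCard]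
        exact ⟨le_trans hsub (Finset.filter_subset _ _), hecard⟩
      · intro x hx y hy
        have hx' := (Finset.mem_filter.mp (hsub hx)).2
        have hy' := (Finset.mem_filter.mp (hsub hy)).2
        rw [hx', hy']
    · obtain ⟨e, hsub, hecard⟩ := Finset.exists_subset_card_eq h
      refine ⟨e, ?_, ?_⟩
      · rw [hE, Finset.mem_powersetCard]
        exact ⟨le_trans hsub (Finset.filter_subset _ _), hecard⟩
      · intro x hx y hy
        have hx' := (Finset.mem_filter.mp (hsub hx)).2
        have hy' := (Finset.mem_filter.mp (hsub hy)).2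
        simp only [Bool.not_eq_true] at hx' hy'
        rw [hx', hy']

lemma pBN_lower (b : ℕ) (hb : 1 ≤ b) : 2^(b-1) ≤ propertyBNumber b := by
  have hmem := Nat.sInf_mem (pBN_set_nonempty b hb)
  obtain ⟨E, huni, hcol, hcard⟩ := hmem
  rw [propertyBNumber, ← hcard] at *
  exact pB_lower b hb E huni hcol

end Auxiliary

lemma kc_pow_le {V : Type*} [Fintype V] (G : SimpleGraph V) (s t : ℕ) (hs : 1 ≤ s)
    (hst : s ≤ t) : (kc G t)^s ≤ (kc G s)^t := by
  have key : ∀ p, 1 ≤ p →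
      ((ordc G t)^s)^p ≤ ((t+1) * t.factorial)^s * ((ordc G s)^t)^p := by
    intro p hp
    have h1 := ikk (powG G p) s t hs hst
    calc ((ordc G t)^s)^p = ((ordc G t)^p)^s := by rw [← pow_mul, ← pow_mul, Nat.mul_comm]
      _ = (ordc (powG G p) t)^s := by rw [ordc_powG G p t hp]
      _ = (t.factorial * kc (powG G p) t)^s := by rw [ordc_eq_factorial_mul_kc]
      _ = (t.factorial)^s * (kc (powG G p) t)^s := mul_pow _ _ _
      _ ≤ (t.factorial)^s * ((t+1)^s * (kc (powG G p) s)^t) := Nat.mul_le_mul_left _ h1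
      _ = ((t+1) * t.factorial)^s * (kc (powG G p) s)^t := by rw [mul_pow]; ring
      _ ≤ ((t+1) * t.factorial)^s * (s.factorial * kc (powG G p) s)^t := by
          apply Nat.mul_le_mul_left
          apply Nat.pow_le_pow_left
          exact Nat.le_mul_of_pos_left _ (Nat.factorial_pos s)
      _ = ((t+1) * t.factorial)^s * ((ordc (powG G p) s))^t := by
          rw [ordc_eq_factorial_mul_kc]
      _ = ((t+1) * t.factorial)^s * ((ordc G s)^p)^t := by rw [ordc_powG G p s hp]
      _ = ((t+1) * t.factorial)^s * ((ordc G s)^t)^p := by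
          rw [← pow_mul, ← pow_mul]; ring
  have h3 : (ordc G t)^s ≤ (ordc G s)^t := aux_power_trick _ _ _ key
  rw [ordc_eq_factorial_mul_kc, ordc_eq_factorial_mul_kc, mul_pow, mul_pow] at h3
  have h4 : (s.factorial)^t * (kc G s)^t ≤ (t.factorial)^s * (kc G s)^t :=
    Nat.mul_le_mul_right _ (aux_factorial_pow s t hst)
  exact Nat.le_of_mul_le_mul_left (le_trans h3 h4) (by positivity)

lemma two_mul_choose_two (t : ℕ) : 2 * t.choose 2 = t * (t - 1) := by
  induction t with
  | zero => rfl
  | succ t ih =>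
    rw [Nat.choose_succ_succ, Nat.choose_one_right, Nat.mul_add, ih]
    rcases Nat.eq_zero_or_pos t with rfl | ht
    · rfl
    · have h1 : t - 1 + 2 = t + 1 := by omega
      calc 2 * t + t * (t-1) = t * (t - 1 + 2) := by ring
        _ = (t+1) * t := by rw [h1]; ring
        _ = (t+1) * (t + 1 - 1) := by simp

/-- For `2 ≤ s ≤ t` and `b = binomial(t,2)`: every `K_t`-Ramsey graph contains at least
`m(b)^(s/t)` copies of `K_s` (so `r_{K_s}(K_t) ≥ m(b)^(s/t)`), and moreover
`m(b)^(s/t) ≥ 2^(s(t-1)/2 - 1)`. -/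
theorem ramsey_small_clique_count_lower (s t : ℕ) (hs : 2 ≤ s) (hst : s ≤ t) :
    (∀ (V : Type) [Fintype V] (G : SimpleGraph V), IsRamsey t G →
      ((propertyBNumber (t.choose 2) : ℝ) ^ ((s : ℝ) / (t : ℝ)) : ℝ) ≤
        (Nat.card {S : Finset V // G.IsNClique s S} : ℝ)) ∧
    (2 : ℝ) ^ ((s : ℝ) * ((t : ℝ) - 1) / 2 - 1) ≤
      (propertyBNumber (t.choose 2) : ℝ) ^ ((s : ℝ) / (t : ℝ)) := by
  have ht2 : 2 ≤ t := le_trans hs hst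
  have ht0 : (0:ℝ) < (t:ℝ) := by exact_mod_cast (show 0 < t by omega)
  have hb1 : 1 ≤ t.choose 2 := Nat.choose_pos ht2
  set m := propertyBNumber (t.choose 2) with hm
  constructor
  · intro V _ G hR
    have h1 : m ≤ kc G t := pBN_le_kc G t hR
    have h2 : (kc G t)^s ≤ (kc G s)^t := kc_pow_le G s t (by omega) hst
    have h3 : m^s ≤ (kc G s)^t := le_trans (Nat.pow_le_pow_left h1 s) h2
    show (m:ℝ) ^ ((s:ℝ)/(t:ℝ)) ≤ (kc G s : ℝ)
    have h4 : ((m:ℝ))^(s:ℕ) ≤ ((kc G s : ℝ))^(t:ℕ) := by exact_mod_cast h3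
    calc (m:ℝ) ^ ((s:ℝ)/(t:ℝ)) = ((m:ℝ) ^ (s:ℝ)) ^ ((1:ℝ)/(t:ℝ)) := by
          rw [← Real.rpow_mul (by positivity)]
          congr 1
          field_simp
      _ ≤ ((kc G s : ℝ) ^ (t:ℝ)) ^ ((1:ℝ)/(t:ℝ)) := by
          apply Real.rpow_le_rpow (by positivity) _ (by positivity)
          rw [Real.rpow_natCast, Real.rpow_natCast]
          exact h4
      _ = (kc G s : ℝ) := by
          rw [← Real.rpow_mul (by positivity), mul_one_div, div_self (ne_of_gt ht0),
            Real.rpow_one]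
  · have h2m : 2^(t.choose 2 - 1) ≤ m := pBN_lower _ hb1
    have hs' : (s:ℝ) ≤ (t:ℝ) := by exact_mod_cast hst
    have hs2 : (2:ℝ) ≤ (s:ℝ) := by exact_mod_cast hs
    have hbcast : (2:ℝ) * ((t.choose 2 : ℕ) : ℝ) = (t:ℝ) * ((t:ℝ) - 1) := by
      have hc : ((2 * t.choose 2 : ℕ) : ℝ) = ((t * (t-1) : ℕ) : ℝ) := by
        exact_mod_cast congrArg (Nat.cast : ℕ → ℝ) (two_mul_choose_two t)
      push_cast [Nat.cast_sub (show 1 ≤ t by omega)] at hc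
      linarith
    have hb' : ((t.choose 2 : ℕ) : ℝ) = (t:ℝ) * ((t:ℝ)-1) / 2 := by linarith
    have hexp : (s:ℝ) * ((t:ℝ) - 1) / 2 - 1 ≤ (((t.choose 2 : ℕ):ℝ) - 1) * ((s:ℝ)/(t:ℝ)) := by
      have key : ((t:ℝ)*((t:ℝ)-1)/2 - 1) * ((s:ℝ)/(t:ℝ))
          = (s:ℝ)*((t:ℝ)-1)/2 - (s:ℝ)/(t:ℝ) := by
        field_simp
      rw [hb', key]
      have hle1 : (s:ℝ)/(t:ℝ) ≤ 1 := by rw [div_le_one ht0]; exact hs'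
      linarith
    have hcast2 : ((2^(t.choose 2 - 1) : ℕ) : ℝ) = (2:ℝ) ^ ((((t.choose 2 : ℕ) : ℝ)) - 1) := by
      push_cast
      rw [← Real.rpow_natCast 2 (t.choose 2 - 1)]
      congr 1
      push_cast [Nat.cast_sub hb1]
      ring
    calc (2:ℝ) ^ ((s:ℝ)*((t:ℝ)-1)/2 - 1)
        ≤ (2:ℝ) ^ (((((t.choose 2:ℕ)):ℝ) - 1) * ((s:ℝ)/(t:ℝ))) :=
          Real.rpow_le_rpow_of_exponent_le one_le_two hexp
      _ = ((2:ℝ) ^ ((((t.choose 2:ℕ)):ℝ) - 1)) ^ ((s:ℝ)/(t:ℝ)) :=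
          Real.rpow_mul (by norm_num) _ _
      _ ≤ (m:ℝ) ^ ((s:ℝ)/(t:ℝ)) := by
          apply Real.rpow_le_rpow (by positivity) _ (by positivity)
          rw [← hcast2]
          exact_mod_cast h2m
end
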